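/- arXiv:1806.03123 — 12 statements merged into one kernel-verified Lean document; each statement's English description precedes it below -/
import Mathlib

section
/- For every element x of the field F_p((X)) of Laurent series over F_p, x can be written as x = a + b + c, where a lies in the sum of the subgroups M^p·X^i for i = 1, ..., p-1 (M = F_p((X)), M^p the set of p-th powers), b lies in the image of the Artin-Schreier map z ↦ z^p − z, and c lies in the valuation ring F_p[[X]]. -/
section AS

variable (p : ℕ) [hp : Fact p.Prime]

private def Good (x : LaurentSeries (ZMod p)) : Prop :=
  ∃ a b c : LaurentSeries (ZMod p),
      x = a + b + c ∧
      (∃ f : ℕ → LaurentSeries (ZMod p),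
        a = ∑ i ∈ Finset.Icc 1 (p - 1),
          (f i) ^ p * (HahnSeries.single (1 : ℤ) (1 : ZMod p)) ^ i) ∧
      (∃ z : LaurentSeries (ZMod p), b = z ^ p - z) ∧
      (∃ g : PowerSeries (ZMod p), c = HahnSeries.ofPowerSeries ℤ (ZMod p) g)

private instance : CharP (LaurentSeries (ZMod p)) p :=
  charP_of_injective_ringHom
    (f := (HahnSeries.C : ZMod p →+* LaurentSeries (ZMod p))) HahnSeries.C_injective p

private theorem good_add {x y : LaurentSeries (ZMod p)} (hx : Good p x) (hy : Good p y) :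
    Good p (x + y) := by
  obtain ⟨a1, b1, c1, hxe, ⟨f1, hf1⟩, ⟨z1, hz1⟩, ⟨g1, hg1⟩⟩ := hx
  obtain ⟨a2, b2, c2, hye, ⟨f2, hf2⟩, ⟨z2, hz2⟩, ⟨g2, hg2⟩⟩ := hy
  refine ⟨a1 + a2, b1 + b2, c1 + c2, by rw [hxe, hye]; ring, ⟨f1 + f2, ?_⟩,
    ⟨z1 + z2, ?_⟩, ⟨g1 + g2, ?_⟩⟩
  · rw [hf1, hf2, ← Finset.sum_add_distrib]
    refine Finset.sum_congr rfl fun i _ => ?_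
    rw [← add_mul, Pi.add_apply, add_pow_char]
  · rw [hz1, hz2, add_pow_char]; ring
  · rw [hg1, hg2, map_add]

private theorem good_powerSeries (g : PowerSeries (ZMod p)) :
    Good p (HahnSeries.ofPowerSeries ℤ (ZMod p) g) :=
  ⟨0, 0, HahnSeries.ofPowerSeries ℤ (ZMod p) g, by ring,
    ⟨0, by simp [zero_pow hp.out.ne_zero]⟩, ⟨0, by simp [zero_pow hp.out.ne_zero]⟩, ⟨g, rfl⟩⟩

private theorem good_single_aux : ∀ m : ℕ, ∀ n : ℤ, (-n).toNat = m → ∀ c : ZMod p,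
    Good p (HahnSeries.single n c) := by
  have hp2 : 2 ≤ p := hp.out.two_le
  intro m
  induction m using Nat.strong_induction_on with
  | _ m ih =>
  intro n hn c
  by_cases h0 : 0 ≤ n
  · -- single n c is a power series
    have : (HahnSeries.single n c : LaurentSeries (ZMod p)) =
        HahnSeries.ofPowerSeries ℤ (ZMod p) (PowerSeries.C c * PowerSeries.X ^ n.toNat) := by
      rw [map_mul, HahnSeries.ofPowerSeries_X_pow, HahnSeries.ofPowerSeries_C,
        Int.toNat_of_nonneg h0, HahnSeries.C_apply, HahnSeries.single_mul_single,
        zero_add, mul_one]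
    rw [this]; exact good_powerSeries p _
  · push_neg at h0
    set q : ℤ := n / p with hq
    set r : ℤ := n % p with hr
    have hppos : (0:ℤ) < (p:ℤ) := by exact_mod_cast hp.out.pos
    have hrange : 0 ≤ r ∧ r < p := ⟨Int.emod_nonneg n hppos.ne', Int.emod_lt_of_pos n hppos⟩
    have hnqr : (p:ℤ) * q + r = n := Int.mul_ediv_add_emod n p
    have hcp : c ^ p = c := ZMod.pow_card c
    have hsingle_pow : (HahnSeries.single q c : LaurentSeries (ZMod p)) ^ p
        = HahnSeries.single ((p:ℤ) * q) c := by
      rw [HahnSeries.single_pow, nsmul_eq_mul, hcp]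
    by_cases hr0 : r = 0
    · -- n = p * q, q < 0
      have hqn : (p:ℤ) * q = n := by omega
      have hq0 : q < 0 := by
        rcases lt_or_ge q 0 with h | h
        · exact h
        · nlinarith [mul_nonneg hppos.le h]
      have h2q : 2 * (-q) ≤ -n := by
        nlinarith [mul_le_mul_of_nonneg_right (show (2:ℤ) ≤ (p:ℤ) by exact_mod_cast hp2)
          (by omega : (0:ℤ) ≤ -q)]
      have hql : (-q).toNat < (-n).toNat := by omega
      have h1 : Good p (HahnSeries.single q c) := ih _ (hn ▸ hql) q rfl c
      have h2 : Good p ((HahnSeries.single q c : LaurentSeries (ZMod p)) ^ p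
          - HahnSeries.single q c) :=
        ⟨0, (HahnSeries.single q c : LaurentSeries (ZMod p)) ^ p - HahnSeries.single q c, 0,
          by ring, ⟨0, by simp [zero_pow hp.out.ne_zero]⟩, ⟨HahnSeries.single q c, rfl⟩,
          ⟨0, by simp⟩⟩
      have := good_add p h2 h1
      rwa [sub_add_cancel, hsingle_pow, hqn] at this
    · -- 1 ≤ r ≤ p - 1 : pure C(M) term
      have hr1 : 1 ≤ r.toNat ∧ r.toNat ≤ p - 1 := by omega
      have hsum : (∑ i ∈ Finset.Icc 1 (p - 1),
          ((fun i => if i = r.toNat then (HahnSeries.single q c : LaurentSeries (ZMod p)) else 0) i) ^ p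
            * (HahnSeries.single (1 : ℤ) (1 : ZMod p)) ^ i) = HahnSeries.single n c := by
        rw [Finset.sum_eq_single r.toNat]
        · simp only [↓reduceIte]
          rw [hsingle_pow, HahnSeries.single_pow, one_pow,
            HahnSeries.single_mul_single, nsmul_eq_mul, mul_one, mul_one]
          rw [show ((p:ℤ) * q + (r.toNat : ℤ)) = n by
            rw [Int.toNat_of_nonneg hrange.1]; exact hnqr]
        · intro i _ hi
          simp only [if_neg hi]
          rw [zero_pow hp.out.ne_zero, zero_mul]
        · intro hmem
          exact absurd (Finset.mem_Icc.mpr ⟨hr1.1, hr1.2⟩) hmem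
      exact ⟨_, 0, 0, by rw [hsum]; ring,
        ⟨fun i => if i = r.toNat then HahnSeries.single q c else 0, rfl⟩,
        ⟨0, by simp [zero_pow hp.out.ne_zero]⟩, ⟨0, by simp⟩⟩


private theorem good_single (n : ℤ) (c : ZMod p) : Good p (HahnSeries.single n c) :=
  good_single_aux p _ n rfl c

private theorem good_all_aux : ∀ m : ℕ, ∀ x : LaurentSeries (ZMod p), (-x.order).toNat = m →
    Good p x := by
  intro m
  induction m using Nat.strong_induction_on with
  | _ m ih =>
  intro x hm
  by_cases hx0 : x = 0
  · subst hx0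
    have := good_powerSeries p 0
    rwa [map_zero] at this
  by_cases h0 : 0 ≤ x.order
  · have : x = HahnSeries.ofPowerSeries ℤ (ZMod p)
        (PowerSeries.X ^ x.order.toNat * x.powerSeriesPart) := by
      rw [map_mul, HahnSeries.ofPowerSeries_X_pow, Int.toNat_of_nonneg h0,
        LaurentSeries.single_order_mul_powerSeriesPart]
    rw [this]; exact good_powerSeries p _
  · push_neg at h0
    set y := x - HahnSeries.single x.order (x.coeff x.order) with hy
    have hyc : ∀ i ≤ x.order, y.coeff i = 0 := by
      intro i hi
      rcases lt_or_eq_of_le hi with hlt | rfl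
      · simp [hy, HahnSeries.coeff_eq_zero_of_lt_order hlt,
          HahnSeries.coeff_single_of_ne (ne_of_lt hlt)]
      · simp [hy]
    have hgy : Good p y := by
      by_cases hy0 : y = 0
      · rw [hy0]; simpa using good_powerSeries p 0
      · have hyo : x.order < y.order := by
          by_contra hle
          push_neg at hle
          exact hy0 (HahnSeries.coeff_order_eq_zero.mp (hyc _ hle))
        exact ih (-y.order).toNat (by omega) y rfl
    have := good_add p hgy (good_single p x.order (x.coeff x.order))
    rwa [hy, sub_add_cancel] at this

private theorem good_all (x : LaurentSeries (ZMod p)) : Good p x :=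
  good_all_aux p _ x rfl

end AS

/-- every Laurent series over `F_p` is a sum `a + b + c` where `a` lies in
`Σ_{i=1}^{p-1} M^p · X^i`, `b` lies in the image of the Artin-Schreier map `z ↦ z^p - z`,
and `c` lies in the valuation ring `F_p[[X]]`. -/
theorem stmt_0 (p : ℕ) (hp : p.Prime) (x : LaurentSeries (ZMod p)) :
    ∃ a b c : LaurentSeries (ZMod p),
      x = a + b + c ∧
      (∃ f : ℕ → LaurentSeries (ZMod p),
        a = ∑ i ∈ Finset.Icc 1 (p - 1),
          (f i) ^ p * (HahnSeries.single (1 : ℤ) (1 : ZMod p)) ^ i) ∧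
      (∃ z : LaurentSeries (ZMod p), b = z ^ p - z) ∧
      (∃ g : PowerSeries (ZMod p), c = HahnSeries.ofPowerSeries ℤ (ZMod p) g) := by
  haveI : Fact p.Prime := ⟨hp⟩
  exact good_all p x
end

section
/- In F_p((X)), the intersection of the image of the Artin-Schreier map ℘(z) = z^p − z with the valuation ring F_p[[X]] equals the maximal ideal X·F_p[[X]]. -/
open HahnSeries PowerSeries

section Aux

variable {R : Type*}

/-- coefficient extraction as an `AddMonoidHom`. -/
def HahnSeries.coeffHom [AddCommMonoid R] (m : ℤ) : HahnSeries ℤ R →+ R where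
  toFun x := x.coeff m
  map_zero' := rfl
  map_add' _ _ := HahnSeries.coeff_add

lemma coeff_finsetSum [AddCommMonoid R] {α : Type*} (t : Finset α) (u : α → HahnSeries ℤ R)
    (m : ℤ) : (∑ k ∈ t, u k).coeff m = ∑ k ∈ t, (u k).coeff m :=
  map_sum (HahnSeries.coeffHom m) u t

lemma le_orderTop_of_forall [Zero R] (x : HahnSeries ℤ R) (c : ℤ)
    (h : ∀ i < c, x.coeff i = 0) : (c : WithTop ℤ) ≤ x.orderTop := by
  by_cases hx : x = 0
  · simp [hx]
  · rw [← HahnSeries.order_eq_orderTop_of_ne_zero hx, WithTop.coe_le_coe]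
    by_contra hc
    push_neg at hc
    exact (mt HahnSeries.coeff_order_eq_zero.mp hx) (h _ hc)

lemma coeff_eq_zero_of_le_orderTop [Zero R] {x : HahnSeries ℤ R} {c i : ℤ}
    (h : (c : WithTop ℤ) ≤ x.orderTop) (hi : i < c) : x.coeff i = 0 :=
  HahnSeries.coeff_eq_zero_of_lt_orderTop (lt_of_lt_of_le (by exact_mod_cast hi) h)

lemma ofPowerSeries_coeff_neg [Semiring R] (g : PowerSeries R) {i : ℤ} (hi : i < 0) :
    (HahnSeries.ofPowerSeries ℤ R g).coeff i = 0 := by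
  rw [HahnSeries.ofPowerSeries_apply]
  refine HahnSeries.embDomain_notin_range ?_
  rintro ⟨n, hn⟩
  rw [← hn] at hi
  simp at hi
  omega

lemma orderTop_pow_ge_of_one_le [CommRing R] [Nontrivial R] {x : HahnSeries ℤ R}
    (h : (1 : WithTop ℤ) ≤ x.orderTop) : ∀ m : ℕ, ((m : ℤ) : WithTop ℤ) ≤ (x ^ m).orderTop := by
  intro m
  induction m with
  | zero => simp [HahnSeries.orderTop_one]
  | succ m ih =>
      calc (((m + 1 : ℕ) : ℤ) : WithTop ℤ) = ((m : ℤ) : WithTop ℤ) + 1 := by push_cast; ring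
      _ ≤ (x ^ m).orderTop + x.orderTop := add_le_add ih h
      _ ≤ (x ^ m * x).orderTop := HahnSeries.orderTop_add_le_mul
      _ = (x ^ (m + 1)).orderTop := by rw [← pow_succ]

lemma orderTop_pow_ge_of_le [CommRing R] [Nontrivial R] {x : HahnSeries ℤ R} {c : ℤ}
    (hc : 0 ≤ c) (h : (c : WithTop ℤ) ≤ x.orderTop) :
    ∀ m : ℕ, (c : WithTop ℤ) ≤ (x ^ (m + 1)).orderTop := by
  intro m
  induction m with
  | zero => simpa using h
  | succ m ih =>
      have : (c : WithTop ℤ) ≤ (c : WithTop ℤ) + (c : WithTop ℤ) :=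
        le_add_of_nonneg_right (by exact_mod_cast hc)
      calc (c : WithTop ℤ) ≤ (c : WithTop ℤ) + (c : WithTop ℤ) := this
      _ ≤ (x ^ (m + 1)).orderTop + x.orderTop := add_le_add ih h
      _ ≤ (x ^ (m + 1) * x).orderTop := HahnSeries.orderTop_add_le_mul
      _ = (x ^ (m + 2)).orderTop := by rw [← pow_succ]

/-- The summable family `k ↦ f ^ (p ^ k)` for `f` of positive order. -/
noncomputable def psFamily [CommRing R] [IsDomain R] (p : ℕ) (hp : 2 ≤ p) (f : HahnSeries ℤ R)
    (hf : 0 < f.orderTop) : HahnSeries.SummableFamily ℤ R ℕ where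
  toFun k := f ^ (p ^ k)
  isPWO_iUnion_support' := by
    refine (HahnSeries.SummableFamily.isPWO_iUnion_support_powers (HahnSeries.zero_le_orderTop_iff.mp (le_of_lt hf))).mono ?_
    exact Set.iUnion_subset fun k =>
      Set.subset_iUnion (fun m => (f ^ m).support) (p ^ k)
  finite_co_support' g := by
    have hfin := HahnSeries.SummableFamily.pow_finite_co_support hf g
    have hinj : Function.Injective (fun k : ℕ => p ^ k) := Nat.pow_right_injective hp
    have heq : {a : ℕ | ((fun k : ℕ => f ^ (p ^ k)) a).coeff g ≠ 0} =
        (fun k : ℕ => p ^ k) ⁻¹'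
          (Function.support fun m : ℕ =>
            (f ^ m).coeff g) := rfl
    show {a : ℕ | ((fun k : ℕ => f ^ (p ^ k)) a).coeff g ≠ 0}.Finite
    rw [heq]
    exact Set.Finite.preimage hinj.injOn hfin

lemma psFamily_apply [CommRing R] [IsDomain R] (p : ℕ) (hp : 2 ≤ p) (f : HahnSeries ℤ R)
    (hf : 0 < f.orderTop) (k : ℕ) : psFamily p hp f hf k = f ^ (p ^ k) := rfl

end Aux

/-- in `F_p((X))`, the intersection of the image of the Artin-Schreier map
`℘(z) = z^p - z` with the valuation ring `F_p[[X]]` equals the maximal ideal `X·F_p[[X]]`. -/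
theorem stmt_1 (p : ℕ) (hp : p.Prime) :
    {x : LaurentSeries (ZMod p) | (∃ z : LaurentSeries (ZMod p), x = z ^ p - z) ∧
        ∃ g : PowerSeries (ZMod p), x = HahnSeries.ofPowerSeries ℤ (ZMod p) g} =
      {x : LaurentSeries (ZMod p) |
        ∃ g : PowerSeries (ZMod p),
          x = HahnSeries.ofPowerSeries ℤ (ZMod p) (PowerSeries.X * g)} := by
  haveI : Fact p.Prime := ⟨hp⟩
  haveI hcharP : CharP (LaurentSeries (ZMod p)) p :=
    charP_of_injective_ringHom
      (algebraMap (ZMod p) (LaurentSeries (ZMod p))).injective p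
  haveI : ExpChar (LaurentSeries (ZMod p)) p := ExpChar.prime hp
  ext x
  simp only [Set.mem_setOf_eq]
  constructor
  · rintro ⟨⟨z, rfl⟩, g, hg⟩
    have hxneg : ∀ i : ℤ, i < 0 → (z ^ p - z).coeff i = 0 := by
      intro i hi
      rw [hg]
      exact ofPowerSeries_coeff_neg g hi
    by_cases hz0 : z = 0
    · refine ⟨0, ?_⟩
      rw [hz0, zero_pow hp.ne_zero, sub_zero, mul_zero, map_zero]
    -- z has no negative coefficients
    have hzneg : ∀ i : ℤ, i < 0 → z.coeff i = 0 := by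
      by_contra hcon
      push_neg at hcon
      obtain ⟨i, hi, hne⟩ := hcon
      set o := z.order with ho
      have hole : o ≤ i := HahnSeries.order_le_of_coeff_ne_zero hne
      have hon : o < 0 := lt_of_le_of_lt hole hi
      have hp2 : (2 : ℤ) ≤ (p : ℤ) := by exact_mod_cast hp.two_le
      have hpo : (p : ℤ) * o < o := by nlinarith
      have hzp : z ^ p ≠ 0 := pow_ne_zero _ hz0
      have hordpow : (z ^ p).order = (p : ℤ) * o := by
        rw [HahnSeries.order_pow, nsmul_eq_mul]
      have h1 : (z ^ p).coeff ((p : ℤ) * o) ≠ 0 := by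
        have := mt HahnSeries.coeff_order_eq_zero.mp hzp
        rwa [hordpow] at this
      have h2 : z.coeff ((p : ℤ) * o) = 0 := by
        refine HahnSeries.coeff_eq_zero_of_lt_orderTop ?_
        rw [← HahnSeries.order_eq_orderTop_of_ne_zero hz0]
        exact_mod_cast hpo
      have h3 := hxneg ((p : ℤ) * o) (lt_of_lt_of_le hpo (le_of_lt hon))
      rw [HahnSeries.coeff_sub, h2, sub_zero] at h3
      exact h1 h3
    have hzorder : 0 ≤ z.order := by
      by_contra hlt
      push_neg at hlt
      exact (mt HahnSeries.coeff_order_eq_zero.mp hz0) (hzneg z.order hlt)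
    -- z comes from a power series h
    set h : PowerSeries (ZMod p) := PowerSeries.X ^ z.order.natAbs * z.powerSeriesPart with hh
    have hzh : HahnSeries.ofPowerSeries ℤ (ZMod p) h = z := by
      rw [hh]
      exact LaurentSeries.X_order_mul_powerSeriesPart
        (by rw [Int.natAbs_of_nonneg hzorder])
    have hghp : HahnSeries.ofPowerSeries ℤ (ZMod p) g
        = HahnSeries.ofPowerSeries ℤ (ZMod p) (h ^ p - h) := by
      rw [map_sub, map_pow, hzh, ← hg]
    have hgeq : g = h ^ p - h := HahnSeries.ofPowerSeries_injective hghp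
    have hc : PowerSeries.constantCoeff g = 0 := by
      rw [hgeq, map_sub, map_pow, ZMod.pow_card, sub_self]
    obtain ⟨g', hg'⟩ := PowerSeries.X_dvd_iff.mpr hc
    exact ⟨g', by rw [hg, hg']⟩
  · rintro ⟨g, rfl⟩
    refine ⟨?_, PowerSeries.X * g, rfl⟩
    set f : LaurentSeries (ZMod p) := HahnSeries.ofPowerSeries ℤ (ZMod p) (PowerSeries.X * g)
      with hfdef
    have hf1 : (1 : WithTop ℤ) ≤ f.orderTop := by
      refine le_orderTop_of_forall f 1 ?_
      intro i hi
      rcases lt_or_eq_of_le (by omega : i ≤ 0) with hi0 | hi0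
      · exact ofPowerSeries_coeff_neg _ hi0
      · rw [hi0]
        have : f.coeff ((0 : ℕ) : ℤ) = PowerSeries.coeff 0 (PowerSeries.X * g) :=
          HahnSeries.ofPowerSeries_apply_coeff _ 0
        simpa using this
    have hx0 : 0 < f.orderTop := lt_of_lt_of_le (by norm_num) hf1
    set T := psFamily p hp.two_le f hx0 with hT
    set z : LaurentSeries (ZMod p) := -T.hsum with hzdef
    refine ⟨z, ?_⟩
    rw [eq_comm, ← sub_eq_zero]
    ext n
    rw [HahnSeries.coeff_zero]
    set K := n.toNat with hK
    have hnK : n < ((p ^ (K + 1) : ℕ) : ℤ) := by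
      have h1 : K < p ^ K := Nat.lt_pow_self (n := K) hp.one_lt
      have h2 : p ^ K ≤ p ^ (K + 1) := Nat.pow_le_pow_right hp.pos (by omega)
      have h3 : n ≤ (K : ℤ) := Int.self_le_toNat n
      have h4 : (K : ℤ) < ((p ^ K : ℕ) : ℤ) := by exact_mod_cast h1
      have h5 : ((p ^ K : ℕ) : ℤ) ≤ ((p ^ (K + 1) : ℕ) : ℤ) := by exact_mod_cast h2
      omega
    set c : ℤ := ((p ^ (K + 1) : ℕ) : ℤ) with hc
    have hc0 : 0 ≤ c := by positivity
    set S : LaurentSeries (ZMod p) := ∑ k ∈ Finset.range (K + 1), f ^ (p ^ k) with hS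
    -- the partial sum agrees with the full sum below c
    have hTS : ∀ m : ℤ, m < c → T.hsum.coeff m = S.coeff m := by
      intro m hm
      have hsub : {a : ℕ | (T a).coeff m ≠ 0} ⊆ (Finset.range (K + 1) : Finset ℕ) := by
        intro k hk
        simp only [Set.mem_setOf_eq] at hk
        have hlem : (f ^ (p ^ k)).orderTop ≤ (m : WithTop ℤ) :=
          HahnSeries.orderTop_le_of_coeff_ne_zero hk
        have hle : (((p ^ k : ℕ) : ℤ) : WithTop ℤ) ≤ (m : WithTop ℤ) :=
          le_trans (orderTop_pow_ge_of_one_le hf1 (p ^ k)) hlem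
        have hpk : ((p ^ k : ℕ) : ℤ) ≤ m := WithTop.coe_le_coe.mp hle
        have : p ^ k < p ^ (K + 1) := by
          have : ((p ^ k : ℕ) : ℤ) < ((p ^ (K + 1) : ℕ) : ℤ) := lt_of_le_of_lt hpk hm
          exact_mod_cast this
        have := (Nat.pow_lt_pow_iff_right hp.one_lt).mp this
        simpa [Finset.mem_range] using this
      rw [HahnSeries.SummableFamily.coeff_hsum_eq_sum_of_subset hsub, hS,
        coeff_finsetSum]
      exact Finset.sum_congr rfl fun k _ => rfl
    have hw : ∀ m : ℤ, m < c → (z + S).coeff m = 0 := by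
      intro m hm
      rw [HahnSeries.coeff_add, hzdef, HahnSeries.coeff_neg, hTS m hm, neg_add_cancel]
    have hwot : (c : WithTop ℤ) ≤ (z + S).orderTop := le_orderTop_of_forall _ c hw
    -- telescoping: S ^ p = ∑ f ^ (p ^ (k+1))
    have hSp : S ^ p = ∑ k ∈ Finset.range (K + 1), f ^ (p ^ (k + 1)) := by
      rw [hS, ← frobenius_def, map_sum]
      refine Finset.sum_congr rfl fun k _ => ?_
      rw [frobenius_def, ← pow_mul, ← pow_succ]
    have htel : S - S ^ p = f - f ^ (p ^ (K + 1)) := by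
      rw [hSp, hS, ← Finset.sum_sub_distrib, Finset.sum_range_sub' (fun k => f ^ (p ^ k)),
        pow_zero, pow_one]
    -- main identity
    have hmain : z ^ p - z - f = ((z + S) ^ p - (z + S)) - f ^ (p ^ (K + 1)) := by
      have hpow : (z + S) ^ p = z ^ p + S ^ p := add_pow_char _ _ _
      linear_combination htel - hpow
    rw [hmain]
    have h1 : ((z + S) ^ p).coeff n = 0 := by
      refine coeff_eq_zero_of_le_orderTop ?_ hnK
      have := orderTop_pow_ge_of_le hc0 hwot (p - 1)
      rwa [Nat.sub_add_cancel hp.one_le] at this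
    have h2 : (z + S).coeff n = 0 := hw n hnK
    have h3 : (f ^ (p ^ (K + 1))).coeff n = 0 := by
      refine coeff_eq_zero_of_le_orderTop ?_ hnK
      exact orderTop_pow_ge_of_one_le hf1 (p ^ (K + 1))
    rw [HahnSeries.coeff_sub, HahnSeries.coeff_sub, h1, h2, h3, sub_zero, sub_zero]
end

section
/- In F_p((X)), the intersection of ℘(M) with C(M) = Σ_{i=1}^{p-1} M^p·X^i is contained in the valuation ring F_p[[X]]. -/
open HahnSeries PowerSeries

/-- In `(ZMod p)⟦X⟧`, the `p`-th power of a power series has support in multiples of `p`. -/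
lemma ps_pow_coeff_zero (p : ℕ) (hp : p.Prime) (g : PowerSeries (ZMod p)) (n : ℕ)
    (hn : ¬ p ∣ n) : PowerSeries.coeff n (g ^ p) = 0 := by
  haveI : Fact p.Prime := ⟨hp⟩
  have h1 : PowerSeries.coeff n (g ^ p)
      = Polynomial.coeff ((PowerSeries.trunc (n+1) g) ^ p : Polynomial (ZMod p)) n := by
    have := PowerSeries.trunc_trunc_pow g (n+1) p
    have h2 : Polynomial.coeff (PowerSeries.trunc (n+1)
        (((PowerSeries.trunc (n+1) g : Polynomial (ZMod p)) : PowerSeries (ZMod p)) ^ p)) n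
        = Polynomial.coeff (PowerSeries.trunc (n+1) (g ^ p)) n := by rw [this]
    rw [PowerSeries.coeff_trunc, PowerSeries.coeff_trunc] at h2
    simp only [Nat.lt_succ_self, if_true] at h2
    rw [← h2, ← Polynomial.coeff_coe, Polynomial.coe_pow]
  rw [h1]
  have hfrob : ((PowerSeries.trunc (n+1) g) ^ p : Polynomial (ZMod p))
      = Polynomial.expand (ZMod p) p (PowerSeries.trunc (n+1) g) := by
    rw [← Polynomial.map_frobenius_expand (p := p) (PowerSeries.trunc (n+1) g), ZMod.frobenius_zmod,
      Polynomial.map_id]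
  rw [hfrob, Polynomial.coeff_expand hp.pos, if_neg hn]

/-- In `LaurentSeries (ZMod p)`, the `p`-th power of a Laurent series has support in
multiples of `p`. -/
lemma ls_pow_coeff_zero (p : ℕ) (hp : p.Prime) (f : LaurentSeries (ZMod p)) (n : ℤ)
    (hn : ¬ (p : ℤ) ∣ n) : (f ^ p).coeff n = 0 := by
  haveI : Fact p.Prime := ⟨hp⟩
  have key := LaurentSeries.single_order_mul_powerSeriesPart f
  have hsmul : (p • f.order : ℤ) = (p : ℤ) * f.order := by
    simp [nsmul_eq_mul]
  have hfp : f ^ p = (HahnSeries.single ((p : ℤ) * f.order) 1)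
      * HahnSeries.ofPowerSeries ℤ (ZMod p) (f.powerSeriesPart ^ p) := by
    conv_lhs => rw [← key]
    rw [mul_pow, HahnSeries.single_pow, one_pow, map_pow, hsmul]
  rw [hfp]
  have heq : n = (n - (p : ℤ) * f.order) + (p : ℤ) * f.order := by ring
  rw [heq, HahnSeries.coeff_single_mul_add, one_mul]
  have hmn : ¬ (p : ℤ) ∣ (n - (p : ℤ) * f.order) := by
    intro ⟨c, hc⟩
    exact hn ⟨c + f.order, by linarith⟩
  rcases le_or_gt 0 (n - (p : ℤ) * f.order) with hm0 | hm0
  · obtain ⟨k, hk⟩ := Int.eq_ofNat_of_zero_le hm0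
    rw [hk, HahnSeries.ofPowerSeries_apply_coeff]
    apply ps_pow_coeff_zero p hp
    intro ⟨c, hc⟩
    exact hmn ⟨c, by rw [hk]; exact_mod_cast hc⟩
  · rw [HahnSeries.ofPowerSeries_apply, HahnSeries.embDomain_notin_range]
    rintro ⟨k, hk⟩
    have : (0:ℤ) ≤ n - (p : ℤ) * f.order := hk ▸ Int.natCast_nonneg k
    omega

/-- in `F_p((X))`, the intersection of `℘(M)` with
`C(M) = Σ_{i=1}^{p-1} M^p · X^i` is contained in the valuation ring `F_p[[X]]`. -/
theorem stmt_2 (p : ℕ) (hp : p.Prime) (x : LaurentSeries (ZMod p))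
    (hx1 : ∃ z : LaurentSeries (ZMod p), x = z ^ p - z)
    (hx2 : ∃ f : ℕ → LaurentSeries (ZMod p),
      x = ∑ i ∈ Finset.Icc 1 (p - 1),
        (f i) ^ p * (HahnSeries.single (1 : ℤ) (1 : ZMod p)) ^ i) :
    ∃ g : PowerSeries (ZMod p), x = HahnSeries.ofPowerSeries ℤ (ZMod p) g := by
  haveI : Fact p.Prime := ⟨hp⟩
  obtain ⟨z, hz⟩ := hx1
  obtain ⟨f, hf⟩ := hx2
  -- the coefficients of x at multiples of p vanish
  have hdvd : ∀ n : ℤ, (p : ℤ) ∣ n → x.coeff n = 0 := by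
    intro n hn
    rw [hf]
    rw [show (∑ i ∈ Finset.Icc 1 (p - 1),
        (f i) ^ p * (HahnSeries.single (1 : ℤ) (1 : ZMod p)) ^ i).coeff n
      = ∑ i ∈ Finset.Icc 1 (p - 1),
        ((f i) ^ p * (HahnSeries.single (1 : ℤ) (1 : ZMod p)) ^ i).coeff n from
      map_sum (HahnSeries.coeff.addMonoidHom n) _ _]
    apply Finset.sum_eq_zero
    intro i hi
    rw [Finset.mem_Icc] at hi
    rw [HahnSeries.single_pow, one_pow]
    have hsmul : (i • (1:ℤ)) = (i : ℤ) := by simp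
    have heq : n = (n - (i : ℤ)) + (i : ℤ) := by ring
    rw [hsmul, heq, HahnSeries.coeff_mul_single_add]
    rw [ls_pow_coeff_zero p hp _ _ ?_, zero_mul]
    intro ⟨c, hc⟩
    have h1 : (p:ℤ) ∣ (i : ℤ) := by
      obtain ⟨d, hd⟩ := hn
      exact ⟨d - c, by linarith⟩
    have h2 : p ∣ i := by exact_mod_cast h1
    have := Nat.le_of_dvd (by omega) h2
    omega
  -- hence z has nonnegative order (or is zero)
  rcases eq_or_ne z 0 with rfl | hz0
  · exact ⟨0, by simp [hz, zero_pow hp.ne_zero]⟩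
  have hord : 0 ≤ z.order := by
    by_contra hlt
    push_neg at hlt
    have hzp : (z ^ p) ≠ 0 := pow_ne_zero _ hz0
    have horder : (z ^ p).order = p • z.order := HahnSeries.order_pow z p
    have hcoef : (z ^ p).coeff (p • z.order) ≠ 0 := by
      rw [← horder]
      exact HahnSeries.coeff_orderTop_ne
        (by rw [HahnSeries.orderTop_of_ne_zero hzp, HahnSeries.order_of_ne hzp])
    have hzc : z.coeff (p • z.order) = 0 := by
      apply HahnSeries.coeff_eq_zero_of_lt_order
      have h2 : 2 ≤ p := hp.two_le
      have hps : (p • z.order : ℤ) = (p : ℤ) * z.order := by simp [nsmul_eq_mul]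
      rw [hps]
      nlinarith [hlt]
    have hx0 := hdvd (p • z.order) ⟨z.order, by simp [nsmul_eq_mul]⟩
    rw [hz, HahnSeries.coeff_sub, hzc, sub_zero] at hx0
    exact hcoef hx0
  -- z is a power series, hence so is x
  obtain ⟨w, hw⟩ : ∃ w : PowerSeries (ZMod p),
      z = HahnSeries.ofPowerSeries ℤ (ZMod p) w := by
    refine ⟨PowerSeries.X ^ z.order.natAbs * z.powerSeriesPart, ?_⟩
    exact (LaurentSeries.X_order_mul_powerSeriesPart
      (n := z.order.natAbs) (f := z) (Int.natAbs_of_nonneg hord)).symm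
  exact ⟨w ^ p - w, by rw [hz, map_sub, map_pow, ← hw]⟩
end

section
/- Let (F, v) be a henselian valued field and let G be a polynomial over the valuation ring O with G(0) = 0 and G'(0) = a ≠ 0. Define A_1 = {γ ∈ Γ : G_v(γ) < (G − aT)_v(γ)} (where H_v denotes the tropicalization γ ↦ min_i (i·γ + v(coefficient of T^i in H))), A_2 = {γ + v(a) : γ ∈ A_1}, B_1 = v^{-1}(A_1), B_2 = v^{-1}(A_2). Then G restricts to a bijection from B_1 onto B_2. -/
open Polynomial

/-- The tropicalization of a polynomial `G` at `γ`: `min_i (i·γ + v(a_i))`. -/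
def trop {F : Type*} [Field F] {Γ : Type*} [AddCommGroup Γ] [LinearOrder Γ] [IsOrderedAddMonoid Γ]
    (v : F → WithTop Γ) (G : Polynomial F) (γ : Γ) : WithTop Γ :=
  (Finset.range (G.natDegree + 1)).inf fun i => ((i • γ : Γ) : WithTop Γ) + v (G.coeff i)

section aux
variable {F : Type*} [Field F] {Γ : Type*} [AddCommGroup Γ] [LinearOrder Γ] [IsOrderedAddMonoid Γ]
variable {v : F → WithTop Γ}

theorem mytrop_lt_iff (hv0 : ∀ x, v x = ⊤ ↔ x = 0)
    {G : Polynomial F} (hG0 : G.coeff 0 = 0) (ha : G.coeff 1 ≠ 0) (γ : Γ) :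
    trop v G γ < trop v (G - C (G.coeff 1) * X) γ ↔
      ∀ i : ℕ, 2 ≤ i →
        (γ : WithTop Γ) + v (G.coeff 1) < ((i • γ : Γ) : WithTop Γ) + v (G.coeff i) := by
  classical
  set a := G.coeff 1 with haa
  set H := G - C a * X with hH
  set n := G.natDegree with hn
  have hvzero : v 0 = ⊤ := (hv0 0).mpr rfl
  have hn1 : 1 ≤ n := le_natDegree_of_ne_zero ha
  have hHc : ∀ i, H.coeff i = if i = 1 then 0 else G.coeff i := by
    intro i
    rw [hH, coeff_sub, coeff_C_mul, coeff_X]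
    by_cases h : i = 1
    · subst h
      simp [haa]
    · rw [if_neg h, if_neg (fun h' => h h'.symm), mul_zero, sub_zero]
  have hHdeg : H.natDegree ≤ n := by
    refine le_trans (natDegree_sub_le _ _) (max_le le_rfl ?_)
    exact le_trans (natDegree_C_mul_le _ _) (le_trans natDegree_X_le hn1)
  have hHtrop : trop v H γ =
      (Finset.range (n + 1)).inf fun i => ((i • γ : Γ) : WithTop Γ) + v (H.coeff i) := by
    refine le_antisymm ?_ (Finset.inf_mono (by
      intro i hi
      simp only [Finset.mem_range] at hi ⊢
      omega))
    refine Finset.le_inf fun i hi => ?_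
    by_cases h : i ∈ Finset.range (H.natDegree + 1)
    · exact Finset.inf_le h
    · have : H.coeff i = 0 := coeff_eq_zero_of_natDegree_lt (by
        simp only [Finset.mem_range, not_lt] at h; omega)
      rw [this, hvzero, add_top]
      exact le_top
  have hane : v a ≠ ⊤ := fun h => ha ((hv0 a).mp h)
  have hAlt : (γ : WithTop Γ) + v a < ⊤ := by
    rw [lt_top_iff_ne_top]
    exact WithTop.add_ne_top.mpr ⟨WithTop.coe_ne_top, hane⟩
  have hmin : trop v G γ = min ((γ : WithTop Γ) + v a) (trop v H γ) := by
    refine le_antisymm (le_min ?_ ?_) ?_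
    · have h1 : (1 : ℕ) ∈ Finset.range (n + 1) := by
        simp only [Finset.mem_range]; omega
      refine le_trans (Finset.inf_le h1) ?_
      rw [one_nsmul]
    · rw [hHtrop]
      refine Finset.le_inf fun i hi => le_trans (Finset.inf_le hi) ?_
      rw [hHc i]
      split_ifs with h
      · rw [hvzero, add_top]; exact le_top
      · exact le_rfl
    · refine Finset.le_inf fun i hi => ?_
      by_cases h : i = 1
      · subst h
        rw [one_nsmul]
        exact min_le_left _ _
      · refine le_trans (min_le_right _ _) ?_
        rw [hHtrop]
        refine le_trans (Finset.inf_le hi) ?_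
        rw [hHc i, if_neg h]
  rw [hmin]
  have hminlt : min ((γ : WithTop Γ) + v a) (trop v H γ) < trop v H γ ↔
      (γ : WithTop Γ) + v a < trop v H γ := by
    rw [min_lt_iff]
    simp [lt_irrefl]
  rw [hminlt, hHtrop, Finset.lt_inf_iff hAlt]
  constructor
  · intro h i hi2
    by_cases hin : i ≤ n
    · have := h i (by simp only [Finset.mem_range]; omega)
      rwa [hHc i, if_neg (by omega)] at this
    · rw [coeff_eq_zero_of_natDegree_lt (by omega), hvzero, add_top]
      exact hAlt
  · intro h i hi
    rw [hHc i]
    split_ifs with h1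
    · rw [hvzero, add_top]; exact hAlt
    · by_cases h2 : 2 ≤ i
      · exact h i h2
      · have : i = 0 := by omega
        subst this
        rw [hG0, hvzero, add_top]
        exact hAlt


theorem myv_one (hv0 : ∀ x, v x = ⊤ ↔ x = 0) (hvmul : ∀ x y, v (x * y) = v x + v y) :
    v (1 : F) = 0 := by
  have h := hvmul 1 1
  rw [mul_one] at h
  have h1 : v (1 : F) ≠ ⊤ := by simp [hv0]
  lift v (1 : F) to Γ using h1 with t ht
  rw [← WithTop.coe_add, WithTop.coe_inj] at h
  have : t + 0 = t + t := by rw [add_zero]; exact h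
  rw [show t = 0 from (add_left_cancel this).symm]; rfl

theorem myv_neg (hv0 : ∀ x, v x = ⊤ ↔ x = 0) (hvmul : ∀ x y, v (x * y) = v x + v y)
    (x : F) : v (-x) = v x := by
  have hne : v (-1 : F) = 0 := by
    have h := hvmul (-1) (-1)
    rw [neg_mul_neg, one_mul, myv_one hv0 hvmul] at h
    have h1 : v (-1 : F) ≠ ⊤ := by simp [hv0]
    lift v (-1 : F) to Γ using h1 with t ht
    rw [← WithTop.coe_add, ← WithTop.coe_zero, WithTop.coe_inj] at h
    rw [← WithTop.coe_zero, WithTop.coe_inj]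
    rcases lt_trichotomy t 0 with h' | h' | h'
    · exact absurd (add_lt_add h' h') (by rw [← h]; simp)
    · exact h'
    · exact absurd (add_lt_add h' h') (by rw [← h]; simp)
  rw [show -x = (-1) * x by ring, hvmul, hne, zero_add]

theorem myv_add_eq (hv0 : ∀ x, v x = ⊤ ↔ x = 0) (hvmul : ∀ x y, v (x * y) = v x + v y)
    (hvadd : ∀ x y, min (v x) (v y) ≤ v (x + y)) {x y : F} (h : v x < v y) :
    v (x + y) = v x := by
  refine le_antisymm ?_ (le_trans (le_min le_rfl h.le) (hvadd x y))
  have h2 := hvadd (x + y) (-y)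
  rw [add_neg_cancel_right, myv_neg hv0 hvmul] at h2
  rcases min_le_iff.mp h2 with h3 | h3
  · exact h3
  · exact absurd h (not_lt.mpr h3)

theorem myv_sum (hv0 : ∀ x, v x = ⊤ ↔ x = 0)
    (hvadd : ∀ x y, min (v x) (v y) ≤ v (x + y)) {ι : Type*} (s : Finset ι) (f : ι → F)
    (b : WithTop Γ) (h : ∀ i ∈ s, b ≤ v (f i)) : b ≤ v (∑ i ∈ s, f i) := by
  classical
  induction s using Finset.cons_induction with
  | empty => simp [(hv0 0).mpr rfl]
  | cons a s ha ih =>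
    rw [Finset.sum_cons]
    refine le_trans (le_min (h a (Finset.mem_cons_self a s)) ?_) (hvadd _ _)
    exact ih fun i hi => h i (Finset.mem_cons_of_mem hi)

theorem myv_sum_lt (hv0 : ∀ x, v x = ⊤ ↔ x = 0)
    (hvadd : ∀ x y, min (v x) (v y) ≤ v (x + y)) {ι : Type*} (s : Finset ι) (f : ι → F)
    (b : WithTop Γ) (hb : b ≠ ⊤) (h : ∀ i ∈ s, b < v (f i)) : b < v (∑ i ∈ s, f i) := by
  classical
  induction s using Finset.cons_induction with
  | empty => simpa [(hv0 0).mpr rfl] using lt_top_iff_ne_top.mpr hb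
  | cons a s ha ih =>
    rw [Finset.sum_cons]
    refine lt_of_lt_of_le (lt_min (h a (Finset.mem_cons_self a s)) ?_) (hvadd _ _)
    exact ih fun i hi => h i (Finset.mem_cons_of_mem hi)

theorem myv_nat (hv0 : ∀ x, v x = ⊤ ↔ x = 0) (hvmul : ∀ x y, v (x * y) = v x + v y)
    (hvadd : ∀ x y, min (v x) (v y) ≤ v (x + y)) (n : ℕ) : (0 : WithTop Γ) ≤ v (n : F) := by
  induction n with
  | zero => simp [(hv0 0).mpr rfl]
  | succ k ih =>
    push_cast
    refine le_trans (le_min ih ?_) (hvadd _ _)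
    rw [myv_one hv0 hvmul]

theorem myv_pow_le (hv0 : ∀ x, v x = ⊤ ↔ x = 0) (hvmul : ∀ x y, v (x * y) = v x + v y) {γ : Γ} {z : F}
    (h : (γ : WithTop Γ) ≤ v z) (k : ℕ) : ((k • γ : Γ) : WithTop Γ) ≤ v (z ^ k) := by
  induction k with
  | zero => simp [pow_zero, myv_one hv0 hvmul, zero_nsmul]
  | succ k ih =>
    rw [pow_succ, hvmul, succ_nsmul, WithTop.coe_add]
    exact add_le_add ih h

theorem myv_pow_eq (hv0 : ∀ x, v x = ⊤ ↔ x = 0) (hvmul : ∀ x y, v (x * y) = v x + v y) {γ : Γ} {z : F}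
    (h : v z = (γ : WithTop Γ)) (k : ℕ) : v (z ^ k) = ((k • γ : Γ) : WithTop Γ) := by
  induction k with
  | zero => simp [pow_zero, myv_one hv0 hvmul, zero_nsmul]
  | succ k ih =>
    rw [pow_succ, hvmul, ih, h, succ_nsmul, WithTop.coe_add]



theorem mykeylem (hv0 : ∀ x, v x = ⊤ ↔ x = 0) (hvmul : ∀ x y, v (x * y) = v x + v y)
    (hvadd : ∀ x y, min (v x) (v y) ≤ v (x + y))
    {G : Polynomial F} (hG0 : G.coeff 0 = 0) (ha : G.coeff 1 ≠ 0) {γ : Γ}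
    (hQ : ∀ i : ℕ, 2 ≤ i →
      (γ : WithTop Γ) + v (G.coeff 1) < ((i • γ : Γ) : WithTop Γ) + v (G.coeff i))
    {x z : F} (hx : v x = (γ : WithTop Γ)) (hz : (γ : WithTop Γ) ≤ v z) :
    v (G.eval x - G.eval z) = v (G.coeff 1) + v (x - z) := by
  classical
  by_cases hxz : x = z
  · subst hxz
    simp [sub_self, (hv0 0).mpr rfl]
  have hdne : v (x - z) ≠ ⊤ := fun h => hxz (sub_eq_zero.mp ((hv0 _).mp h))
  obtain ⟨δ, hδ⟩ := WithTop.ne_top_iff_exists.mp hdne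
  have hane : v (G.coeff 1) ≠ ⊤ := fun h => ha ((hv0 _).mp h)
  obtain ⟨α, hα⟩ := WithTop.ne_top_iff_exists.mp hane
  set n := G.natDegree with hn
  have h1 : 1 ≤ n := le_natDegree_of_ne_zero ha
  have hsplit : Finset.range (n + 1) = insert 0 (insert 1 (Finset.Ico 2 (n + 1))) := by
    ext i; simp only [Finset.mem_range, Finset.mem_insert, Finset.mem_Ico]; omega
  have hsum : G.eval x - G.eval z = ∑ i ∈ Finset.range (n + 1), G.coeff i * (x ^ i - z ^ i) := by
    rw [eval_eq_sum_range, eval_eq_sum_range, ← Finset.sum_sub_distrib]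
    exact Finset.sum_congr rfl fun i _ => (mul_sub _ _ _).symm
  set R := ∑ i ∈ Finset.Ico 2 (n + 1), G.coeff i * (x ^ i - z ^ i) with hR
  have hsum2 : G.eval x - G.eval z = G.coeff 1 * (x - z) + R := by
    rw [hsum, hsplit, Finset.sum_insert (by simp), Finset.sum_insert (by simp), hG0,
      zero_mul, zero_add, pow_one, pow_one]
  -- bound for R
  have hRlt : (↑(α + δ) : WithTop Γ) < v R := by
    refine myv_sum_lt hv0 hvadd _ _ _ WithTop.coe_ne_top fun i hi => ?_
    rw [Finset.mem_Ico] at hi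
    have hi2 : 2 ≤ i := hi.1
    have hfac : x ^ i - z ^ i = (∑ j ∈ Finset.range i, x ^ j * z ^ (i - 1 - j)) * (x - z) :=
      (geom_sum₂_mul x z i).symm
    rw [hfac, ← mul_assoc, hvmul, hvmul, ← hδ]
    -- v (geom sum) ≥ (i-1)•γ
    have hgeom : ((((i - 1) • γ : Γ)) : WithTop Γ) ≤ v (∑ j ∈ Finset.range i, x ^ j * z ^ (i - 1 - j)) := by
      refine myv_sum hv0 hvadd _ _ _ fun j hj => ?_
      rw [Finset.mem_range] at hj
      rw [hvmul]
      have h1' : ((j • γ : Γ) : WithTop Γ) ≤ v (x ^ j) := myv_pow_le hv0 hvmul hx.ge j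
      have h2' : ((((i - 1 - j) • γ : Γ)) : WithTop Γ) ≤ v (z ^ (i - 1 - j)) :=
        myv_pow_le hv0 hvmul hz (i - 1 - j)
      calc ((((i - 1) • γ : Γ)) : WithTop Γ)
          = ((j • γ : Γ) : WithTop Γ) + (((i - 1 - j) • γ : Γ) : WithTop Γ) := by
            have hj' : j + (i - 1 - j) = i - 1 := by omega
            rw [← WithTop.coe_add, ← add_nsmul, hj']
        _ ≤ v (x ^ j) + v (z ^ (i - 1 - j)) := add_le_add h1' h2'
    -- from hQ
    have hQ' : (↑α : WithTop Γ) < v (G.coeff i) + ((((i - 1) • γ : Γ)) : WithTop Γ) := by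
      have h := hQ i hi2
      rw [← hα] at h
      have hisplit : (i • γ : Γ) = γ + (i - 1) • γ := by
        obtain ⟨k, rfl⟩ : ∃ k, i = k + 2 := ⟨i - 2, by omega⟩
        show ((k + 1 + 1) • γ : Γ) = γ + (k + 1) • γ
        rw [succ_nsmul']
      rw [hisplit, WithTop.coe_add, add_assoc] at h
      have h2 := (WithTop.add_lt_add_iff_left (WithTop.coe_ne_top (a := γ))).mp h
      calc (↑α : WithTop Γ) < ((((i - 1) • γ : Γ)) : WithTop Γ) + v (G.coeff i) := h2
        _ = v (G.coeff i) + ((((i - 1) • γ : Γ)) : WithTop Γ) := add_comm _ _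
    calc (↑(α + δ) : WithTop Γ) = ↑α + (↑δ : WithTop Γ) := WithTop.coe_add α δ
      _ < (v (G.coeff i) + ((((i - 1) • γ : Γ)) : WithTop Γ)) + ↑δ :=
          WithTop.add_lt_add_right WithTop.coe_ne_top hQ'
      _ ≤ (v (G.coeff i) + v (∑ j ∈ Finset.range i, x ^ j * z ^ (i - 1 - j))) + ↑δ := by
          exact add_le_add_left (add_le_add_right hgeom _) _
  have hmain : v (G.coeff 1 * (x - z)) = (↑(α + δ) : WithTop Γ) := by
    rw [hvmul, ← hα, ← hδ, WithTop.coe_add]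
  rw [hsum2, myv_add_eq hv0 hvmul hvadd (by rw [hmain]; exact hRlt), hmain,
    WithTop.coe_add, hα, hδ]


end aux


/-- for a henselian valued field `(F, v)` and a polynomial `G` over the
valuation ring with `G(0) = 0` and `G'(0) = a ≠ 0`, `G` restricts to a bijection from
`B₁ = v⁻¹(A₁)` onto `B₂ = v⁻¹(A₂)`, where `A₁ = {γ : G_v(γ) < (G - aT)_v(γ)}` and
`A₂ = {γ + v(a) : γ ∈ A₁}`. -/
theorem stmt_4 {F : Type*} [Field F] {Γ : Type*} [AddCommGroup Γ] [LinearOrder Γ] [IsOrderedAddMonoid Γ]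
    (v : F → WithTop Γ)
    (hv0 : ∀ x, v x = ⊤ ↔ x = 0)
    (hvmul : ∀ x y, v (x * y) = v x + v y)
    (hvadd : ∀ x y, min (v x) (v y) ≤ v (x + y))
    (hhens : ∀ f : Polynomial F, (∀ i, (0 : WithTop Γ) ≤ v (f.coeff i)) →
      2 • v (f.coeff 1) < v (f.coeff 0) →
      ∃ b, f.eval b = 0 ∧ v b + v (f.coeff 1) = v (f.coeff 0))
    (G : Polynomial F) (hGO : ∀ i, (0 : WithTop Γ) ≤ v (G.coeff i))
    (hG0 : G.coeff 0 = 0) (ha : G.coeff 1 ≠ 0) :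
    Set.BijOn (fun x => G.eval x)
      {x : F | ∃ γ : Γ, v x = ↑γ ∧
        trop v G γ < trop v (G - C (G.coeff 1) * X) γ}
      {x : F | ∃ γ : Γ, v x = (γ : WithTop Γ) + v (G.coeff 1) ∧
        trop v G γ < trop v (G - C (G.coeff 1) * X) γ} := by
  classical
  have hvzero : v (0 : F) = ⊤ := (hv0 0).mpr rfl
  have hane : v (G.coeff 1) ≠ ⊤ := fun h => ha ((hv0 _).mp h)
  obtain ⟨α, hα⟩ := WithTop.ne_top_iff_exists.mp hane
  set n := G.natDegree with hn
  have hn1 : 1 ≤ n := le_natDegree_of_ne_zero ha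
  have key : ∀ x z : F, ∀ γ : Γ, v x = ↑γ →
      (∀ i : ℕ, 2 ≤ i →
        (γ : WithTop Γ) + v (G.coeff 1) < ((i • γ : Γ) : WithTop Γ) + v (G.coeff i)) →
      v x ≤ v z → G.eval x = G.eval z → x = z := by
    intro x z γ hx hQ hle heq
    have hkey := mykeylem hv0 hvmul hvadd hG0 ha hQ hx ((le_of_eq hx.symm).trans hle)
    rw [heq, sub_self, hvzero] at hkey
    rcases WithTop.add_eq_top.mp hkey.symm with h | h
    · exact absurd h hane
    · exact sub_eq_zero.mp ((hv0 _).mp h)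
  refine ⟨?_, ?_, ?_⟩
  · -- MapsTo
    rintro x ⟨γ, hx, ht⟩
    have hQ := (mytrop_lt_iff hv0 hG0 ha γ).mp ht
    have hkey := mykeylem hv0 hvmul hvadd hG0 ha hQ hx
      (z := 0) (by rw [hvzero]; exact le_top)
    rw [show G.eval 0 = 0 from by rw [← coeff_zero_eq_eval_zero, hG0], sub_zero, sub_zero,
      hx] at hkey
    refine ⟨γ, ?_, ht⟩
    show v (G.eval x) = ↑γ + v (G.coeff 1)
    rw [hkey, add_comm]
  · -- InjOn
    rintro x ⟨γ₁, hx1, ht1⟩ z ⟨γ₂, hx2, ht2⟩ heq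
    have heq' : G.eval x = G.eval z := heq
    rcases le_total (v x) (v z) with h | h
    · exact key x z γ₁ hx1 ((mytrop_lt_iff hv0 hG0 ha γ₁).mp ht1) h heq'
    · exact (key z x γ₂ hx2 ((mytrop_lt_iff hv0 hG0 ha γ₂).mp ht2) h heq'.symm).symm
  · -- SurjOn
    rintro y ⟨γ, hy, ht⟩
    have hQ := (mytrop_lt_iff hv0 hG0 ha γ).mp ht
    have hainv : v (G.coeff 1)⁻¹ = ((-α : Γ) : WithTop Γ) := by
      have h := hvmul (G.coeff 1) (G.coeff 1)⁻¹
      rw [mul_inv_cancel₀ ha, myv_one hv0 hvmul, ← hα] at h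
      cases hinv : v (G.coeff 1)⁻¹ with
      | top => rw [hinv] at h; simp at h
      | coe β =>
        rw [hinv, ← WithTop.coe_add, ← WithTop.coe_zero, WithTop.coe_inj] at h
        exact WithTop.coe_inj.mpr (neg_eq_of_add_eq_zero_right h.symm).symm
    set c := y * (G.coeff 1)⁻¹ with hc
    have hvc : v c = (γ : WithTop Γ) := by
      rw [hc, hvmul, hy, hainv, ← hα, add_assoc, ← WithTop.coe_add]
      simp
    set T : ℕ → F := fun i => G.coeff i * c ^ (i - 1) * (G.coeff 1)⁻¹ with hT
    set f : Polynomial F := (∑ i ∈ Finset.range (n + 1), C (T i) * (1 + X) ^ i) - 1 with hf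
    have hfc : ∀ j, f.coeff j =
        (∑ i ∈ Finset.range (n + 1), T i * (i.choose j : F)) - (if j = 0 then 1 else 0) := by
      intro j
      rw [hf, coeff_sub, finset_sum_coeff, coeff_one]
      congr 1
      exact Finset.sum_congr rfl fun i _ => by rw [coeff_C_mul, coeff_one_add_X_pow]
    have hT0 : T 0 = 0 := by simp only [hT, hG0, zero_mul]
    have hT1 : T 1 = 1 := by
      simp only [hT]
      norm_num
      exact mul_inv_cancel₀ ha
    have hTv : ∀ i, 2 ≤ i → (0 : WithTop Γ) < v (T i) := by
      intro i hi2
      simp only [hT]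
      rw [hvmul, hvmul, myv_pow_eq hv0 hvmul hvc, hainv]
      have h := hQ i hi2
      rw [← hα] at h
      have hisplit : (i • γ : Γ) = γ + (i - 1) • γ := by
        obtain ⟨k, rfl⟩ : ∃ k, i = k + 2 := ⟨i - 2, by omega⟩
        show ((k + 1 + 1) • γ : Γ) = γ + (k + 1) • γ
        rw [succ_nsmul']
      rw [hisplit, WithTop.coe_add, add_assoc] at h
      have h2 := (WithTop.add_lt_add_iff_left (WithTop.coe_ne_top (a := γ))).mp h
      have h3 := WithTop.add_lt_add_right (WithTop.coe_ne_top (a := -α)) h2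
      rw [← WithTop.coe_add, add_neg_cancel, WithTop.coe_zero,
        add_comm ((((i - 1) • γ : Γ)) : WithTop Γ) (v (G.coeff i))] at h3
      exact h3
    have hsplitrange : Finset.range (n + 1) = insert 0 (insert 1 (Finset.Ico 2 (n + 1))) := by
      ext i; simp only [Finset.mem_range, Finset.mem_insert, Finset.mem_Ico]; omega
    have hfc0 : f.coeff 0 = ∑ i ∈ Finset.Ico 2 (n + 1), T i * (i.choose 0 : F) := by
      rw [hfc 0, if_pos rfl, hsplitrange, Finset.sum_insert (by simp),
        Finset.sum_insert (by simp), hT0, hT1]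
      simp
    have hv_f0 : (0 : WithTop Γ) < v (f.coeff 0) := by
      rw [hfc0]
      refine myv_sum_lt hv0 hvadd _ _ _ (by simp) fun i hi => ?_
      rw [Finset.mem_Ico] at hi
      rw [hvmul]
      calc (0 : WithTop Γ) = 0 + 0 := (add_zero 0).symm
        _ < v (T i) + v ((i.choose 0 : F)) := by
            calc (0 : WithTop Γ) + 0 < v (T i) + 0 := by
                  simpa using hTv i hi.1
              _ ≤ v (T i) + v ((i.choose 0 : F)) :=
                  add_le_add_right (myv_nat hv0 hvmul hvadd _) _
    have hfc1 : f.coeff 1 = 1 + ∑ i ∈ Finset.Ico 2 (n + 1), T i * (i.choose 1 : F) := by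
      rw [hfc 1, if_neg one_ne_zero, sub_zero, hsplitrange, Finset.sum_insert (by simp),
        Finset.sum_insert (by simp), hT0, hT1]
      simp
    have hv_f1 : v (f.coeff 1) = 0 := by
      have hlt : v (1 : F) < v (∑ i ∈ Finset.Ico 2 (n + 1), T i * (i.choose 1 : F)) := by
        rw [myv_one hv0 hvmul]
        refine myv_sum_lt hv0 hvadd _ _ _ (by simp) fun i hi => ?_
        rw [Finset.mem_Ico] at hi
        rw [hvmul]
        calc (0 : WithTop Γ) = 0 + 0 := (add_zero 0).symm
          _ < v (T i) + v ((i.choose 1 : F)) := by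
              calc (0 : WithTop Γ) + 0 < v (T i) + 0 := by
                    simpa using hTv i hi.1
                _ ≤ v (T i) + v ((i.choose 1 : F)) :=
                    add_le_add_right (myv_nat hv0 hvmul hvadd _) _
      rw [hfc1, myv_add_eq hv0 hvmul hvadd hlt, myv_one hv0 hvmul]
    have hvcoeffs : ∀ j, (0 : WithTop Γ) ≤ v (f.coeff j) := by
      intro j
      by_cases hj : j = 0
      · subst hj; exact hv_f0.le
      · rw [hfc j, if_neg hj, sub_zero]
        refine myv_sum hv0 hvadd _ _ _ fun i hi => ?_
        rw [hvmul]
        rcases Nat.lt_or_ge i 2 with h2 | h2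
        · interval_cases i
          · rw [hT0, hvzero, top_add]; exact le_top
          · rw [hT1, myv_one hv0 hvmul, zero_add]
            exact myv_nat hv0 hvmul hvadd _
        · calc (0 : WithTop Γ) = 0 + 0 := (add_zero 0).symm
            _ ≤ v (T i) + v ((i.choose j : F)) :=
                add_le_add (hTv i h2).le (myv_nat hv0 hvmul hvadd _)
    obtain ⟨b, hfb, hvb⟩ := hhens f hvcoeffs (by rw [hv_f1, smul_zero]; exact hv_f0)
    have hvb' : v b = v (f.coeff 0) := by rw [← hvb, hv_f1, add_zero]
    have hvbpos : (0 : WithTop Γ) < v b := by rw [hvb']; exact hv_f0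
    have hv1b : v (1 + b) = 0 := by
      rw [myv_add_eq hv0 hvmul hvadd (by rw [myv_one hv0 hvmul]; exact hvbpos),
        myv_one hv0 hvmul]
    refine ⟨c * (1 + b), ⟨γ, ?_, ht⟩, ?_⟩
    · rw [hvmul, hvc, hv1b, add_zero]
    · show G.eval (c * (1 + b)) = y
      have hfev : f.eval b = (∑ i ∈ Finset.range (n + 1), T i * (1 + b) ^ i) - 1 := by
        rw [hf]
        simp [eval_finset_sum]
      have hsum1 : (∑ i ∈ Finset.range (n + 1), T i * (1 + b) ^ i) = 1 := by
        rw [hfev] at hfb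
        exact sub_eq_zero.mp hfb
      have hyac : G.coeff 1 * c = y := by
        rw [hc, ← mul_assoc, mul_comm (G.coeff 1) y, mul_assoc, mul_inv_cancel₀ ha, mul_one]
      calc G.eval (c * (1 + b))
          = ∑ i ∈ Finset.range (n + 1), G.coeff i * (c * (1 + b)) ^ i :=
            eval_eq_sum_range _
        _ = ∑ i ∈ Finset.range (n + 1), (G.coeff 1 * c) * (T i * (1 + b) ^ i) := by
            refine Finset.sum_congr rfl fun i _ => ?_
            by_cases hi0 : i = 0
            · subst hi0
              simp [hG0, hT0]
            · have hpow : c ^ (i - 1) * c = c ^ i := by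
                rw [← pow_succ, Nat.sub_add_cancel (by omega)]
              simp only [hT]
              rw [mul_pow, ← hpow]
              field_simp
        _ = (G.coeff 1 * c) * ∑ i ∈ Finset.range (n + 1), T i * (1 + b) ^ i :=
            (Finset.mul_sum _ _ _).symm
        _ = y := by rw [hsum1, mul_one, hyac]
end

section
/- In a t-decomposable R-module M (one where multiplication by t is injective and M is the internal direct sum of the subgroups M·t·α_i for i = 0, ..., d−1), for every s ≥ 1, M is the internal direct sum of the subgroups M·t^s·α_i for i ranging over the induced basis α(s) of size d^s. -/
private lemma keymul {K R : Type*} [Field K] [Ring R] (ι : K →+* R) (t : R) (q : ℕ)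
    (hcomm : ∀ a : K, t * ι (a ^ q) = ι a * t) (s : ℕ) (b a : K) :
    (t ^ s * ι b) * (t * ι a) = t ^ (s + 1) * ι (b ^ q * a) :=
  calc t ^ s * ι b * (t * ι a) = t ^ s * ((ι b * t) * ι a) := by rw [mul_assoc, mul_assoc]
    _ = t ^ s * ((t * ι (b ^ q)) * ι a) := by rw [hcomm b]
    _ = t ^ (s + 1) * ι (b ^ q * a) := by
        rw [map_mul, pow_succ, mul_assoc, mul_assoc]

/-- a `t`-decomposable right `R`-module `M` (multiplication by `t` is
injective and `M = ⊕_{i<d} M·t·α_i` as internal direct sum of abelian groups, `α` the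
basis `(1, X, ..., X^{d-1})` of `K` over `K^φ`) satisfies, for every `s ≥ 1`,
`M = ⊕_{i ∈ d^s} M·t^s·α_i` where `i` ranges over the induced basis `α(s)`.
Right `R`-modules are formalized as modules over `Rᵐᵒᵖ`, and internal direct sums by
unique decomposition. -/
theorem stmt_10 (p k : ℕ) (hp : p.Prime) (hk : 1 ≤ k)
    {K : Type*} [Field K] [CharP K p]
    {R : Type*} [Ring R] (ι : K →+* R) (t : R)
    (hcomm : ∀ a : K, t * ι (a ^ p ^ k) = ι a * t)
    (rep : R ≃+ (ℕ →₀ K))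
    (hrep : ∀ f : ℕ →₀ K, rep.symm f = f.sum fun n a => t ^ n * ι a)
    (α : Fin (p ^ k) → K)
    (hbasis : ∀ x : K, ∃! c : Fin (p ^ k) → K,
      x = ∑ j : Fin (p ^ k), (c j) ^ (p ^ k) * α j)
    {M : Type*} [AddCommGroup M] [Module Rᵐᵒᵖ M]
    (hinj : Function.Injective fun x : M => MulOpposite.op t • x)
    (hdec : ∀ x : M, ∃! c : Fin (p ^ k) → M,
      x = ∑ i : Fin (p ^ k), MulOpposite.op (t * ι (α i)) • c i)
    (s : ℕ) (hs : 1 ≤ s) :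
    ∀ x : M, ∃! c : (Fin s → Fin (p ^ k)) → M,
      x = ∑ f : Fin s → Fin (p ^ k),
        MulOpposite.op (t ^ s * ι (∏ j : Fin s, α (f j) ^ (p ^ k) ^ (j : ℕ))) • c f := by
  clear hs hinj hrep rep hbasis hp hk
  induction s with
  | zero =>
    intro x
    refine ⟨fun _ => x, ?_, ?_⟩
    · simp
    · intro c hc
      simp at hc
      funext f
      rw [Subsingleton.elim f default, hc]
  | succ s IH =>
    -- the key product identity
    have hP : ∀ (i : Fin (p ^ k)) (f : Fin s → Fin (p ^ k)),
        (∏ j : Fin (s + 1), α ((Fin.cons i f : Fin (s + 1) → Fin (p ^ k)) j) ^ (p ^ k) ^ (j : ℕ))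
          = (∏ j : Fin s, α (f j) ^ (p ^ k) ^ (j : ℕ)) ^ (p ^ k) * α i := by
      intro i f
      simp only [Fin.prod_univ_succ, Fin.cons_zero, Fin.cons_succ, Fin.val_zero, pow_zero,
        pow_one, Fin.val_succ, pow_succ, pow_mul, Finset.prod_pow]
      rw [mul_comm]
    -- the key smul identity
    have hsmul : ∀ (i : Fin (p ^ k)) (b : K) (m : M),
        MulOpposite.op (t * ι (α i)) • (MulOpposite.op (t ^ s * ι b) • m)
          = MulOpposite.op (t ^ (s + 1) * ι (b ^ (p ^ k) * α i)) • m := by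
      intro i b m
      rw [smul_smul, ← MulOpposite.op_mul, keymul ι t (p ^ k) hcomm]
    have expand : ∀ c' : (Fin (s + 1) → Fin (p ^ k)) → M,
        (∑ g : Fin (s + 1) → Fin (p ^ k),
          MulOpposite.op (t ^ (s + 1) * ι (∏ j : Fin (s + 1), α (g j) ^ (p ^ k) ^ (j : ℕ))) • c' g)
        = ∑ i : Fin (p ^ k), MulOpposite.op (t * ι (α i)) •
            ∑ f : Fin s → Fin (p ^ k),
              MulOpposite.op (t ^ s * ι (∏ j : Fin s, α (f j) ^ (p ^ k) ^ (j : ℕ))) •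
                c' (Fin.cons i f) := by
      intro c'
      rw [← Equiv.sum_comp (Fin.consEquiv fun _ => Fin (p ^ k)), Fintype.sum_prod_type]
      refine Finset.sum_congr rfl fun i _ => ?_
      rw [Finset.smul_sum]
      refine Finset.sum_congr rfl fun f _ => ?_
      simp only [Fin.consEquiv_apply]
      rw [hsmul, hP]
      rfl
    intro x
    obtain ⟨c1, hc1, hc1u⟩ := hdec x
    choose d hd hdu using fun i => IH (c1 i)
    refine ⟨fun g => d (g 0) (Fin.tail g), ?_, ?_⟩
    · show x = ∑ g : Fin (s + 1) → Fin (p ^ k),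
          MulOpposite.op (t ^ (s + 1) * ι (∏ j : Fin (s + 1), α (g j) ^ (p ^ k) ^ (j : ℕ))) •
            d (g 0) (Fin.tail g)
      rw [expand]
      simp only [Fin.cons_zero, Fin.tail_cons]
      refine hc1.trans (Finset.sum_congr rfl fun i _ => ?_)
      rw [hd i]
    · intro c' hc'
      rw [expand] at hc'
      have h1 : (fun i => ∑ f : Fin s → Fin (p ^ k),
          MulOpposite.op (t ^ s * ι (∏ j : Fin s, α (f j) ^ (p ^ k) ^ (j : ℕ))) •
            c' (Fin.cons i f)) = c1 := hc1u _ hc'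
      funext g
      have h2 : (fun f => c' (Fin.cons (g 0) f)) = d (g 0) :=
        hdu (g 0) _ (congrFun h1 (g 0)).symm
      conv_lhs => rw [← Fin.cons_self_tail g]
      exact congrFun h2 (Fin.tail g)
end

section
/- The tropical action of R on Γ = ℤ ∪ {∞}, defined for q = Σ_i t^i·a_i by γ·q = min_i (d^i·γ + v(a_i)), satisfies: (1) γ·(r·q) = (γ·r)·q for all r, q ∈ R; (2) γ·(r + q) ≥ min(γ·r, γ·q); (3) the map γ ↦ γ·r is strictly increasing on ℤ for every nonzero r; (4) ∞·r = ∞ and γ·0 = ∞. -/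
section aux

variable {K : Type*} [Field K] {v : K → WithTop ℤ}

lemma aux_v_one (hv0 : ∀ x, v x = ⊤ ↔ x = 0) (hvmul : ∀ x y, v (x * y) = v x + v y) :
    v 1 = 0 := by
  have h := hvmul 1 1
  rw [one_mul] at h
  have hne : v 1 ≠ ⊤ := fun h' => one_ne_zero ((hv0 1).mp h')
  obtain ⟨a, ha⟩ := WithTop.ne_top_iff_exists.mp hne
  rw [← ha] at h ⊢
  have h2 : a = a + a := by exact_mod_cast h
  have h3 : a = 0 := by omega
  simp [h3]

lemma aux_v_neg (hv0 : ∀ x, v x = ⊤ ↔ x = 0) (hvmul : ∀ x y, v (x * y) = v x + v y)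
    (x : K) : v (-x) = v x := by
  have h1 : v ((-1 : K) * (-1)) = v (-1) + v (-1) := hvmul _ _
  rw [neg_mul_neg, one_mul, aux_v_one hv0 hvmul] at h1
  have hne : v (-1 : K) ≠ ⊤ := fun h' => by
    have := (hv0 _).mp h'; norm_num at this
  obtain ⟨a, ha⟩ := WithTop.ne_top_iff_exists.mp hne
  rw [← ha] at h1
  have h2 : (0 : ℤ) = a + a := by exact_mod_cast h1
  have h3 : a = 0 := by omega
  have hm1 : v (-1 : K) = 0 := by rw [← ha, h3]; rfl
  calc v (-x) = v ((-1 : K) * x) := by ring_nf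
    _ = v (-1 : K) + v x := hvmul _ _
    _ = v x := by rw [hm1, zero_add]

lemma aux_v_add_eq (hv0 : ∀ x, v x = ⊤ ↔ x = 0) (hvmul : ∀ x y, v (x * y) = v x + v y)
    (hvadd : ∀ x y, min (v x) (v y) ≤ v (x + y)) {x y : K} (h : v x < v y) :
    v (x + y) = v x := by
  refine le_antisymm ?_ ?_
  · have h2 := hvadd (x + y) (-y)
    rw [add_neg_cancel_right, aux_v_neg hv0 hvmul] at h2
    rcases min_le_iff.mp h2 with h3 | h3
    · exact h3
    · exact absurd h (not_lt.mpr h3)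
  · have := hvadd x y
    rwa [min_eq_left h.le] at this

lemma aux_v_pow (hv0 : ∀ x, v x = ⊤ ↔ x = 0) (hvmul : ∀ x y, v (x * y) = v x + v y)
    {x : K} {a : ℤ} (ha : v x = (a : WithTop ℤ)) (m : ℕ) :
    v (x ^ m) = (((m : ℤ) * a : ℤ) : WithTop ℤ) := by
  induction m with
  | zero => simp [aux_v_one hv0 hvmul]
  | succ m ih =>
      rw [pow_succ, hvmul, ih, ha, ← WithTop.coe_add]
      congr 1
      push_cast
      ring

lemma aux_v_sum_ge (hv0 : ∀ x, v x = ⊤ ↔ x = 0)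
    (hvadd : ∀ x y, min (v x) (v y) ≤ v (x + y))
    {α : Type*} (s : Finset α) (f : α → K) :
    (s.inf fun x => v (f x)) ≤ v (∑ x ∈ s, f x) := by
  classical
  induction s using Finset.induction with
  | empty => simp [(hv0 0).mpr rfl]
  | insert a s ha ih =>
      rw [Finset.sum_insert ha, Finset.inf_insert]
      exact le_trans (inf_le_inf_left _ ih) (hvadd _ _)

lemma aux_v_sum_eq (hv0 : ∀ x, v x = ⊤ ↔ x = 0) (hvmul : ∀ x y, v (x * y) = v x + v y)
    (hvadd : ∀ x y, min (v x) (v y) ≤ v (x + y))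
    {α : Type*} [DecidableEq α] (s : Finset α) (f : α → K) (x₀ : α) (hx : x₀ ∈ s)
    (hlt : ∀ x ∈ s, x ≠ x₀ → v (f x₀) < v (f x)) :
    v (∑ x ∈ s, f x) = v (f x₀) := by
  rcases eq_or_ne (v (f x₀)) ⊤ with htop | hne
  · have hs : s = {x₀} := by
      apply Finset.eq_singleton_iff_unique_mem.mpr
      refine ⟨hx, fun x hx' => ?_⟩
      by_contra hne'
      exact absurd (htop ▸ hlt x hx' hne') not_top_lt
    rw [hs, Finset.sum_singleton]
  · rw [← Finset.add_sum_erase s f hx]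
    apply aux_v_add_eq hv0 hvmul hvadd
    have h1 : v (f x₀) < (s.erase x₀).inf fun x => v (f x) := by
      rw [Finset.lt_inf_iff (lt_top_iff_ne_top.mpr hne)]
      intro b hb
      exact hlt b (Finset.mem_of_mem_erase hb) (Finset.ne_of_mem_erase hb)
    exact lt_of_lt_of_le h1 (aux_v_sum_ge hv0 hvadd _ _)

end aux

lemma aux_exists_min (f : ℕ → WithTop ℤ) (s : Finset ℕ) (hs : s.Nonempty) :
    ∃ i₀ ∈ s, s.inf f = f i₀ ∧ ∀ i ∈ s, i < i₀ → s.inf f < f i := by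
  classical
  obtain ⟨i, hi, hif⟩ := Finset.exists_mem_eq_inf s hs f
  set M := s.filter (fun j => f j = s.inf f) with hM
  have hMne : M.Nonempty := ⟨i, by simp [hM, hi, hif.symm]⟩
  have hmem := Finset.mem_filter.mp (M.min'_mem hMne)
  refine ⟨M.min' hMne, hmem.1, hmem.2.symm, ?_⟩
  intro j hj hjlt
  rcases lt_or_eq_of_le (Finset.inf_le (f := f) hj) with hlt | heq
  · exact hlt
  · have : j ∈ M := Finset.mem_filter.mpr ⟨hj, heq.symm⟩
    exact absurd (Finset.min'_le M j this) (not_le.mpr hjlt)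

section ring

variable {K : Type*} [Field K] {R : Type*} [Ring R]

lemma aux_comm_pow (ι : K →+* R) (t : R) (d : ℕ)
    (hcomm' : ∀ a : K, ι a * t = t * ι (a ^ d)) :
    ∀ (j : ℕ) (a : K), ι a * t ^ j = t ^ j * ι (a ^ d ^ j) := by
  intro j
  induction j with
  | zero => intro a; simp
  | succ j ih =>
      intro a
      calc ι a * t ^ (j + 1) = (ι a * t) * t ^ j := by rw [pow_succ', ← mul_assoc]
        _ = t * (ι (a ^ d) * t ^ j) := by rw [hcomm' a, mul_assoc]
        _ = t * (t ^ j * ι ((a ^ d) ^ d ^ j)) := by rw [ih]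
        _ = t ^ (j + 1) * ι (a ^ d ^ (j + 1)) := by
            rw [← mul_assoc, ← pow_succ', ← pow_mul, ← pow_succ']

lemma aux_rep_single (ι : K →+* R) (t : R) (rep : R ≃+ (ℕ →₀ K))
    (hrep : ∀ f : ℕ →₀ K, rep.symm f = f.sum fun n a => t ^ n * ι a)
    (n : ℕ) (c : K) : rep (t ^ n * ι c) = Finsupp.single n c := by
  have h := hrep (Finsupp.single n c)
  rw [Finsupp.sum_single_index (by simp)] at h
  rw [← h, AddEquiv.apply_symm_apply]

lemma aux_rep_mul (ι : K →+* R) (t : R) (d : ℕ)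
    (hcomm' : ∀ a : K, ι a * t = t * ι (a ^ d))
    (rep : R ≃+ (ℕ →₀ K))
    (hrep : ∀ f : ℕ →₀ K, rep.symm f = f.sum fun n a => t ^ n * ι a)
    (r q : R) (n : ℕ) :
    rep (r * q) n = ∑ ij ∈ (rep r).support ×ˢ (rep q).support,
      if ij.1 + ij.2 = n then (rep r ij.1) ^ d ^ ij.2 * rep q ij.2 else 0 := by
  classical
  have hr : r = ∑ i ∈ (rep r).support, t ^ i * ι (rep r i) := by
    conv_lhs => rw [← rep.symm_apply_apply r, hrep]
    rfl
  have hq : q = ∑ j ∈ (rep q).support, t ^ j * ι (rep q j) := by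
    conv_lhs => rw [← rep.symm_apply_apply q, hrep]
    rfl
  have key : ∀ i j : ℕ, (t ^ i * ι (rep r i)) * (t ^ j * ι (rep q j)) =
      t ^ (i + j) * ι ((rep r i) ^ d ^ j * rep q j) := by
    intro i j
    calc (t ^ i * ι (rep r i)) * (t ^ j * ι (rep q j))
        = t ^ i * ((ι (rep r i) * t ^ j) * ι (rep q j)) := by
          rw [mul_assoc, mul_assoc]
      _ = t ^ i * ((t ^ j * ι ((rep r i) ^ d ^ j)) * ι (rep q j)) := by
          rw [aux_comm_pow ι t d hcomm' j]
      _ = t ^ (i + j) * ι ((rep r i) ^ d ^ j * rep q j) := by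
          rw [map_mul, pow_add, mul_assoc, mul_assoc]
  have hmul : r * q = ∑ i ∈ (rep r).support, ∑ j ∈ (rep q).support,
      t ^ (i + j) * ι ((rep r i) ^ d ^ j * rep q j) := by
    conv_lhs => rw [hr, hq]
    rw [Finset.sum_mul_sum]
    exact Finset.sum_congr rfl fun i _ => Finset.sum_congr rfl fun j _ => key i j
  rw [hmul]
  rw [map_sum]
  simp only [map_sum, aux_rep_single ι t rep hrep]
  rw [Finset.sum_product]
  rw [Finset.sum_apply']
  simp only [Finset.sum_apply', Finsupp.single_apply]

end ring


/-- The tropical action of `q = Σ_i t^i·a_i ∈ R` on `γ ∈ Γ = ℤ ∪ {∞}`: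
`γ·q = min_i (d^i·γ + v(a_i))`, with `γ·0 = ∞`. Here `rep` gives the coefficient
sequence of an element of `R` with respect to the powers of `t`. -/
noncomputable def act {K : Type*} [Field K] {R : Type*} [Ring R]
    (v : K → WithTop ℤ) (rep : R ≃+ (ℕ →₀ K)) (d : ℕ)
    (γ : WithTop ℤ) (r : R) : WithTop ℤ :=
  (rep r).support.inf fun n => WithTop.map (fun g : ℤ => (d : ℤ) ^ n * g) γ + v (rep r n)

/-- the tropical action of `R` on `Γ = ℤ ∪ {∞}` satisfies:
(1) `γ·(r·q) = (γ·r)·q`; (2) `γ·(r + q) ≥ min(γ·r, γ·q)`; (3) `γ ↦ γ·r` is strictly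
increasing on `ℤ` for every nonzero `r`; (4) `∞·r = ∞` and `γ·0 = ∞`. -/
theorem stmt_12 (p k : ℕ) (hp : p.Prime) (hk : 1 ≤ k)
    {K : Type*} [Field K] [CharP K p]
    (v : K → WithTop ℤ)
    (hv0 : ∀ x, v x = ⊤ ↔ x = 0)
    (hvmul : ∀ x y, v (x * y) = v x + v y)
    (hvadd : ∀ x y, min (v x) (v y) ≤ v (x + y))
    (hvsurj : Function.Surjective v)
    {R : Type*} [Ring R] (ι : K →+* R) (t : R)
    (hcomm : ∀ a : K, t * ι (a ^ p ^ k) = ι a * t)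
    (rep : R ≃+ (ℕ →₀ K))
    (hrep : ∀ f : ℕ →₀ K, rep.symm f = f.sum fun n a => t ^ n * ι a)
    (d : ℕ) (hd : d = p ^ k) :
    (∀ (γ : WithTop ℤ) (r q : R),
        act v rep d γ (r * q) = act v rep d (act v rep d γ r) q) ∧
    (∀ (γ : WithTop ℤ) (r q : R),
        min (act v rep d γ r) (act v rep d γ q) ≤ act v rep d γ (r + q)) ∧
    (∀ r : R, r ≠ 0 → ∀ γ δ : ℤ, γ < δ →
        act v rep d (γ : WithTop ℤ) r < act v rep d (δ : WithTop ℤ) r) ∧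
    (∀ r : R, act v rep d ⊤ r = ⊤) ∧ (∀ γ : WithTop ℤ, act v rep d γ 0 = ⊤) := by
  classical
  have hd1 : 1 ≤ d := by rw [hd]; exact Nat.one_le_pow _ _ hp.pos
  have hcomm' : ∀ a : K, ι a * t = t * ι (a ^ d) := fun a => by
    rw [hd]; exact (hcomm a).symm
  have h4a : ∀ r : R, act v rep d ⊤ r = ⊤ := by
    intro r
    apply le_antisymm le_top
    apply Finset.le_inf
    intro n hn
    simp [WithTop.map_top, top_add]
  have h4b : ∀ γ : WithTop ℤ, act v rep d γ 0 = ⊤ := by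
    intro γ
    simp [act, map_zero]
  have act_le : ∀ (γ : WithTop ℤ) (r : R) (n : ℕ),
      act v rep d γ r ≤ WithTop.map (fun g : ℤ => (d : ℤ) ^ n * g) γ + v (rep r n) := by
    intro γ r n
    by_cases h : n ∈ (rep r).support
    · exact Finset.inf_le h
    · rw [Finsupp.notMem_support_iff.mp h, (hv0 0).mpr rfl, add_top]
      exact le_top
  have hsupp : ∀ r : R, r ≠ 0 → (rep r).support.Nonempty := by
    intro r hr
    rw [Finsupp.support_nonempty_iff]
    intro h
    exact hr (by rw [← rep.symm_apply_apply r, h, map_zero])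
  have h2 : ∀ (γ : WithTop ℤ) (r q : R),
      min (act v rep d γ r) (act v rep d γ q) ≤ act v rep d γ (r + q) := by
    intro γ r q
    apply Finset.le_inf
    intro n hn
    have hadd : rep (r + q) n = rep r n + rep q n := by rw [map_add]; rfl
    calc min (act v rep d γ r) (act v rep d γ q)
        ≤ min (WithTop.map (fun g : ℤ => (d : ℤ) ^ n * g) γ + v (rep r n))
            (WithTop.map (fun g : ℤ => (d : ℤ) ^ n * g) γ + v (rep q n)) :=
          min_le_min (act_le γ r n) (act_le γ q n)
      _ = WithTop.map (fun g : ℤ => (d : ℤ) ^ n * g) γ + min (v (rep r n)) (v (rep q n)) :=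
          min_add_add_left _ _ _
      _ ≤ WithTop.map (fun g : ℤ => (d : ℤ) ^ n * g) γ + v (rep (r + q) n) := by
          rw [hadd]; exact add_le_add le_rfl (hvadd _ _)
  have h3 : ∀ r : R, r ≠ 0 → ∀ γ δ : ℤ, γ < δ →
      act v rep d (γ : WithTop ℤ) r < act v rep d (δ : WithTop ℤ) r := by
    intro r hr γ δ hγδ
    obtain ⟨n, hn, hmin⟩ := Finset.exists_mem_eq_inf (rep r).support (hsupp r hr)
      (fun n => WithTop.map (fun g : ℤ => (d : ℤ) ^ n * g) (δ : WithTop ℤ) + v (rep r n))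
    have hvn : rep r n ≠ 0 := Finsupp.mem_support_iff.mp hn
    obtain ⟨a, ha'⟩ := WithTop.ne_top_iff_exists.mp (fun h => hvn ((hv0 _).mp h))
    have ha : v (rep r n) = (a : WithTop ℤ) := ha'.symm
    have hδ : act v rep d (δ : WithTop ℤ) r = (((d:ℤ)^n * δ + a : ℤ) : WithTop ℤ) := by
      show (rep r).support.inf _ = _
      rw [hmin, WithTop.map_coe, ha, ← WithTop.coe_add]
    calc act v rep d (γ : WithTop ℤ) r
        ≤ WithTop.map (fun g : ℤ => (d : ℤ) ^ n * g) (γ : WithTop ℤ) + v (rep r n) :=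
          act_le _ r n
      _ = (((d:ℤ)^n * γ + a : ℤ) : WithTop ℤ) := by
          rw [WithTop.map_coe, ha, ← WithTop.coe_add]
      _ < (((d:ℤ)^n * δ + a : ℤ) : WithTop ℤ) := by
          rw [WithTop.coe_lt_coe]
          have hp0 : (0:ℤ) < (d:ℤ)^n := pow_pos (by exact_mod_cast hd1) n
          nlinarith
      _ = act v rep d (δ : WithTop ℤ) r := hδ.symm
  refine ⟨?_, h2, h3, h4a, h4b⟩
  intro γ r q
  rcases eq_or_ne r 0 with rfl | hr
  · rw [zero_mul, h4b, h4a]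
  rcases eq_or_ne q 0 with rfl | hq
  · rw [mul_zero, h4b, h4b]
  induction γ using WithTop.recTopCoe with
  | top => rw [h4a, h4a, h4a]
  | coe g =>
    set F : ℕ → WithTop ℤ :=
      fun i => WithTop.map (fun x : ℤ => (d : ℤ) ^ i * x) (g : WithTop ℤ) + v (rep r i) with hF
    have hactF : act v rep d (g : WithTop ℤ) r = (rep r).support.inf F := rfl
    obtain ⟨i₀, hi₀S, hinfr, hstrictr⟩ := aux_exists_min F (rep r).support (hsupp r hr)
    have hri₀ : rep r i₀ ≠ 0 := Finsupp.mem_support_iff.mp hi₀S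
    obtain ⟨a₀, ha₀'⟩ := WithTop.ne_top_iff_exists.mp (fun h => hri₀ ((hv0 _).mp h))
    have ha₀ : v (rep r i₀) = (a₀ : WithTop ℤ) := ha₀'.symm
    set mr : ℤ := (d:ℤ)^i₀ * g + a₀ with hmrdef
    have hFval : ∀ (i : ℕ) (a : ℤ), v (rep r i) = (a : WithTop ℤ) →
        F i = (((d:ℤ)^i * g + a : ℤ) : WithTop ℤ) := by
      intro i a ha
      simp only [hF]
      rw [WithTop.map_coe, ha, ← WithTop.coe_add]
    have hinf_mr : (rep r).support.inf F = (mr : WithTop ℤ) := by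
      rw [hinfr, hFval i₀ a₀ ha₀]
    have hmr : act v rep d (g : WithTop ℤ) r = (mr : WithTop ℤ) := hactF.trans hinf_mr
    have hR1 : ∀ (i : ℕ) (a : ℤ), v (rep r i) = (a : WithTop ℤ) →
        mr ≤ (d:ℤ)^i * g + a := by
      intro i a ha
      have h := act_le (g : WithTop ℤ) r i
      rw [hmr, WithTop.map_coe, ha, ← WithTop.coe_add, WithTop.coe_le_coe] at h
      exact h
    have hR2 : ∀ (i : ℕ) (a : ℤ), i < i₀ → v (rep r i) = (a : WithTop ℤ) →
        mr < (d:ℤ)^i * g + a := by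
      intro i a hi ha
      have hiS : i ∈ (rep r).support := by
        rw [Finsupp.mem_support_iff]
        intro h
        rw [h, (hv0 0).mpr rfl] at ha
        exact WithTop.coe_ne_top ha.symm
      have h := hstrictr i hiS hi
      rw [hinf_mr, hFval i a ha, WithTop.coe_lt_coe] at h
      exact h
    -- now the q side, with respect to mr
    set G : ℕ → WithTop ℤ :=
      fun j => WithTop.map (fun x : ℤ => (d : ℤ) ^ j * x) (mr : WithTop ℤ) + v (rep q j) with hG
    have hactG : act v rep d (mr : WithTop ℤ) q = (rep q).support.inf G := rfl
    obtain ⟨j₀, hj₀T, hinfq, hstrictq⟩ := aux_exists_min G (rep q).support (hsupp q hq)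
    have hqj₀ : rep q j₀ ≠ 0 := Finsupp.mem_support_iff.mp hj₀T
    obtain ⟨b₀, hb₀'⟩ := WithTop.ne_top_iff_exists.mp (fun h => hqj₀ ((hv0 _).mp h))
    have hb₀ : v (rep q j₀) = (b₀ : WithTop ℤ) := hb₀'.symm
    set m : ℤ := (d:ℤ)^j₀ * mr + b₀ with hmdef
    have hGval : ∀ (j : ℕ) (b : ℤ), v (rep q j) = (b : WithTop ℤ) →
        G j = (((d:ℤ)^j * mr + b : ℤ) : WithTop ℤ) := by
      intro j b hb
      simp only [hG]
      rw [WithTop.map_coe, hb, ← WithTop.coe_add]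
    have hinf_m : (rep q).support.inf G = (m : WithTop ℤ) := by
      rw [hinfq, hGval j₀ b₀ hb₀]
    have hm : act v rep d (mr : WithTop ℤ) q = (m : WithTop ℤ) := hactG.trans hinf_m
    have hQ1 : ∀ (j : ℕ) (b : ℤ), v (rep q j) = (b : WithTop ℤ) →
        m ≤ (d:ℤ)^j * mr + b := by
      intro j b hb
      have h := act_le (mr : WithTop ℤ) q j
      rw [hm, WithTop.map_coe, hb, ← WithTop.coe_add, WithTop.coe_le_coe] at h
      exact h
    have hQ2 : ∀ (j : ℕ) (b : ℤ), j < j₀ → v (rep q j) = (b : WithTop ℤ) →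
        m < (d:ℤ)^j * mr + b := by
      intro j b hj hb
      have hjT : j ∈ (rep q).support := by
        rw [Finsupp.mem_support_iff]
        intro h
        rw [h, (hv0 0).mpr rfl] at hb
        exact WithTop.coe_ne_top hb.symm
      have h := hstrictq j hjT hj
      rw [hinf_m, hGval j b hb, WithTop.coe_lt_coe] at h
      exact h
    have hdj : ∀ j : ℕ, (0:ℤ) < (d:ℤ)^j := fun j => pow_pos (by exact_mod_cast hd1) j
    have key : ∀ (i j : ℕ) (a b : ℤ), v (rep r i) = (a : WithTop ℤ) →
        v (rep q j) = (b : WithTop ℤ) →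
        m ≤ (d:ℤ)^j * ((d:ℤ)^i * g + a) + b ∧
        ((i < i₀ ∨ j < j₀) → m < (d:ℤ)^j * ((d:ℤ)^i * g + a) + b) := by
      intro i j a b ha hb
      have h1 : mr ≤ (d:ℤ)^i * g + a := hR1 i a ha
      have h2 : m ≤ (d:ℤ)^j * mr + b := hQ1 j b hb
      constructor
      · nlinarith [mul_le_mul_of_nonneg_left h1 (hdj j).le]
      · rintro (hi | hj)
        · have h3 : mr < (d:ℤ)^i * g + a := hR2 i a hi ha
          nlinarith [mul_lt_mul_of_pos_left h3 (hdj j)]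
        · have h3 : m < (d:ℤ)^j * mr + b := hQ2 j b hj hb
          nlinarith [mul_le_mul_of_nonneg_left h1 (hdj j).le]
    have hvc : ∀ (i j : ℕ) (a b : ℤ), v (rep r i) = (a : WithTop ℤ) →
        v (rep q j) = (b : WithTop ℤ) →
        v ((rep r i) ^ d ^ j * rep q j) = (((d:ℤ)^j * a + b : ℤ) : WithTop ℤ) := by
      intro i j a b ha hb
      rw [hvmul, aux_v_pow hv0 hvmul ha (d ^ j), hb, ← WithTop.coe_add]
      congr 1
    have hm_eq : m = (d:ℤ)^(i₀ + j₀) * g + ((d:ℤ)^j₀ * a₀ + b₀) := by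
      rw [hmdef, hmrdef, pow_add]
      ring
    have hrepmul := aux_rep_mul ι t d hcomm' rep hrep r q
    rw [hmr, hm]
    -- upper bound
    have hub : act v rep d (g : WithTop ℤ) (r * q) ≤ (m : WithTop ℤ) := by
      have hvsum : v (rep (r * q) (i₀ + j₀)) = (((d:ℤ)^j₀ * a₀ + b₀ : ℤ) : WithTop ℤ) := by
        rw [hrepmul]
        rw [aux_v_sum_eq hv0 hvmul hvadd _ _ (i₀, j₀)
          (Finset.mem_product.mpr ⟨hi₀S, hj₀T⟩) ?_]
        · rw [if_pos rfl]
          exact hvc i₀ j₀ a₀ b₀ ha₀ hb₀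
        · rintro ⟨i, j⟩ hmem hne
          rw [if_pos rfl, hvc i₀ j₀ a₀ b₀ ha₀ hb₀]
          by_cases hij : i + j = i₀ + j₀
          · rw [if_pos hij]
            obtain ⟨hiS, hjT⟩ := Finset.mem_product.mp hmem
            have hri : rep r i ≠ 0 := Finsupp.mem_support_iff.mp hiS
            have hqj : rep q j ≠ 0 := Finsupp.mem_support_iff.mp hjT
            obtain ⟨a, ha'⟩ := WithTop.ne_top_iff_exists.mp (fun h => hri ((hv0 _).mp h))
            obtain ⟨b, hb'⟩ := WithTop.ne_top_iff_exists.mp (fun h => hqj ((hv0 _).mp h))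
            have ha : v (rep r i) = (a : WithTop ℤ) := ha'.symm
            have hb : v (rep q j) = (b : WithTop ℤ) := hb'.symm
            rw [hvc i j a b ha hb, WithTop.coe_lt_coe]
            have hlt : i < i₀ ∨ j < j₀ := by
              have hne' : i ≠ i₀ ∨ j ≠ j₀ := by
                by_contra hcon
                push_neg at hcon
                exact hne (Prod.ext hcon.1 hcon.2)
              omega
            have hstrict := (key i j a b ha hb).2 hlt
            have hid : (d:ℤ)^j * ((d:ℤ)^i * g + a) + b
                = (d:ℤ)^(i₀ + j₀) * g + ((d:ℤ)^j * a + b) := by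
              rw [← hij, pow_add]
              ring
            rw [hid] at hstrict
            linarith [hm_eq]
          · rw [if_neg hij, (hv0 0).mpr rfl]
            exact WithTop.coe_lt_top _
      have h := act_le (g : WithTop ℤ) (r * q) (i₀ + j₀)
      rw [hvsum, WithTop.map_coe, ← WithTop.coe_add] at h
      exact le_of_le_of_eq h (by exact_mod_cast hm_eq.symm)
    -- lower bound
    have hlb : (m : WithTop ℤ) ≤ act v rep d (g : WithTop ℤ) (r * q) := by
      apply Finset.le_inf
      intro n hn
      rw [WithTop.map_coe, hrepmul n]
      have hsne : ((rep r).support ×ˢ (rep q).support).Nonempty :=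
        Finset.Nonempty.product (hsupp r hr) (hsupp q hq)
      have h1 := aux_v_sum_ge hv0 hvadd ((rep r).support ×ˢ (rep q).support)
        (fun ij => if ij.1 + ij.2 = n then (rep r ij.1) ^ d ^ ij.2 * rep q ij.2 else 0)
      obtain ⟨ij, hijmem, hijinf⟩ := Finset.exists_mem_eq_inf
        ((rep r).support ×ˢ (rep q).support) hsne
        (fun ij => v (if ij.1 + ij.2 = n then (rep r ij.1) ^ d ^ ij.2 * rep q ij.2 else 0))
      rw [hijinf] at h1
      refine le_trans ?_ (add_le_add le_rfl h1)
      by_cases hij : ij.1 + ij.2 = n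
      · rw [if_pos hij]
        obtain ⟨hiS, hjT⟩ := Finset.mem_product.mp hijmem
        have hri : rep r ij.1 ≠ 0 := Finsupp.mem_support_iff.mp hiS
        have hqj : rep q ij.2 ≠ 0 := Finsupp.mem_support_iff.mp hjT
        obtain ⟨a, ha'⟩ := WithTop.ne_top_iff_exists.mp (fun h => hri ((hv0 _).mp h))
        obtain ⟨b, hb'⟩ := WithTop.ne_top_iff_exists.mp (fun h => hqj ((hv0 _).mp h))
        have ha : v (rep r ij.1) = (a : WithTop ℤ) := ha'.symm
        have hb : v (rep q ij.2) = (b : WithTop ℤ) := hb'.symm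
        rw [hvc ij.1 ij.2 a b ha hb, ← WithTop.coe_add, WithTop.coe_le_coe]
        have hkey := (key ij.1 ij.2 a b ha hb).1
        have hid : (d:ℤ)^ij.2 * ((d:ℤ)^ij.1 * g + a) + b
            = (d:ℤ)^n * g + ((d:ℤ)^ij.2 * a + b) := by
          rw [← hij, pow_add]
          ring
        linarith [hid ▸ hkey]
      · rw [if_neg hij, (hv0 0).mpr rfl, add_top]
        exact le_top
    exact le_antisymm hub hlb
end

section
/- Let M be an abelian group with an ultrametric valuation-like structure, and let A, B be subgroups with B ⊆ A such that A and B are m-immediate (rv(A \ P_γ) = rv(B \ P_γ) for some γ, where rv denotes the class of the equivalence x RV y ⟺ v(x) = v(y) < v(x−y) and P_γ is the closed ball of radius γ around 0). Then A + P_γ = B + P_γ. -/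
open Pointwise

/-- in a valued abelian group `(M, v)` with value set `ℤ ∪
{∞}`, if `B ⊆ A`
are subgroups with `rv(A \ P_γ) = rv(B \ P_γ)` (m-immediate at `γ`, where `x RV y` iff
`v(x) = v(y) < v(x − y)` and `P_γ` is the closed ball of radius `γ` around `0`), then
`A + P_γ = B + P_γ`. -/
theorem stmt_14 {M : Type*} [AddCommGroup M] (v : M → WithTop ℤ)
    (hv0 : ∀ x, v x = ⊤ ↔ x = 0)
    (hvadd : ∀ x y, min (v x) (v y) ≤ v (x + y))
    (hvneg : ∀ x, v (-x) = v x)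
    (A B : AddSubgroup M) (hBA : B ≤ A) (γ : ℤ)
    (h1 : ∀ a ∈ A, v a < (γ : WithTop ℤ) → ∃ b ∈ B, v b = v a ∧ v a < v (a - b))
    (h2 : ∀ b ∈ B, v b < (γ : WithTop ℤ) → ∃ a ∈ A, v a = v b ∧ v b < v (b - a)) :
    (A : Set M) + {x : M | (γ : WithTop ℤ) ≤ v x} =
      (B : Set M) + {x : M | (γ : WithTop ℤ) ≤ v x} := by
  have key : ∀ n : ℕ, ∀ a ∈ A, ((γ - n : ℤ) : WithTop ℤ) ≤ v a →
      a ∈ (B : Set M) + {x : M | (γ : WithTop ℤ) ≤ v x} := by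
    intro n
    induction n with
    | zero =>
      intro a _ ha'
      exact ⟨0, B.zero_mem, a, by simpa using ha', zero_add a⟩
    | succ n ih =>
      intro a ha hle
      by_cases hγ : (γ : WithTop ℤ) ≤ v a
      · exact ⟨0, B.zero_mem, a, hγ, zero_add a⟩
      · push_neg at hγ
        obtain ⟨b, hb, hvb, hlt⟩ := h1 a ha hγ
        have hab : a - b ∈ A := A.sub_mem ha (hBA hb)
        have hlt' : ((γ - (n + 1) : ℤ) : WithTop ℤ) < v (a - b) :=
          lt_of_le_of_lt (by exact_mod_cast hle) hlt
        have hle' : ((γ - n : ℤ) : WithTop ℤ) ≤ v (a - b) := by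
          rcases eq_or_ne (v (a - b)) ⊤ with h | h
          · simp [h]
          · lift v (a - b) to ℤ using h with m
            have : (γ - (n + 1) : ℤ) < m := by exact_mod_cast hlt'
            exact_mod_cast (by omega : (γ - n : ℤ) ≤ m)
        obtain ⟨b', hb', p, hp, hsum⟩ := ih (a - b) hab hle'
        exact ⟨b + b', B.add_mem hb hb', p, hp, by
          show b + b' + p = a; rw [add_assoc]; show b + (b' + p) = a; rw [show b' + p = a - b from hsum, add_sub_cancel]⟩
  ext x
  constructor
  · rintro ⟨a, ha, p, hp, rfl⟩
    obtain ⟨b, hb, q, hq, rfl⟩ : a ∈ (B : Set M) + {x : M | (γ : WithTop ℤ) ≤ v x} := by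
      rcases eq_or_ne (v a) ⊤ with h | h
      · exact key 0 a ha (by simp [h])
      · lift v a to ℤ using h with m hm
        refine key (γ - m).toNat a ha ?_
        rw [← hm]
        exact_mod_cast (by omega : (γ - (γ - m).toNat : ℤ) ≤ m)
    refine ⟨b, hb, q + p, ?_, (add_assoc b q p).symm⟩
    exact le_trans (le_min hq hp) (hvadd q p)
  · rintro ⟨b, hb, p, hp, rfl⟩
    exact ⟨b, hBA hb, p, hp, rfl⟩
end

section
/- Let (M, v) be a valued module with value set ℤ ∪ {∞}, and let A, B, C be subgroups such that A ≈ B (m-immediate) and C is a pseudo-complement of A (i.e., M = A + C + P_γ for some γ and the value sets vA and vC intersect only in a final segment [δ, ∞]). Then C is also a pseudo-complement of B. -/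
/-- Subgroups `A`, `B` are m-immediate (`A ≈ B`): for some `γ`, the nonzero `rv`-classes
of elements of value `< γ` of `A` and of `B` coincide (`x RV y` iff
`v(x) = v(y) < v(x − y)`). -/
def MImm {M : Type*} [AddCommGroup M] (v : M → WithTop ℤ) (A B : AddSubgroup M) : Prop :=
  ∃ γ : ℤ, (∀ a ∈ A, v a < (γ : WithTop ℤ) → ∃ b ∈ B, v b = v a ∧ v a < v (a - b)) ∧
    (∀ b ∈ B, v b < (γ : WithTop ℤ) → ∃ a ∈ A, v a = v b ∧ v b < v (b - a))

/-- Subgroups `A`, `B` are pseudo-orthogonal (`A ∥ B`): `vA ∩ vB` is contained in a final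
segment `[γ, ∞]`. -/
def POrth {M : Type*} [AddCommGroup M] (v : M → WithTop ℤ) (A B : AddSubgroup M) : Prop :=
  ∃ γ : ℤ, ∀ a ∈ A, ∀ b ∈ B, v a = v b → (γ : WithTop ℤ) ≤ v a

/-- `C` is a pseudo-complement of `A`: `M = A + C + P_γ` for some `γ`, and `A ∥ C`. -/
def PComp {M : Type*} [AddCommGroup M] (v : M → WithTop ℤ) (A C : AddSubgroup M) : Prop :=
  (∃ γ : ℤ, ∀ x : M, ∃ a ∈ A, ∃ c ∈ C, (γ : WithTop ℤ) ≤ v (x - a - c)) ∧ POrth v A C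

private lemma vsub' {M : Type*} [AddCommGroup M] (v : M → WithTop ℤ)
    (hvadd : ∀ x y, min (v x) (v y) ≤ v (x + y))
    (hvneg : ∀ x, v (-x) = v x) (x y : M) : min (v x) (v y) ≤ v (x - y) := by
  have h := hvadd x (-y)
  rw [hvneg] at h
  simpa [sub_eq_add_neg] using h

private lemma vadd_le' {M : Type*} [AddCommGroup M] (v : M → WithTop ℤ)
    (hvadd : ∀ x y, min (v x) (v y) ≤ v (x + y))
    (hvneg : ∀ x, v (-x) = v x) {x y : M} (hne : v x ≠ v y) : v (x + y) ≤ v x := by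
  by_contra h
  push_neg at h
  have hy : v x ≤ v y := by
    have h1 : min (v (x + y)) (v x) ≤ v y := by
      have := vsub' v hvadd hvneg (x + y) x
      simpa using this
    have : min (v (x+y)) (v x) = v x := min_eq_right h.le
    rw [this] at h1; exact h1
  have hx : v y ≤ v x := by
    have h1 : min (v (x + y)) (v y) ≤ v x := by
      have := vsub' v hvadd hvneg (x + y) y
      simpa using this
    rcases le_or_gt (v y) (v (x+y)) with h2 | h2
    · rw [min_eq_right h2] at h1; exact h1
    · rw [min_eq_left h2.le] at h1
      exact absurd h (not_lt.mpr h1)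
  exact hne (le_antisymm hy hx)

private lemma coe_add_one_le' {m : ℤ} {x : WithTop ℤ} (h : (m : WithTop ℤ) < x) :
    ((m + 1 : ℤ) : WithTop ℤ) ≤ x := by
  cases x with
  | top => exact le_top
  | coe n =>
    have : m < n := by exact_mod_cast h
    exact_mod_cast this

/-- in a valued module `(M, v)` with values in `ℤ ∪ {∞}`, if `A ≈ B`
(m-immediate) and `C` is a pseudo-complement of `A`, then `C` is a pseudo-complement
of `B`. -/
theorem stmt_15 {M : Type*} [AddCommGroup M] (v : M → WithTop ℤ)
    (hv0 : ∀ x, v x = ⊤ ↔ x = 0)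
    (hvadd : ∀ x y, min (v x) (v y) ≤ v (x + y))
    (hvneg : ∀ x, v (-x) = v x)
    (hvsurj : Function.Surjective v)
    (A B C : AddSubgroup M) (hAB : MImm v A B) (hC : PComp v A C) :
    PComp v B C := by
  obtain ⟨γ₀, hAB1, hAB2⟩ := hAB
  obtain ⟨⟨γ₁, hdec⟩, γ₂, horth⟩ := hC
  set γs : ℤ := min γ₀ (min γ₁ γ₂) with hγs
  have hγs0 : γs ≤ γ₀ := min_le_left _ _
  have hγs1 : γs ≤ γ₁ := (min_le_right _ _).trans (min_le_left _ _)
  have hγs2 : γs ≤ γ₂ := (min_le_right _ _).trans (min_le_right _ _)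
  -- key claim by induction
  have claim : ∀ k : ℕ, ∀ a ∈ A, ((γs - k : ℤ) : WithTop ℤ) ≤ v a →
      ∃ b ∈ B, ∃ c ∈ C, ((γs : ℤ) : WithTop ℤ) ≤ v (a - b - c) := by
    intro k
    induction k with
    | zero =>
      intro a ha hva
      exact ⟨0, zero_mem _, 0, zero_mem _, by simpa using hva⟩
    | succ k IH =>
      intro a ha hva
      by_cases hk : ((γs - k : ℤ) : WithTop ℤ) ≤ v a
      · exact IH a ha hk
      push_neg at hk
      have hne : v a ≠ ⊤ := ne_top_of_lt hk
      obtain ⟨m, hm⟩ := WithTop.ne_top_iff_exists.mp hne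
      have hmlt : m < γs - k := by
        rw [← hm] at hk; exact_mod_cast hk
      have hmge : γs - ((k : ℤ) + 1) ≤ m := by
        rw [← hm] at hva
        exact_mod_cast hva
      have hvaγ0 : v a < (γ₀ : WithTop ℤ) := by
        rw [← hm]
        exact_mod_cast lt_of_lt_of_le hmlt (by omega)
      obtain ⟨b₁, hb₁B, hvb₁, hlt⟩ := hAB1 a ha hvaγ0
      obtain ⟨a₁, ha₁A, c₁, hc₁C, hp⟩ := hdec (a - b₁)
      -- v (a - b₁) ≥ γs - k
      have hr : ((γs - k : ℤ) : WithTop ℤ) ≤ v (a - b₁) := by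
        rw [← hm] at hlt
        have h1 := coe_add_one_le' hlt
        refine le_trans ?_ h1
        exact_mod_cast (by omega : γs - k ≤ m + 1)
      -- v (a₁ + c₁) ≥ γs - k
      have hsum : ((γs - k : ℤ) : WithTop ℤ) ≤ v (a₁ + c₁) := by
        have heq : (a - b₁) - (a - b₁ - a₁ - c₁) = a₁ + c₁ := by abel
        have h1 := vsub' v hvadd hvneg (a - b₁) (a - b₁ - a₁ - c₁)
        rw [heq] at h1
        refine le_trans (le_min hr (le_trans ?_ hp)) h1
        exact_mod_cast (by omega : γs - k ≤ γ₁)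
      have ha₁v : ((γs - k : ℤ) : WithTop ℤ) ≤ v a₁ := by
        by_cases heq : v a₁ = v c₁
        · refine le_trans ?_ (horth a₁ ha₁A c₁ hc₁C heq)
          exact_mod_cast (by omega : γs - k ≤ γ₂)
        · exact le_trans hsum (vadd_le' v hvadd hvneg heq)
      obtain ⟨b₂, hb₂B, c₂, hc₂C, h2⟩ := IH a₁ ha₁A ha₁v
      refine ⟨b₁ + b₂, add_mem hb₁B hb₂B, c₁ + c₂, add_mem hc₁C hc₂C, ?_⟩
      have heq2 : a - (b₁ + b₂) - (c₁ + c₂) = (a - b₁ - a₁ - c₁) + (a₁ - b₂ - c₂) := by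
        abel
      rw [heq2]
      refine le_trans (le_min (le_trans ?_ hp) h2) (hvadd _ _)
      exact_mod_cast hγs1
  -- approximation of any element of A
  have approx : ∀ a ∈ A, ∃ b ∈ B, ∃ c ∈ C, ((γs : ℤ) : WithTop ℤ) ≤ v (a - b - c) := by
    intro a ha
    rcases eq_or_ne (v a) ⊤ with h | h
    · exact claim 0 a ha (by rw [h]; exact le_top)
    · obtain ⟨m, hm⟩ := WithTop.ne_top_iff_exists.mp h
      refine claim (γs - m).toNat a ha ?_
      rw [← hm]
      have h1 : γs - m ≤ ((γs - m).toNat : ℤ) := Int.self_le_toNat _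
      exact_mod_cast (by omega : γs - ((γs - m).toNat : ℤ) ≤ m)
  constructor
  · refine ⟨γs, fun x => ?_⟩
    obtain ⟨a, haA, c, hcC, hx⟩ := hdec x
    obtain ⟨b, hbB, c', hc'C, hbc⟩ := approx a haA
    refine ⟨b, hbB, c + c', add_mem hcC hc'C, ?_⟩
    have heq : x - b - (c + c') = (x - a - c) + (a - b - c') := by abel
    rw [heq]
    refine le_trans (le_min (le_trans ?_ hx) hbc) (hvadd _ _)
    exact_mod_cast hγs1
  · refine ⟨min γ₀ γ₂, fun b hb c hc heq => ?_⟩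
    by_contra h
    push_neg at h
    have hbγ0 : v b < (γ₀ : WithTop ℤ) :=
      lt_of_lt_of_le h (by exact_mod_cast (min_le_left γ₀ γ₂))
    obtain ⟨a, haA, hva, _⟩ := hAB2 b hb hbγ0
    have h2 := horth a haA c hc (hva.trans heq)
    rw [hva] at h2
    exact absurd h2 (not_le.mpr (lt_of_lt_of_le h (by exact_mod_cast (min_le_right γ₀ γ₂))))
end

section
/- Let (M, v) be a valued module and A, A', B, B' subgroups with A ≈ A', B ≈ B', and A ∥ B (pseudo-orthogonal). Then A' ∥ B', and every pseudo-complement of A + B is a pseudo-complement of A' + B'. -/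
section helpers

variable {M : Type*} [AddCommGroup M] (v : M → WithTop ℤ)

lemma vsub_min (hvadd : ∀ x y, min (v x) (v y) ≤ v (x + y))
    (hvneg : ∀ x, v (-x) = v x) (x y : M) : min (v x) (v y) ≤ v (x - y) := by
  have h := hvadd x (-y)
  rw [hvneg] at h
  rwa [sub_eq_add_neg]

lemma vadd_left (hvadd : ∀ x y, min (v x) (v y) ≤ v (x + y))
    (hvneg : ∀ x, v (-x) = v x) {x y : M} (h : v x < v y) : v (x + y) = v x := by
  have h1 : min (v x) (v y) ≤ v (x + y) := hvadd x y
  rw [min_eq_left h.le] at h1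
  refine le_antisymm ?_ h1
  by_contra hc
  push_neg at hc
  have h2 : min (v (x + y)) (v y) ≤ v x := by
    have h3 := vsub_min v hvadd hvneg (x + y) y
    rwa [add_sub_cancel_right] at h3
  exact absurd h2 (not_le.mpr (lt_min hc h))

end helpers

/-- in a valued module `(M, v)`, if `A ≈ A'`, `B ≈ B'` and `A ∥ B`, then
`A' ∥ B'` and every pseudo-complement of `A + B` is a pseudo-complement of `A' + B'`. -/
theorem stmt_16 {M : Type*} [AddCommGroup M] (v : M → WithTop ℤ)
    (hv0 : ∀ x, v x = ⊤ ↔ x = 0)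
    (hvadd : ∀ x y, min (v x) (v y) ≤ v (x + y))
    (hvneg : ∀ x, v (-x) = v x)
    (hvsurj : Function.Surjective v)
    (A A' B B' : AddSubgroup M)
    (hA : MImm v A A') (hB : MImm v B B') (hAB : POrth v A B) :
    POrth v A' B' ∧
      ∀ C : AddSubgroup M, PComp v (A ⊔ B) C → PComp v (A' ⊔ B') C := by
  obtain ⟨γA, hA1, hA2⟩ := hA
  obtain ⟨γB, hB1, hB2⟩ := hB
  obtain ⟨γAB, hAB⟩ := hAB
  have hsub := vsub_min v hvadd hvneg
  set Γ : ℤ := min γA (min γB γAB) with hΓdef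
  have hΓA : (Γ : WithTop ℤ) ≤ (γA : WithTop ℤ) := by
    rw [hΓdef]; exact_mod_cast min_le_left _ _
  have hΓB : (Γ : WithTop ℤ) ≤ (γB : WithTop ℤ) := by
    rw [hΓdef]; exact_mod_cast (min_le_right _ _).trans (min_le_left _ _)
  have hΓAB : (Γ : WithTop ℤ) ≤ (γAB : WithTop ℤ) := by
    rw [hΓdef]; exact_mod_cast (min_le_right _ _).trans (min_le_right _ _)
  have porth' : ∀ a' ∈ A', ∀ b' ∈ B', v a' = v b' → (Γ : WithTop ℤ) ≤ v a' := by
    intro a' ha' b' hb' hv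
    by_contra hc
    push_neg at hc
    obtain ⟨a, ha, hva, _⟩ := hA2 a' ha' (hc.trans_le hΓA)
    obtain ⟨b, hb, hvb, _⟩ := hB2 b' hb' (by rw [← hv]; exact hc.trans_le hΓB)
    have hle := hAB a ha b hb (by rw [hva, hvb, hv])
    rw [hva] at hle
    exact absurd hΓAB (not_le.mpr (hle.trans_lt hc))
  refine ⟨⟨Γ, porth'⟩, ?_⟩
  intro C hC
  obtain ⟨⟨δ, hdens⟩, ⟨γO, hO⟩⟩ := hC
  have fwd : ∀ s ∈ A ⊔ B, v s < (Γ : WithTop ℤ) →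
      ∃ s' ∈ A' ⊔ B', v s' = v s ∧ v s < v (s - s') := by
    intro s hs hlt
    rw [AddSubgroup.mem_sup] at hs
    obtain ⟨a, ha, b, hb, rfl⟩ := hs
    rcases lt_trichotomy (v a) (v b) with h | h | h
    · have hvs : v (a + b) = v a := vadd_left v hvadd hvneg h
      obtain ⟨a', ha', hva', hlta⟩ := hA1 a ha (by rw [← hvs]; exact hlt.trans_le hΓA)
      refine ⟨a', AddSubgroup.mem_sup_left ha', by rw [hva', hvs], ?_⟩
      have heq : a + b - a' = (a - a') + b := by abel
      rw [heq, hvs]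
      calc v a < min (v (a - a')) (v b) := lt_min hlta h
        _ ≤ v ((a - a') + b) := hvadd _ _
    · exfalso
      have h1 := hAB a ha b hb h
      have h2 : v a ≤ v (a + b) := by
        have h3 := hvadd a b; rwa [h, min_self, ← h] at h3
      exact absurd hΓAB (not_le.mpr ((h1.trans h2).trans_lt hlt))
    · have hvs : v (a + b) = v b := by
        rw [add_comm]; exact vadd_left v hvadd hvneg h
      obtain ⟨b', hb', hvb', hltb⟩ := hB1 b hb (by rw [← hvs]; exact hlt.trans_le hΓB)
      refine ⟨b', AddSubgroup.mem_sup_right hb', by rw [hvb', hvs], ?_⟩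
      have heq : a + b - b' = (b - b') + a := by abel
      rw [heq, hvs]
      calc v b < min (v (b - b')) (v a) := lt_min hltb h
        _ ≤ v ((b - b') + a) := hvadd _ _
  set Θ : ℤ := min Γ γO with hΘdef
  have hΘΓ : (Θ : WithTop ℤ) ≤ (Γ : WithTop ℤ) := by
    rw [hΘdef]; exact_mod_cast min_le_left _ _
  have hΘO : (Θ : WithTop ℤ) ≤ (γO : WithTop ℤ) := by
    rw [hΘdef]; exact_mod_cast min_le_right _ _
  have porthC : ∀ s' ∈ A' ⊔ B', ∀ c ∈ C, v s' = v c → (Θ : WithTop ℤ) ≤ v s' := by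
    intro s' hs' c hc hv
    by_contra hcon
    push_neg at hcon
    rw [AddSubgroup.mem_sup] at hs'
    obtain ⟨a', ha', b', hb', rfl⟩ := hs'
    rcases lt_trichotomy (v a') (v b') with h | h | h
    · have hvs : v (a' + b') = v a' := vadd_left v hvadd hvneg h
      obtain ⟨a, ha, hva, _⟩ := hA2 a' ha'
        (by rw [← hvs]; exact hcon.trans_le (hΘΓ.trans hΓA))
      have hle := hO a (AddSubgroup.mem_sup_left ha) c hc (by rw [hva, ← hvs, hv])
      rw [hva, ← hvs] at hle
      exact absurd hΘO (not_le.mpr (hle.trans_lt hcon))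
    · have h1 := porth' a' ha' b' hb' h
      have h2 : v a' ≤ v (a' + b') := by
        have h3 := hvadd a' b'; rwa [h, min_self, ← h] at h3
      exact absurd hΘΓ (not_le.mpr ((h1.trans h2).trans_lt hcon))
    · have hvs : v (a' + b') = v b' := by
        rw [add_comm]; exact vadd_left v hvadd hvneg h
      obtain ⟨b, hb, hvb, _⟩ := hB2 b' hb'
        (by rw [← hvs]; exact hcon.trans_le (hΘΓ.trans hΓB))
      have hle := hO b (AddSubgroup.mem_sup_right hb) c hc (by rw [hvb, ← hvs, hv])
      rw [hvb, ← hvs] at hle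
      exact absurd hΘO (not_le.mpr (hle.trans_lt hcon))
  set Δ : ℤ := min δ Θ with hΔdef
  have hΔδ : (Δ : WithTop ℤ) ≤ (δ : WithTop ℤ) := by
    rw [hΔdef]; exact_mod_cast min_le_left _ _
  have hΔΘ : (Δ : WithTop ℤ) ≤ (Θ : WithTop ℤ) := by
    rw [hΔdef]; exact_mod_cast min_le_right _ _
  have base : ∀ s : M, (Δ : WithTop ℤ) ≤ v s → ∀ c ∈ C, ∀ p : M, (δ : WithTop ℤ) ≤ v p →
      ∃ s' ∈ A' ⊔ B', ∃ c' ∈ C, (Δ : WithTop ℤ) ≤ v (s + c + p - s' - c') := by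
    intro s hvs c hc p hvp
    refine ⟨0, zero_mem _, c, hc, ?_⟩
    have heq : s + c + p - 0 - c = s + p := by abel
    rw [heq]
    exact le_trans (le_min hvs (hΔδ.trans hvp)) (hvadd s p)
  have key : ∀ n : ℕ, ∀ s ∈ A ⊔ B, ((Δ - n : ℤ) : WithTop ℤ) ≤ v s → ∀ c ∈ C, ∀ p : M,
      (δ : WithTop ℤ) ≤ v p →
      ∃ s' ∈ A' ⊔ B', ∃ c' ∈ C, (Δ : WithTop ℤ) ≤ v (s + c + p - s' - c') := by
    intro n
    induction n with
    | zero =>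
      intro s _ hvs c hc p hvp
      exact base s (by simpa using hvs) c hc p hvp
    | succ n ih =>
      intro s hs hvs c hc p hvp
      rcases le_or_gt (Δ : WithTop ℤ) (v s) with hge | hlt
      · exact base s hge c hc p hvp
      · obtain ⟨s'₁, hs'₁, hvs'₁, hlts⟩ := fwd s hs (hlt.trans_le (hΔΘ.trans hΘΓ))
        set x₁ := s - s'₁ + p with hx₁
        obtain ⟨s₁, hs₁, c₁, hc₁, hp₁⟩ := hdens x₁
        set p₁ := x₁ - s₁ - c₁ with hp₁def
        have hvx₁ : v s < v x₁ := by
          calc v s < min (v (s - s'₁)) (v p) :=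
                lt_min hlts (lt_of_lt_of_le (hlt.trans_le hΔδ) hvp)
            _ ≤ v x₁ := hvadd _ _
        have hs₁v : ((Δ - n : ℤ) : WithTop ℤ) ≤ v s₁ := by
          rcases le_or_gt (Δ : WithTop ℤ) (v s₁) with h1 | h1
          · refine le_trans ?_ h1
            exact_mod_cast sub_le_self Δ (by positivity)
          · have hnot : v s < v s₁ := by
              by_contra hcon
              push_neg at hcon
              have hsum : v s₁ < v (s₁ + c₁) := by
                have h2 : min (v x₁) (v p₁) ≤ v (s₁ + c₁) := by
                  have heq2 : s₁ + c₁ = x₁ - p₁ := by rw [hp₁def]; abel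
                  rw [heq2]; exact hsub x₁ p₁
                calc v s₁ ≤ v s := hcon
                  _ < min (v x₁) (v p₁) :=
                      lt_min hvx₁ (lt_of_lt_of_le (hlt.trans_le hΔδ) hp₁)
                  _ ≤ v (s₁ + c₁) := h2
              have hvc₁ : v c₁ = v s₁ := by
                have hle1 : v s₁ ≤ v c₁ := by
                  by_contra hcc
                  push_neg at hcc
                  have h4 : min (v (s₁ + c₁)) (v s₁) ≤ v c₁ := by
                    have h5 := hsub (s₁ + c₁) s₁
                    rwa [add_sub_cancel_left] at h5
                  exact absurd h4 (not_le.mpr (lt_min (hcc.trans hsum) hcc))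
                have hle2 : v c₁ ≤ v s₁ := by
                  by_contra hcc
                  push_neg at hcc
                  have h4 : min (v (s₁ + c₁)) (v c₁) ≤ v s₁ := by
                    have h5 := hsub (s₁ + c₁) c₁
                    rwa [add_sub_cancel_right] at h5
                  exact absurd h4 (not_le.mpr (lt_min hsum hcc))
                exact le_antisymm hle2 hle1
              have hle := hO s₁ hs₁ c₁ hc₁ hvc₁.symm
              exact absurd (hΔΘ.trans hΘO) (not_le.mpr ((hle.trans hcon).trans_lt hlt))
            have hstop : v s ≠ ⊤ := hlt.ne_top
            have hs₁top : v s₁ ≠ ⊤ := h1.ne_top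
            obtain ⟨k, hk⟩ := WithTop.ne_top_iff_exists.mp hstop
            obtain ⟨k₁, hk₁⟩ := WithTop.ne_top_iff_exists.mp hs₁top
            rw [← hk₁]
            rw [← hk] at hvs
            rw [← hk, ← hk₁] at hnot
            have e1 : (Δ : ℤ) - ((n : ℤ) + 1) ≤ k := by exact_mod_cast hvs
            have e2 : k < k₁ := by exact_mod_cast hnot
            have e3 : (Δ : ℤ) - (n : ℤ) ≤ k₁ := by omega
            exact_mod_cast e3
        have hx₁eq : s₁ + c₁ + p₁ = x₁ := by rw [hp₁def]; abel
        obtain ⟨s'₂, hs'₂, c'₂, hc'₂, hfin⟩ := ih s₁ hs₁ hs₁v c₁ hc₁ p₁ hp₁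
        refine ⟨s'₁ + s'₂, add_mem hs'₁ hs'₂, c + c'₂, add_mem hc hc'₂, ?_⟩
        have heq4 : s + c + p - (s'₁ + s'₂) - (c + c'₂) = s₁ + c₁ + p₁ - s'₂ - c'₂ := by
          rw [hx₁eq, hx₁]; abel
        rw [heq4]
        exact hfin
  refine ⟨⟨Δ, ?_⟩, ⟨Θ, porthC⟩⟩
  intro x
  obtain ⟨s, hs, c, hc, hxp⟩ := hdens x
  set p := x - s - c with hpdef
  have hxeq : s + c + p - 0 = x := by rw [hpdef]; abel
  rcases le_or_gt (Δ : WithTop ℤ) (v s) with h1 | h1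
  · obtain ⟨s', hs', c', hc', h⟩ := base s h1 c hc p hxp
    refine ⟨s', hs', c', hc', ?_⟩
    have heq : x - s' - c' = s + c + p - s' - c' := by rw [hpdef]; abel
    rwa [heq]
  · have hstop : v s ≠ ⊤ := h1.ne_top
    obtain ⟨k, hk⟩ := WithTop.ne_top_iff_exists.mp hstop
    obtain ⟨s', hs', c', hc', h⟩ := key (Δ - k).toNat s hs
      (by
        rw [← hk]
        have e : (Δ : ℤ) - ((Δ - k).toNat : ℤ) ≤ k := by omega
        exact_mod_cast e) c hc p hxp
    refine ⟨s', hs', c', hc', ?_⟩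
    have heq : x - s' - c' = s + c + p - s' - c' := by rw [hpdef]; abel
    rwa [heq]
end

section
/- Let (M, v) be a valued module over R and let g_1, ..., g_m ∈ R all have the same degree s, with leading coefficients b_1, ..., b_m ∈ K having pairwise distinct valuations in {0, ..., d^s − 1}. Then for i ≠ j, the subgroups M·g_i and M·g_j are pseudo-orthogonal: v(M·g_i) ∩ v(M·g_j) is contained in a final segment of ℤ ∪ {∞}. -/
/-- `γ` is a jump value of `r` if the minimum defining `γ·r` is attained twice. -/
def IsJump {K : Type*} [Field K] {R : Type*} [Ring R]
    (v : K → WithTop ℤ) (rep : R ≃+ (ℕ →₀ K)) (d : ℕ)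
    (γ : ℤ) (r : R) : Prop :=
  ∃ m₁ ∈ (rep r).support, ∃ m₂ ∈ (rep r).support, m₁ ≠ m₂ ∧
    WithTop.map (fun g : ℤ => (d : ℤ) ^ m₁ * g) (γ : WithTop ℤ) + v (rep r m₁) =
      act v rep d (γ : WithTop ℤ) r ∧
    WithTop.map (fun g : ℤ => (d : ℤ) ^ m₂ * g) (γ : WithTop ℤ) + v (rep r m₂) =
      act v rep d (γ : WithTop ℤ) r

/-- in a valued `R`-module `(M, vM)`, if `g_1, ..., g_m ∈ R` all have the
same degree `s` and their leading coefficients have pairwise distinct valuations in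
`{0, ..., d^s − 1}`, then for `i ≠ j` the subgroups `M·g_i` and `M·g_j` are
pseudo-orthogonal: `v(M·g_i) ∩ v(M·g_j)` lies in a final segment of `ℤ ∪ {∞}`. -/
theorem stmt_17 (p k : ℕ) (hp : p.Prime) (hk : 1 ≤ k)
    {K : Type*} [Field K] [CharP K p]
    (v : K → WithTop ℤ)
    (hv0 : ∀ x, v x = ⊤ ↔ x = 0)
    (hvmul : ∀ x y, v (x * y) = v x + v y)
    (hvadd : ∀ x y, min (v x) (v y) ≤ v (x + y))
    {R : Type*} [Ring R] (ι : K →+* R) (t : R)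
    (hcomm : ∀ a : K, t * ι (a ^ p ^ k) = ι a * t)
    (rep : R ≃+ (ℕ →₀ K))
    (hrep : ∀ f : ℕ →₀ K, rep.symm f = f.sum fun n a => t ^ n * ι a)
    (d : ℕ) (hd : d = p ^ k)
    (α : Fin d → K)
    (hbasis : ∀ x : K, ∃! c : Fin d → K, x = ∑ j : Fin d, (c j) ^ d * α j)
    {M : Type*} [AddCommGroup M] [Module Rᵐᵒᵖ M]
    (vM : M → WithTop ℤ)
    (hM0 : ∀ x : M, vM x = ⊤ ↔ x = 0)
    (hMadd : ∀ x y : M, min (vM x) (vM y) ≤ vM (x + y))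
    (hMsub : ∀ x y : M, min (vM x) (vM y) ≤ vM (x - y))
    (hMsurj : Function.Surjective vM)
    (hMdec : ∀ x : M, ∃! c : Fin d → M,
      x = ∑ i : Fin d, MulOpposite.op (t * ι (α i)) • c i)
    (hM3 : ∀ (x : M) (r : R),
      (∀ γ : ℤ, vM x = (γ : WithTop ℤ) → ¬ IsJump v rep d γ r) →
      vM (MulOpposite.op r • x) = act v rep d (vM x) r)
    (m s : ℕ) (g : Fin m → R)
    (hdeg : ∀ i, s ∈ (rep (g i)).support ∧ ∀ l ∈ (rep (g i)).support, l ≤ s)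
    (hlead : ∀ i j, i ≠ j → v (rep (g i) s) ≠ v (rep (g j) s))
    (hrange : ∀ i, ∃ c : ℤ, v (rep (g i) s) = (c : WithTop ℤ) ∧ 0 ≤ c ∧ c < (d : ℤ) ^ s) :
    ∀ i j, i ≠ j → ∃ γ : ℤ, ∀ x y : M,
      vM (MulOpposite.op (g i) • x) = vM (MulOpposite.op (g j) • y) →
      (γ : WithTop ℤ) ≤ vM (MulOpposite.op (g i) • x) := by

  classical
  -- `d ≥ 2`
  have hd2 : (2 : ℕ) ≤ d := by
    subst hd
    calc (2 : ℕ) ≤ p := hp.two_le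
      _ ≤ p ^ k := Nat.le_self_pow (by omega) p
  have hd1 : (1 : ℤ) < (d : ℤ) := by exact_mod_cast hd2
  have hDpos : ∀ n : ℕ, (0 : ℤ) < (d : ℤ) ^ n := fun n => pow_pos (by linarith) n
  -- ultrametric: sum with strictly smaller valuation
  have hmin : ∀ x u : M, vM u < vM x → vM (x + u) = vM u := by
    intro x u hlt
    have h1 : vM u ≤ vM (x + u) := by
      have := hMadd x u
      rwa [min_eq_right hlt.le] at this
    refine le_antisymm ?_ h1
    by_contra hc
    push_neg at hc
    have h2 : min (vM (x + u)) (vM x) ≤ vM ((x + u) - x) := hMsub _ _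
    have h3 : (x + u) - x = u := by abel
    rw [h3] at h2
    exact absurd h2 (not_le.mpr (lt_min hc hlt))
  -- key computation: below some threshold, `act` is given by the leading term and there
  -- are no jumps
  have key : ∀ (i : Fin m) (c : ℤ), v (rep (g i) s) = (c : WithTop ℤ) →
      ∃ γ0 : ℤ, ∀ γ : ℤ, γ ≤ γ0 →
        act v rep d (γ : WithTop ℤ) (g i) = (((d : ℤ) ^ s * γ + c : ℤ) : WithTop ℤ) ∧
        ¬ IsJump v rep d γ (g i) := by
    intro i c hc
    obtain ⟨hs, hle⟩ := hdeg i
    have perl : ∀ l : ℕ, ∃ gl : ℤ, ∀ γ : ℤ, γ ≤ gl → l ∈ (rep (g i)).support → l ≠ s →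
        ((((d : ℤ) ^ s * γ + c : ℤ) : WithTop ℤ) <
          (((d : ℤ) ^ l * γ : ℤ) : WithTop ℤ) + v (rep (g i) l)) := by
      intro l
      by_cases hl : l ∈ (rep (g i)).support ∧ l ≠ s
      · obtain ⟨hlmem, hlns⟩ := hl
        have hlt : l < s := lt_of_le_of_ne (hle l hlmem) hlns
        have hne : rep (g i) l ≠ 0 := Finsupp.mem_support_iff.mp hlmem
        have hvt : v (rep (g i) l) ≠ ⊤ := fun h => hne ((hv0 _).mp h)
        obtain ⟨e, he⟩ := WithTop.ne_top_iff_exists.mp hvt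
        refine ⟨-|e - c| - 1, fun γ hγ _ _ => ?_⟩
        rw [← he, ← WithTop.coe_add, WithTop.coe_lt_coe]
        have hD : (d : ℤ) ^ l < (d : ℤ) ^ s := pow_lt_pow_right₀ hd1 hlt
        nlinarith [abs_nonneg (e - c), neg_abs_le (e - c),
          mul_nonneg (show (0:ℤ) ≤ (d:ℤ)^s - (d:ℤ)^l - 1 by linarith)
            (show (0:ℤ) ≤ -γ by nlinarith [abs_nonneg (e - c)])]
      · exact ⟨0, fun γ _ h1 h2 => absurd ⟨h1, h2⟩ hl⟩
    choose gl hgl using perl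
    refine ⟨(rep (g i)).support.inf' ⟨s, hs⟩ gl, fun γ hγ => ?_⟩
    have hstrict : ∀ l ∈ (rep (g i)).support, l ≠ s →
        ((((d : ℤ) ^ s * γ + c : ℤ) : WithTop ℤ) <
          (((d : ℤ) ^ l * γ : ℤ) : WithTop ℤ) + v (rep (g i) l)) := by
      intro l hl hlns
      exact hgl l γ (hγ.trans (Finset.inf'_le _ hl)) hl hlns
    have hfs : ∀ n : ℕ, WithTop.map (fun x : ℤ => (d : ℤ) ^ n * x) (γ : WithTop ℤ) =
        (((d : ℤ) ^ n * γ : ℤ) : WithTop ℤ) := fun n => rfl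
    have hact : act v rep d (γ : WithTop ℤ) (g i) = (((d : ℤ) ^ s * γ + c : ℤ) : WithTop ℤ) := by
      unfold act
      apply le_antisymm
      · refine le_trans (Finset.inf_le hs) ?_
        rw [hfs s, hc, ← WithTop.coe_add]
      · apply Finset.le_inf
        intro l hl
        by_cases h : l = s
        · subst h
          rw [hfs l, hc, ← WithTop.coe_add]
        · rw [hfs l]
          exact (hstrict l hl h).le
    refine ⟨hact, ?_⟩
    rintro ⟨m1, hm1, m2, hm2, hne, h1, h2⟩
    have contra : ∀ l ∈ (rep (g i)).support, l ≠ s →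
        WithTop.map (fun x : ℤ => (d : ℤ) ^ l * x) (γ : WithTop ℤ) + v (rep (g i) l) ≠
          act v rep d (γ : WithTop ℤ) (g i) := by
      intro l hl hls heq
      rw [hact, hfs l] at heq
      exact (hstrict l hl hls).ne' heq
    rcases eq_or_ne m1 s with h | h
    · exact contra m2 hm2 (fun hh => hne (h.trans hh.symm)) h2
    · exact contra m1 hm1 h h1
  intro i j hij
  obtain ⟨ci, hci, hci0, hcid⟩ := hrange i
  obtain ⟨cj, hcj, hcj0, hcjd⟩ := hrange j
  obtain ⟨γi, hγi⟩ := key i ci hci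
  obtain ⟨γj, hγj⟩ := key j cj hcj
  set γ0 : ℤ := min γi γj - 1 with hγ0
  have hi' : ∀ γ : ℤ, γ ≤ γ0 → act v rep d (γ : WithTop ℤ) (g i) =
      (((d : ℤ) ^ s * γ + ci : ℤ) : WithTop ℤ) ∧ ¬ IsJump v rep d γ (g i) :=
    fun γ h => hγi γ (by omega)
  have hj' : ∀ γ : ℤ, γ ≤ γ0 → act v rep d (γ : WithTop ℤ) (g j) =
      (((d : ℤ) ^ s * γ + cj : ℤ) : WithTop ℤ) ∧ ¬ IsJump v rep d γ (g j) :=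
    fun γ h => hγj γ (by omega)
  -- main dichotomy
  have main : ∀ (i' : Fin m) (c : ℤ),
      (∀ γ : ℤ, γ ≤ γ0 → act v rep d (γ : WithTop ℤ) (g i') =
        (((d : ℤ) ^ s * γ + c : ℤ) : WithTop ℤ) ∧ ¬ IsJump v rep d γ (g i')) →
      ∀ x : M,
        ((((d : ℤ) ^ s * (γ0 - 1) + c : ℤ) : WithTop ℤ) ≤ vM (MulOpposite.op (g i') • x)) ∨
        (∃ a : ℤ, a ≤ γ0 ∧ vM x = (a : WithTop ℤ) ∧
          vM (MulOpposite.op (g i') • x) = (((d : ℤ) ^ s * a + c : ℤ) : WithTop ℤ)) := by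
    intro i' c hprop x
    have hval : ∀ (z : M) (a : ℤ), a ≤ γ0 → vM z = (a : WithTop ℤ) →
        vM (MulOpposite.op (g i') • z) = (((d : ℤ) ^ s * a + c : ℤ) : WithTop ℤ) := by
      intro z a ha hz
      have h3 := hM3 z (g i') (by
        intro γ' hγ'
        have hγa : γ' = a := by
          rw [hz] at hγ'
          exact_mod_cast hγ'.symm
        rw [hγa]
        exact (hprop a ha).2)
      rw [h3, hz]
      exact (hprop a ha).1
    rcases lt_or_ge (vM x) ((γ0 : ℤ) : WithTop ℤ) with hlt | hge
    · right
      have hxt : vM x ≠ ⊤ := ne_top_of_lt hlt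
      obtain ⟨a, ha⟩ := WithTop.ne_top_iff_exists.mp hxt
      have haγ : a < γ0 := by
        rw [← ha] at hlt
        exact_mod_cast hlt
      exact ⟨a, haγ.le, ha.symm, hval x a haγ.le ha.symm⟩
    · left
      obtain ⟨u, hu⟩ := hMsurj (((γ0 - 1 : ℤ) : WithTop ℤ))
      have hult : vM u < vM x := by
        rw [hu]
        exact lt_of_lt_of_le (by exact_mod_cast (by omega : γ0 - 1 < γ0)) hge
      have hxu : vM (x + u) = ((γ0 - 1 : ℤ) : WithTop ℤ) := by rw [hmin x u hult, hu]
      have h1 := hval u (γ0 - 1) (by omega) hu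
      have h2 := hval (x + u) (γ0 - 1) (by omega) hxu
      have hsplit : MulOpposite.op (g i') • x =
          MulOpposite.op (g i') • (x + u) - MulOpposite.op (g i') • u := by
        rw [smul_add]; abel
      rw [hsplit]
      have h4 := hMsub (MulOpposite.op (g i') • (x + u)) (MulOpposite.op (g i') • u)
      rwa [h1, h2, min_self] at h4
  refine ⟨(d : ℤ) ^ s * (γ0 - 1) + min ci cj, fun x y hxy => ?_⟩
  rcases main i ci hi' x with hb | ⟨a, ha, _, hvx⟩
  · exact le_trans (by exact_mod_cast (by omega : (d:ℤ)^s*(γ0-1) + min ci cj ≤ (d:ℤ)^s*(γ0-1) + ci)) hb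
  · rcases main j cj hj' y with hb | ⟨b, hbb, _, hvy⟩
    · rw [hxy]
      exact le_trans (by exact_mod_cast (by omega : (d:ℤ)^s*(γ0-1) + min ci cj ≤ (d:ℤ)^s*(γ0-1) + cj)) hb
    · exfalso
      rw [hvx, hvy] at hxy
      have heq : (d : ℤ) ^ s * a + ci = (d : ℤ) ^ s * b + cj := by exact_mod_cast hxy
      have hcij : ci ≠ cj := by
        intro h
        exact hlead i j hij (by rw [hci, hcj, h])
      have hD := hDpos s
      rcases lt_trichotomy a b with h | h | h
      · have h5 : (d : ℤ) ^ s * (a - b) ≤ (d : ℤ) ^ s * (-1) :=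
          mul_le_mul_of_nonneg_left (by omega) hD.le
        nlinarith
      · subst h
        exact hcij (by linarith)
      · have h5 : (d : ℤ) ^ s * (1 : ℤ) ≤ (d : ℤ) ^ s * (a - b) :=
          mul_le_mul_of_nonneg_left (by omega) hD.le
        nlinarith
end

section
/- Let (M, v) be a valued module over R, β a valuation independent basis of K over K^φ (members of β have pairwise distinct valuations in {0, ..., d−1}), and q = t^s·a + (lower degree terms) ∈ R of degree s. Then there is a unique index j = j(q) in the induced basis β(s) such that M·q and M·t^s·β_j are m-immediate, and consequently C := Σ_{j' ≠ j} M·t^s·β_{j'} is a pseudo-complement of M·q in M. -/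
/-- The subgroup `M·r` of a right `R`-module `M` (a module over `Rᵐᵒᵖ`). -/
def Mdot {R : Type*} [Ring R] (M : Type*) [AddCommGroup M] [Module Rᵐᵒᵖ M]
    (r : R) : AddSubgroup M where
  carrier := Set.range fun x : M => MulOpposite.op r • x
  zero_mem' := ⟨0, by simp⟩
  add_mem' := by rintro _ _ ⟨a, rfl⟩ ⟨b, rfl⟩; exact ⟨a + b, by simp [smul_add]⟩
  neg_mem' := by rintro _ ⟨a, rfl⟩; exact ⟨-a, by simp [smul_neg]⟩

section ValLemmas
variable {G : Type*} [AddCommGroup G] (v : G → WithTop ℤ)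

theorem vmin_eq (hadd : ∀ x y, min (v x) (v y) ≤ v (x + y)) (hneg : ∀ x, v (-x) = v x)
    (x y : G) (h : v x < v y) : v (x + y) = v x := by
  refine le_antisymm ?_ (le_trans (le_min le_rfl h.le) (hadd x y))
  by_contra hlt
  push_neg at hlt
  have h2 : min (v (x + y)) (v (-y)) ≤ v x := by
    simpa [add_neg_cancel_right] using hadd (x + y) (-y)
  rw [hneg] at h2
  exact absurd h2 (not_le.mpr (lt_min hlt h))

theorem vsum_ge (h0 : v 0 = ⊤) (hadd : ∀ x y, min (v x) (v y) ≤ v (x + y))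
    {ι : Type*} (S : Finset ι) (z : ι → G) (w : WithTop ℤ)
    (h : ∀ i ∈ S, w ≤ v (z i)) : w ≤ v (∑ i ∈ S, z i) := by
  induction S using Finset.cons_induction with
  | empty => simp [h0]
  | cons i S hi ih =>
    rw [Finset.sum_cons]
    refine le_trans (le_min (h i (Finset.mem_cons_self i S)) (ih fun j hj => h j (Finset.mem_cons_of_mem hj))) (hadd _ _)

theorem vsum_eq_inf (h0 : v 0 = ⊤) (hadd : ∀ x y, min (v x) (v y) ≤ v (x + y))
    (hneg : ∀ x, v (-x) = v x)
    {ι : Type*} (S : Finset ι) (z : ι → G)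
    (h : ∀ i ∈ S, ∀ j ∈ S, i ≠ j → v (z i) = v (z j) → v (z i) = ⊤) :
    v (∑ i ∈ S, z i) = S.inf (fun i => v (z i)) := by
  induction S using Finset.cons_induction with
  | empty => simp [h0]
  | cons i S hi ih =>
    rw [Finset.sum_cons, Finset.inf_cons]
    have hS : v (∑ j ∈ S, z j) = S.inf (fun j => v (z j)) :=
      ih fun a ha b hb => h a (Finset.mem_cons_of_mem ha) b (Finset.mem_cons_of_mem hb)
    rcases lt_trichotomy (v (z i)) (v (∑ j ∈ S, z j)) with hlt | heq | hgt
    · rw [vmin_eq v hadd hneg _ _ hlt, min_eq_left (hS ▸ hlt.le)]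
    · by_cases htop : v (z i) = ⊤
      · have : (⊤ : WithTop ℤ) ≤ v (z i + ∑ j ∈ S, z j) := by
          refine le_trans ?_ (hadd _ _)
          rw [htop, ← heq, htop]; simp
        rw [top_le_iff] at this
        rw [this, ← hS, ← heq, htop]; simp
      · exfalso
        have hne : S.Nonempty := by
          rcases Finset.eq_empty_or_nonempty S with rfl | hne
          · exfalso; simp only [Finset.inf_empty] at hS; rw [heq, hS] at htop; exact htop rfl
          · exact hne
        obtain ⟨j, hj, hji⟩ := Finset.exists_mem_eq_inf S hne (fun j => v (z j))
        have : v (z i) = v (z j) := by rw [heq, hS, hji]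
        exact htop (h i (Finset.mem_cons_self i S) j (Finset.mem_cons_of_mem hj)
          (fun he => hi (he ▸ hj)) this)
    · rw [add_comm, vmin_eq v hadd hneg _ _ hgt, hS, min_eq_right (hS ▸ hgt.le)]

end ValLemmas

theorem digits_inj (d : ℕ) (hd : 2 ≤ d) : ∀ (s : ℕ) (g g' : Fin s → ℤ),
    (∀ j, 0 ≤ g j ∧ g j < d) → (∀ j, 0 ≤ g' j ∧ g' j < d) →
    (∑ j : Fin s, (d : ℤ) ^ (j : ℕ) * g j) = ∑ j : Fin s, (d : ℤ) ^ (j : ℕ) * g' j → g = g' := by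
  intro s
  induction s with
  | zero => intro g g' _ _ _; funext j; exact j.elim0
  | succ s ih =>
    intro g g' hg hg' hsum
    have key : ∀ h : Fin (s + 1) → ℤ,
        ∑ j : Fin (s + 1), (d : ℤ) ^ (j : ℕ) * h j
          = h 0 + d * ∑ j : Fin s, (d : ℤ) ^ (j : ℕ) * h j.succ := by
      intro h
      rw [Fin.sum_univ_succ, Finset.mul_sum]
      simp only [Fin.val_zero, pow_zero, one_mul, Fin.val_succ]
      congr 1
      refine Finset.sum_congr rfl fun j _ => ?_
      ring
    rw [key g, key g'] at hsum
    have hd0 : (0 : ℤ) < d := by positivity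
    have h00 : g 0 = g' 0 := by
      have hmod := congrArg (· % (d : ℤ)) hsum
      simp only [Int.add_mul_emod_self_left] at hmod
      rwa [Int.emod_eq_of_lt (hg 0).1 (hg 0).2, Int.emod_eq_of_lt (hg' 0).1 (hg' 0).2] at hmod
    have htails : (∑ j : Fin s, (d : ℤ) ^ (j : ℕ) * g j.succ)
        = ∑ j : Fin s, (d : ℤ) ^ (j : ℕ) * g' j.succ := by
      have : d * (∑ j : Fin s, (d : ℤ) ^ (j : ℕ) * g j.succ)
          = d * ∑ j : Fin s, (d : ℤ) ^ (j : ℕ) * g' j.succ := by linarith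
      exact mul_left_cancel₀ (by positivity) this
    have htail := ih (fun j => g j.succ) (fun j => g' j.succ)
      (fun j => hg j.succ) (fun j => hg' j.succ) htails
    funext j
    rcases Fin.eq_zero_or_eq_succ j with rfl | ⟨j', rfl⟩
    · exact h00
    · exact congrFun htail j'

theorem digits_lt (d : ℕ) (hd : 2 ≤ d) (s : ℕ) (g : Fin s → ℤ)
    (hg : ∀ j, 0 ≤ g j ∧ g j < d) :
    0 ≤ ∑ j : Fin s, (d : ℤ) ^ (j : ℕ) * g j ∧
      ∑ j : Fin s, (d : ℤ) ^ (j : ℕ) * g j < (d : ℤ) ^ s := by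
  constructor
  · exact Finset.sum_nonneg fun j _ => mul_nonneg (by positivity) (hg j).1
  · have h1 : ∑ j : Fin s, (d : ℤ) ^ (j : ℕ) * g j
        ≤ ∑ j : Fin s, (d : ℤ) ^ (j : ℕ) * ((d : ℤ) - 1) :=
      Finset.sum_le_sum fun j _ => mul_le_mul_of_nonneg_left (by linarith [(hg j).2]) (by positivity)
    have h2 : ∑ j : Fin s, (d : ℤ) ^ (j : ℕ) * ((d : ℤ) - 1) = (d : ℤ) ^ s - 1 := by
      rw [← Finset.sum_mul, Fin.sum_univ_eq_sum_range (fun i => (d : ℤ) ^ i), geom_sum_mul]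
    linarith

theorem class_eq (d : ℕ) (hd : 2 ≤ d) (s : ℕ) (g g' : Fin s → ℤ)
    (hg : ∀ j, 0 ≤ g j ∧ g j < d) (hg' : ∀ j, 0 ≤ g' j ∧ g' j < d) (m m' : ℤ)
    (h : (d : ℤ) ^ s * m + ∑ j : Fin s, (d : ℤ) ^ (j : ℕ) * g j
      = (d : ℤ) ^ s * m' + ∑ j : Fin s, (d : ℤ) ^ (j : ℕ) * g' j) : g = g' ∧ m = m' := by
  obtain ⟨hb1, hb2⟩ := digits_lt d hd s g hg
  obtain ⟨hb1', hb2'⟩ := digits_lt d hd s g' hg'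
  have hds : (0 : ℤ) < (d : ℤ) ^ s := by positivity
  have hmm : m = m' := by
    by_contra hne
    have h1 : 1 ≤ |m - m'| := Int.one_le_abs (sub_ne_zero.mpr hne)
    have h2 : |(d : ℤ) ^ s * (m - m')| = (d : ℤ) ^ s * |m - m'| := by
      rw [abs_mul, abs_of_pos hds]
    have h3 : (d : ℤ) ^ s * (m - m')
        = (∑ j : Fin s, (d : ℤ) ^ (j : ℕ) * g' j) - ∑ j : Fin s, (d : ℤ) ^ (j : ℕ) * g j := by
      linarith
    have h4 : |(d : ℤ) ^ s * (m - m')| < (d : ℤ) ^ s := by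
      rw [h3, abs_lt]; constructor <;> linarith
    nlinarith
  subst hmm
  exact ⟨digits_inj d hd s g g' hg hg' (by linarith), rfl⟩

set_option maxHeartbeats 2000000 in
/-- let `(M, vM)` be a valued `R`-module, `β` a valuation independent basis
of `K` over `K^φ`, and `q ∈ R` of degree `s`. Then there is a unique index `f` in the
induced basis `β(s)` with `M·q ≈ M·t^s·β_f` (m-immediate), and consequently
`C = Σ_{f' ≠ f} M·t^s·β_{f'}` is a pseudo-complement of `M·q` in `M`. -/
theorem stmt_18 (p k : ℕ) (hp : p.Prime) (hk : 1 ≤ k)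
    {K : Type*} [Field K] [CharP K p]
    (v : K → WithTop ℤ)
    (hv0 : ∀ x, v x = ⊤ ↔ x = 0)
    (hvmul : ∀ x y, v (x * y) = v x + v y)
    (hvadd : ∀ x y, min (v x) (v y) ≤ v (x + y))
    {R : Type*} [Ring R] (ι : K →+* R) (t : R)
    (hcomm : ∀ a : K, t * ι (a ^ p ^ k) = ι a * t)
    (rep : R ≃+ (ℕ →₀ K))
    (hrep : ∀ f : ℕ →₀ K, rep.symm f = f.sum fun n a => t ^ n * ι a)
    (d : ℕ) (hd : d = p ^ k)
    (β : Fin d → K)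
    (hbasis : ∀ x : K, ∃! c : Fin d → K, x = ∑ j : Fin d, (c j) ^ d * β j)
    (hvalind : ∀ i j : Fin d, i ≠ j → v (β i) ≠ v (β j))
    (hvalrange : ∀ j : Fin d, ∃ c : ℤ, v (β j) = (c : WithTop ℤ) ∧ 0 ≤ c ∧ c < (d : ℤ))
    {M : Type*} [AddCommGroup M] [Module Rᵐᵒᵖ M]
    (vM : M → WithTop ℤ)
    (hM0 : ∀ x : M, vM x = ⊤ ↔ x = 0)
    (hMadd : ∀ x y : M, min (vM x) (vM y) ≤ vM (x + y))
    (hMsub : ∀ x y : M, min (vM x) (vM y) ≤ vM (x - y))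
    (hMsurj : Function.Surjective vM)
    (hMdec : ∀ x : M, ∃! c : Fin d → M,
      x = ∑ i : Fin d, MulOpposite.op (t * ι (β i)) • c i)
    (hM3 : ∀ (x : M) (r : R),
      (∀ γ : ℤ, vM x = (γ : WithTop ℤ) → ¬ IsJump v rep d γ r) →
      vM (MulOpposite.op r • x) = act v rep d (vM x) r)
    (q : R) (s : ℕ)
    (hsmem : s ∈ (rep q).support)
    (hsmax : ∀ m ∈ (rep q).support, m ≤ s) :
    (∃! f : Fin s → Fin d,
      MImm vM (Mdot M q)
        (Mdot M (t ^ s * ι (∏ j : Fin s, β (f j) ^ d ^ (j : ℕ))))) ∧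
    ∀ f : Fin s → Fin d,
      MImm vM (Mdot M q)
          (Mdot M (t ^ s * ι (∏ j : Fin s, β (f j) ^ d ^ (j : ℕ)))) →
      PComp vM (Mdot M q)
        (⨆ f' ∈ {f' : Fin s → Fin d | f' ≠ f},
          Mdot M (t ^ s * ι (∏ j : Fin s, β (f' j) ^ d ^ (j : ℕ)))) := by
  classical
  have hd2 : 2 ≤ d := by
    rw [hd]
    calc 2 = 2 ^ 1 := rfl
    _ ≤ p ^ 1 := Nat.pow_le_pow_left hp.two_le 1
    _ ≤ p ^ k := Nat.pow_le_pow_right hp.pos hk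
  have hdK : (1:ℤ) < (d:ℤ) := by exact_mod_cast hd2
  -- basic valuation facts on K
  have hv1 : v 1 = 0 := by
    have h := hvmul 1 1
    rw [mul_one] at h
    obtain ⟨c, hc⟩ := WithTop.ne_top_iff_exists.mp (fun ht => one_ne_zero ((hv0 1).mp ht))
    rw [← hc] at h ⊢
    have : c = c + c := by exact_mod_cast h
    have : c = 0 := by omega
    simp [this]
  have hvneg : ∀ x : K, v (-x) = v x := by
    have hm1 : v (-1 : K) = 0 := by
      have h := hvmul (-1) (-1)
      rw [neg_mul_neg, one_mul, hv1] at h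
      obtain ⟨c, hc⟩ := WithTop.ne_top_iff_exists.mp
        (fun ht => (neg_ne_zero.mpr one_ne_zero) ((hv0 (-1)).mp ht))
      rw [← hc]
      have : (0:ℤ) = c + c := by rw [← hc] at h; exact_mod_cast h
      have : c = 0 := by omega
      simp [this]
    intro x
    have := hvmul (-1) x
    rw [neg_one_mul, hm1, zero_add] at this
    exact this
  have hv0' : v 0 = ⊤ := (hv0 0).mpr rfl
  have hM0' : vM 0 = ⊤ := (hM0 0).mpr rfl
  have hMneg : ∀ x : M, vM (-x) = vM x := by
    intro x
    have h1 : vM x ≤ vM (-x) := by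
      have := hMsub 0 x
      simpa [hM0'] using this
    have h2 : vM (-x) ≤ vM x := by
      have := hMsub 0 (-x)
      simpa [hM0'] using this
    exact le_antisymm h2 h1
  -- powers and products under v
  have hvpow : ∀ (x : K) (c : ℤ), v x = (c : WithTop ℤ) → ∀ n : ℕ, v (x ^ n) = ((n * c : ℤ) : WithTop ℤ) := by
    intro x c hc n
    induction n with
    | zero => simpa using hv1
    | succ n ih =>
      rw [pow_succ, hvmul, ih, hc, ← WithTop.coe_add]
      apply congrArg
      push_cast
      ring
  have hvprod : ∀ {ιt : Type} (S : Finset ιt) (x : ιt → K) (c : ιt → ℤ),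
      (∀ i ∈ S, v (x i) = ((c i : ℤ) : WithTop ℤ)) →
      v (∏ i ∈ S, x i) = ((∑ i ∈ S, c i : ℤ) : WithTop ℤ) := by
    intro ιt S x c h
    induction S using Finset.cons_induction with
    | empty => simpa using hv1
    | cons i S hi ih =>
      rw [Finset.prod_cons, Finset.sum_cons, hvmul, h i (Finset.mem_cons_self i S),
        ih (fun j hj => h j (Finset.mem_cons_of_mem hj))]
      rw [← WithTop.coe_add]
  -- ring facts
  have hcomm' : ∀ a : K, t * ι (a ^ d) = ι a * t := by rw [hd]; exact hcomm
  have hcommn : ∀ (n : ℕ) (a : K), t ^ n * ι (a ^ d ^ n) = ι a * t ^ n := by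
    intro n a
    induction n with
    | zero => simp
    | succ n ih =>
      rw [pow_succ t, pow_succ d, pow_mul, mul_assoc, hcomm' (a ^ d ^ n), ← mul_assoc, ih,
        mul_assoc]
  have hrmono : ∀ (n : ℕ) (a : K), rep (t ^ n * ι a) = Finsupp.single n a := by
    intro n a
    have h1 : rep.symm (Finsupp.single n a) = t ^ n * ι a := by
      rw [hrep, Finsupp.sum_single_index (by simp)]
    rw [← h1, AddEquiv.apply_symm_apply]
  have hq_expand : q = ∑ n ∈ (rep q).support, t ^ n * ι (rep q n) := by
    conv_lhs => rw [← rep.symm_apply_apply q]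
    rw [hrep]
    rfl
  have hsmul_q : ∀ x : M, MulOpposite.op q • x
      = ∑ n ∈ (rep q).support, MulOpposite.op (t ^ n * ι (rep q n)) • x := by
    intro x
    conv_lhs => rw [hq_expand]
    rw [show MulOpposite.op (∑ n ∈ (rep q).support, t ^ n * ι (rep q n))
        = ∑ n ∈ (rep q).support, MulOpposite.op (t ^ n * ι (rep q n)) from
      map_sum MulOpposite.opAddEquiv _ _, Finset.sum_smul]
  -- value of a monomial action
  have hvmono : ∀ (n : ℕ) (a : K) (x : M),
      vM (MulOpposite.op (t ^ n * ι a) • x)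
        = WithTop.map (fun g : ℤ => (d : ℤ) ^ n * g) (vM x) + v a := by
    intro n a x
    by_cases ha : a = 0
    · subst ha
      simp [hv0', hM0']
    · have hnj : ∀ γ : ℤ, vM x = (γ : WithTop ℤ) → ¬ IsJump v rep d γ (t ^ n * ι a) := by
        intro γ _ hj
        obtain ⟨m₁, hm₁, m₂, hm₂, hne, _⟩ := hj
        rw [hrmono, Finsupp.support_single_ne_zero _ ha] at hm₁ hm₂
        simp only [Finset.mem_singleton] at hm₁ hm₂
        exact hne (hm₁.trans hm₂.symm)
      rw [hM3 x _ hnj]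
      unfold act
      rw [hrmono, Finsupp.support_single_ne_zero _ ha]
      simp [Finsupp.single_eq_same]
  haveI : ExpChar K p := ExpChar.prime hp
  have hfrob : ∀ {ιt : Type} (S : Finset ιt) (z : ιt → K),
      (∑ i ∈ S, z i) ^ d = ∑ i ∈ S, (z i) ^ d := by
    intro ιt S z
    rw [hd]
    exact sum_pow_char_pow p k S z
  -- the induced basis products
  have hbprod_cons : ∀ (sn : ℕ) (i : Fin d) (g : Fin sn → Fin d),
      (∏ j : Fin (sn + 1), β (Fin.cons (α := fun _ => Fin d) i g j) ^ d ^ (j : ℕ))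
        = (∏ j : Fin sn, β (g j) ^ d ^ (j : ℕ)) ^ d * β i := by
    intro sn i g
    rw [Fin.prod_univ_succ, Fin.cons_zero]
    have h1 : (d : ℕ) ^ ((0 : Fin (sn + 1)) : ℕ) = 1 := by norm_num
    rw [h1, pow_one, mul_comm]
    congr 1
    rw [← Finset.prod_pow]
    refine Finset.prod_congr rfl fun j _ => ?_
    rw [Fin.cons_succ, ← pow_mul, Fin.val_succ, pow_succ]
  -- K-side decomposition
  have Kdec : ∀ (sn : ℕ) (x : K), ∃ c : (Fin sn → Fin d) → K,
      x = ∑ g : Fin sn → Fin d, (c g) ^ d ^ sn * ∏ j : Fin sn, β (g j) ^ d ^ (j : ℕ) := by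
    intro sn
    induction sn with
    | zero =>
      intro x
      refine ⟨fun _ => x, ?_⟩
      rw [Fintype.sum_eq_single (fun j : Fin 0 => j.elim0) (fun g hg => absurd (funext fun j => j.elim0) hg)]
      simp
    | succ sn ih =>
      intro x
      obtain ⟨c, hc, -⟩ := hbasis x
      choose y hy using fun i => ih (c i)
      refine ⟨fun g => y (g 0) (Fin.tail g), ?_⟩
      have step : ∀ i : Fin d, (c i) ^ d * β i
          = ∑ g : Fin sn → Fin d,
            (y i g) ^ d ^ (sn + 1) * ((∏ j : Fin sn, β (g j) ^ d ^ (j : ℕ)) ^ d * β i) := by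
        intro i
        rw [hy i, hfrob, Finset.sum_mul]
        refine Finset.sum_congr rfl fun g _ => ?_
        rw [mul_pow, ← pow_mul, ← pow_succ, mul_assoc]
      calc x = ∑ i : Fin d, (c i) ^ d * β i := hc
        _ = ∑ i : Fin d, ∑ g : Fin sn → Fin d,
            (y i g) ^ d ^ (sn + 1) * ((∏ j : Fin sn, β (g j) ^ d ^ (j : ℕ)) ^ d * β i) :=
            Finset.sum_congr rfl fun i _ => step i
        _ = ∑ pr : Fin d × (Fin sn → Fin d),
            (y pr.1 pr.2) ^ d ^ (sn + 1) * ((∏ j : Fin sn, β (pr.2 j) ^ d ^ (j : ℕ)) ^ d * β pr.1) := by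
            rw [Fintype.sum_prod_type]
        _ = ∑ g : Fin (sn+1) → Fin d, (y (g 0) (Fin.tail g)) ^ d ^ (sn + 1)
              * ∏ j : Fin (sn+1), β (g j) ^ d ^ (j : ℕ) := by
            refine Fintype.sum_equiv (Fin.consEquiv (fun _ => Fin d)) _ _ fun pr => ?_
            obtain ⟨i, g⟩ := pr
            simp [Fin.consEquiv, Fin.tail_cons, hbprod_cons]
  -- M-side decomposition
  have Mdec : ∀ (sn : ℕ) (x : M), ∃ c : (Fin sn → Fin d) → M,
      x = ∑ g : Fin sn → Fin d,
        MulOpposite.op (t ^ sn * ι (∏ j : Fin sn, β (g j) ^ d ^ (j : ℕ))) • c g := by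
    intro sn
    induction sn with
    | zero =>
      intro x
      refine ⟨fun _ => x, ?_⟩
      rw [Fintype.sum_eq_single (fun j : Fin 0 => j.elim0) (fun g hg => absurd (funext fun j => j.elim0) hg)]
      simp
    | succ sn ih =>
      intro x
      obtain ⟨c, hc, -⟩ := hMdec x
      choose y hy using fun i => ih (c i)
      refine ⟨fun g => y (g 0) (Fin.tail g), ?_⟩
      have key : ∀ (i : Fin d) (g : Fin sn → Fin d) (w : M),
          MulOpposite.op (t * ι (β i)) •
            (MulOpposite.op (t ^ sn * ι (∏ j : Fin sn, β (g j) ^ d ^ (j : ℕ))) • w)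
          = MulOpposite.op (t ^ (sn+1) * ι (∏ j : Fin (sn+1), β (Fin.cons (α := fun _ => Fin d) i g j) ^ d ^ (j : ℕ))) • w := by
        intro i g w
        rw [← mul_smul, ← MulOpposite.op_mul]
        congr 1
        rw [hbprod_cons, map_mul]
        simp only [pow_succ, mul_assoc]
        rw [← mul_assoc (ι (∏ j : Fin sn, β (g j) ^ d ^ (j : ℕ))) t (ι (β i)),
          ← hcomm' (∏ j : Fin sn, β (g j) ^ d ^ (j : ℕ)), mul_assoc]
      calc x = ∑ i : Fin d, MulOpposite.op (t * ι (β i)) • c i := hc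
        _ = ∑ i : Fin d, ∑ g : Fin sn → Fin d,
              MulOpposite.op (t ^ (sn+1) * ι (∏ j : Fin (sn+1), β (Fin.cons (α := fun _ => Fin d) i g j) ^ d ^ (j : ℕ))) • y i g := by
            refine Finset.sum_congr rfl fun i _ => ?_
            rw [hy i, Finset.smul_sum]
            exact Finset.sum_congr rfl fun g _ => key i g (y i g)
        _ = ∑ pr : Fin d × (Fin sn → Fin d),
              MulOpposite.op (t ^ (sn+1) * ι (∏ j : Fin (sn+1), β (Fin.cons (α := fun _ => Fin d) pr.1 pr.2 j) ^ d ^ (j : ℕ))) • y pr.1 pr.2 := by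
            rw [Fintype.sum_prod_type]
        _ = ∑ g : Fin (sn+1) → Fin d,
              MulOpposite.op (t ^ (sn+1) * ι (∏ j : Fin (sn+1), β (g j) ^ d ^ (j : ℕ))) • y (g 0) (Fin.tail g) := by
            refine Fintype.sum_equiv (Fin.consEquiv (fun _ => Fin d)) _ _ fun pr => ?_
            obtain ⟨i, g⟩ := pr
            simp [Fin.consEquiv, Fin.tail_cons]
  haveI : NeZero d := ⟨by omega⟩
  -- coefficient data of q
  have haS : rep q s ≠ 0 := Finsupp.mem_support_iff.mp hsmem
  have hVex : ∀ m, m ∈ (rep q).support → ∃ c : ℤ, v (rep q m) = (c : WithTop ℤ) := by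
    intro m hm
    obtain ⟨c, hc⟩ := WithTop.ne_top_iff_exists.mp
      (fun ht => Finsupp.mem_support_iff.mp hm ((hv0 _).mp ht))
    exact ⟨c, hc.symm⟩
  choose! V hV using hVex
  -- valuations of basis elements
  choose e he0 he1 he2 using hvalrange
  have einj : ∀ i j : Fin d, e i = e j → i = j := by
    intro i j h
    by_contra hne
    exact hvalind i j hne (by rw [he0, he0, h])
  obtain ⟨E, hE⟩ : ∃ E : (Fin s → Fin d) → ℤ,
      ∀ g, E g = ∑ j : Fin s, (d : ℤ) ^ (j : ℕ) * e (g j) := ⟨_, fun _ => rfl⟩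
  have hEbound : ∀ g, 0 ≤ E g ∧ E g < (d : ℤ) ^ s := by
    intro g
    rw [hE]
    exact digits_lt d hd2 s _ (fun j => ⟨he1 _, he2 _⟩)
  have hclass : ∀ (g g' : Fin s → Fin d) (m m' : ℤ),
      (d : ℤ) ^ s * m + E g = (d : ℤ) ^ s * m' + E g' → g = g' ∧ m = m' := by
    intro g g' m m' h
    rw [hE, hE] at h
    obtain ⟨hgg, hmm⟩ := class_eq d hd2 s _ _ (fun j => ⟨he1 _, he2 _⟩)
      (fun j => ⟨he1 _, he2 _⟩) m m' h
    exact ⟨funext fun j => einj _ _ (congrFun hgg j), hmm⟩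
  have hvb : ∀ g : Fin s → Fin d,
      v (∏ j : Fin s, β (g j) ^ d ^ (j : ℕ)) = ((E g : ℤ) : WithTop ℤ) := by
    intro g
    rw [hE]
    refine hvprod Finset.univ _ (fun j : Fin s => (d : ℤ) ^ (j : ℕ) * e (g j)) fun j _ => ?_
    rw [hvpow (β (g j)) (e (g j)) (he0 _) (d ^ (j : ℕ))]
    congr 1
  -- decompose the top coefficient over the induced basis
  obtain ⟨cc, hcc⟩ := Kdec s (rep q s)
  obtain ⟨W, hW⟩ : ∃ W : (Fin s → Fin d) → WithTop ℤ,
      ∀ g, W g = v ((cc g) ^ d ^ s * ∏ j : Fin s, β (g j) ^ d ^ (j : ℕ)) := ⟨_, fun _ => rfl⟩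
  have hWtop : ∀ g, cc g = 0 → W g = ⊤ := by
    intro g h
    rw [hW, h, zero_pow (by positivity : d ^ s ≠ 0), zero_mul, hv0']
  have hWcoe : ∀ g, cc g ≠ 0 → ∃ m : ℤ, v (cc g) = (m : WithTop ℤ) ∧
      W g = (((d : ℤ) ^ s * m + E g : ℤ) : WithTop ℤ) := by
    intro g hg
    obtain ⟨m, hm⟩ := WithTop.ne_top_iff_exists.mp (fun ht => hg ((hv0 _).mp ht))
    refine ⟨m, hm.symm, ?_⟩
    rw [hW, hvmul, hvpow (cc g) m hm.symm (d ^ s), hvb, ← WithTop.coe_add]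
    congr 1
  have hWne : ∀ g g', g ≠ g' → W g = W g' → W g = ⊤ := by
    intro g g' hne h
    by_cases h1 : cc g = 0
    · exact hWtop g h1
    by_cases h2 : cc g' = 0
    · rw [h]; exact hWtop g' h2
    obtain ⟨m, _, hWg⟩ := hWcoe g h1
    obtain ⟨m', _, hWg'⟩ := hWcoe g' h2
    rw [hWg, hWg'] at h
    exact absurd ((hclass g g' m m' (by exact_mod_cast h)).1) hne
  have hvaS : v (rep q s) = Finset.univ.inf W := by
    rw [hcc, vsum_eq_inf v hv0' hvadd hvneg Finset.univ _
      (fun g _ g' _ hne hgg' => by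
        rw [← hW g, ← hW g'] at hgg'
        rw [← hW g]
        exact hWne g g' hne hgg')]
    exact Finset.inf_congr rfl (fun g _ => (hW g).symm)
  have hva : v (rep q s) = ((V s : ℤ) : WithTop ℤ) := hV s hsmem
  obtain ⟨f, -, hfW⟩ := Finset.exists_mem_eq_inf Finset.univ Finset.univ_nonempty W
  have hWf : W f = ((V s : ℤ) : WithTop ℤ) := by rw [← hfW, ← hvaS, hva]
  have hccf : cc f ≠ 0 := by
    intro h
    rw [hWtop f h] at hWf
    exact (WithTop.top_ne_coe) hWf
  obtain ⟨vc, hvc, hWfc⟩ := hWcoe f hccf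
  have hkey : (d : ℤ) ^ s * vc + E f = V s := by
    rw [hWfc] at hWf
    exact_mod_cast hWf
  have hWge : ∀ g, ((V s : ℤ) : WithTop ℤ) ≤ W g := by
    intro g
    rw [← hWf, ← hfW]
    exact Finset.inf_le (Finset.mem_univ g)
  -- radius below which the top term strictly dominates
  obtain ⟨G1, hG1⟩ : ∃ g : ℤ, g = -(∑ m ∈ (rep q).support, |V m - V s|) := ⟨_, rfl⟩
  have hG1n : G1 ≤ 0 := by
    rw [hG1, neg_nonpos]
    exact Finset.sum_nonneg fun i _ => abs_nonneg _
  have hdom : ∀ γ : ℤ, γ < G1 → ∀ m ∈ (rep q).support, m ≠ s →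
      (d : ℤ) ^ s * γ + V s < (d : ℤ) ^ m * γ + V m := by
    intro γ hγ m hm hne
    have hms : m < s := lt_of_le_of_ne (hsmax m hm) hne
    have hpow : (d : ℤ) ^ m < (d : ℤ) ^ s := pow_lt_pow_right₀ hdK hms
    have habs : |V m - V s| ≤ ∑ m' ∈ (rep q).support, |V m' - V s| :=
      Finset.single_le_sum (f := fun m' => |V m' - V s|) (fun i _ => abs_nonneg _) hm
    have h1 : G1 ≤ -|V m - V s| := by rw [hG1]; omega
    have hγ0 : γ < 0 := lt_of_lt_of_le hγ hG1n
    have h2 : ((d : ℤ) ^ s - (d : ℤ) ^ m) * γ ≤ 1 * γ :=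
      mul_le_mul_of_nonpos_right (by linarith) hγ0.le
    have h3 : γ < V m - V s := by
      have := neg_abs_le (V m - V s)
      omega
    nlinarith
  -- values of the monomial terms of q at integer values
  have hterm : ∀ (γ : ℤ), ∀ m ∈ (rep q).support,
      WithTop.map (fun g : ℤ => (d : ℤ) ^ m * g) (γ : WithTop ℤ) + v (rep q m)
        = (((d : ℤ) ^ m * γ + V m : ℤ) : WithTop ℤ) := by
    intro γ m hm
    rw [hV m hm, WithTop.map_coe, ← WithTop.coe_add]
  have hact : ∀ γ : ℤ, γ < G1 →
      act v rep d (γ : WithTop ℤ) q = (((d : ℤ) ^ s * γ + V s : ℤ) : WithTop ℤ) := by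
    intro γ hγ
    unfold act
    apply le_antisymm
    · refine le_trans (Finset.inf_le hsmem) ?_
      rw [hterm γ s hsmem]
    · refine Finset.le_inf fun m hm => ?_
      rw [hterm γ m hm]
      by_cases hms : m = s
      · subst hms; exact le_rfl
      · exact_mod_cast (hdom γ hγ m hm hms).le
  have hNJ : ∀ γ : ℤ, γ < G1 → ¬ IsJump v rep d γ q := by
    intro γ hγ hj
    obtain ⟨m₁, hm₁, m₂, hm₂, hne, h1, h2⟩ := hj
    have hkeyj : ∀ m ∈ (rep q).support, m ≠ s →
        WithTop.map (fun g : ℤ => (d : ℤ) ^ m * g) (γ : WithTop ℤ) + v (rep q m)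
          ≠ act v rep d (γ : WithTop ℤ) q := by
      intro m hm hms h
      rw [hact γ hγ, hterm γ m hm] at h
      have := (WithTop.coe_eq_coe).mp h
      have := hdom γ hγ m hm hms
      omega
    by_cases hm₁s : m₁ = s
    · exact hkeyj m₂ hm₂ (fun h => hne (hm₁s.trans h.symm)) h2
    · exact hkeyj m₁ hm₁ hm₁s h1
  -- radius on values of M·q forcing the underlying element below G1
  obtain ⟨Γa, hΓa⟩ : ∃ g : ℤ, g = (d : ℤ) ^ s * G1 - (∑ m ∈ (rep q).support, |V m|) - 1 :=
    ⟨_, rfl⟩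
  have hP2 : ∀ x : M, vM (MulOpposite.op q • x) < (Γa : WithTop ℤ) →
      ∃ γ : ℤ, vM x = (γ : WithTop ℤ) ∧ γ < G1 := by
    intro x hx
    by_cases hx0 : vM x = ⊤
    · exfalso
      rw [(hM0 x).mp hx0, smul_zero, hM0'] at hx
      exact absurd hx (by simp)
    obtain ⟨γ, hγ⟩ := WithTop.ne_top_iff_exists.mp hx0
    refine ⟨γ, hγ.symm, ?_⟩
    by_contra hge
    push_neg at hge
    have hbound : (Γa : WithTop ℤ) ≤ vM (MulOpposite.op q • x) := by
      rw [hsmul_q]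
      refine vsum_ge vM hM0' hMadd _ _ _ fun m hm => ?_
      rw [hvmono m (rep q m) x, ← hγ, hV m hm, WithTop.map_coe, ← WithTop.coe_add]
      refine (WithTop.coe_le_coe).mpr ?_
      have habs : |V m| ≤ ∑ m' ∈ (rep q).support, |V m'| :=
        Finset.single_le_sum (f := fun m' => |V m'|) (fun i _ => abs_nonneg _) hm
      have h1 : -(∑ m' ∈ (rep q).support, |V m'|) ≤ V m := by
        have := neg_abs_le (V m); omega
      rcases le_or_gt 0 γ with hγ0 | hγ0
      · have hA : (0 : ℤ) ≤ (d : ℤ) ^ m * γ := by positivity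
        have hB : (d : ℤ) ^ s * G1 ≤ 0 :=
          mul_nonpos_of_nonneg_of_nonpos (by positivity) hG1n
        rw [hΓa]; linarith
      · have h2 : (d : ℤ) ^ s * γ ≤ (d : ℤ) ^ m * γ :=
          mul_le_mul_of_nonpos_right (pow_le_pow_right₀ (by linarith) (hsmax m hm)) hγ0.le
        have h3 : (d : ℤ) ^ s * G1 ≤ (d : ℤ) ^ s * γ :=
          mul_le_mul_of_nonneg_left hge (by positivity)
        rw [hΓa]; linarith
    exact absurd hx (not_lt.mpr hbound)
  -- the monomials coming from the decomposition of the top coefficient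
  obtain ⟨TT, hTT⟩ : ∃ TT : (Fin s → Fin d) → R,
      ∀ g, TT g = t ^ s * ι (cc g ^ d ^ s * ∏ j : Fin s, β (g j) ^ d ^ (j : ℕ)) :=
    ⟨_, fun _ => rfl⟩
  have hTTfact : ∀ g, TT g = ι (cc g) * (t ^ s * ι (∏ j : Fin s, β (g j) ^ d ^ (j : ℕ))) := by
    intro g
    rw [hTT, map_mul, ← mul_assoc, hcommn s (cc g), mul_assoc]
  have hTTsmul : ∀ (g) (x : M), MulOpposite.op (TT g) • x
      = MulOpposite.op (t ^ s * ι (∏ j : Fin s, β (g j) ^ d ^ (j : ℕ)))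
          • (MulOpposite.op (ι (cc g)) • x) := by
    intro g x
    rw [← mul_smul, ← MulOpposite.op_mul, ← hTTfact g]
  have hTTmem : ∀ (g) (x : M),
      MulOpposite.op (TT g) • x ∈ Mdot M (t ^ s * ι (∏ j : Fin s, β (g j) ^ d ^ (j : ℕ))) :=
    fun g x => ⟨MulOpposite.op (ι (cc g)) • x, (hTTsmul g x).symm⟩
  have hvTT : ∀ (g) (x : M), vM (MulOpposite.op (TT g) • x)
      = WithTop.map (fun gg : ℤ => (d : ℤ) ^ s * gg) (vM x) + W g := by
    intro g x
    rw [hTT, hvmono, hW]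
  have hsplit_top : t ^ s * ι (rep q s) = ∑ g : Fin s → Fin d, TT g := by
    rw [hcc, map_sum, Finset.mul_sum]
    exact Finset.sum_congr rfl fun g _ => (hTT g).symm
  have hsplit_smul : ∀ x : M, MulOpposite.op (t ^ s * ι (rep q s)) • x
      = ∑ g : Fin s → Fin d, MulOpposite.op (TT g) • x := by
    intro x
    rw [hsplit_top, show MulOpposite.op (∑ g : Fin s → Fin d, TT g)
        = ∑ g : Fin s → Fin d, MulOpposite.op (TT g) from
      map_sum MulOpposite.opAddEquiv _ _, Finset.sum_smul]
  have hQdec : ∀ x : M, MulOpposite.op q • x - MulOpposite.op (TT f) • x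
      = (∑ g ∈ Finset.univ.erase f, MulOpposite.op (TT g) • x)
        + ∑ m ∈ (rep q).support.erase s, MulOpposite.op (t ^ m * ι (rep q m)) • x := by
    intro x
    rw [hsmul_q x, ← Finset.add_sum_erase _ _ hsmem, hsplit_smul x,
      ← Finset.add_sum_erase Finset.univ _ (Finset.mem_univ f)]
    abel
  have hrest2 : ∀ (x : M) (γ : ℤ), vM x = (γ : WithTop ℤ) → γ < G1 →
      (((d : ℤ) ^ s * γ + V s + 1 : ℤ) : WithTop ℤ)
        ≤ vM (∑ m ∈ (rep q).support.erase s, MulOpposite.op (t ^ m * ι (rep q m)) • x) := by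
    intro x γ hγx hγ
    refine vsum_ge vM hM0' hMadd _ _ _ fun m hm => ?_
    have hms : m ≠ s := (Finset.mem_erase.mp hm).1
    have hmm : m ∈ (rep q).support := (Finset.mem_erase.mp hm).2
    rw [hvmono m (rep q m) x, hγx, hV m hmm, WithTop.map_coe, ← WithTop.coe_add]
    refine (WithTop.coe_le_coe).mpr ?_
    have := hdom γ hγ m hmm hms
    omega
  -- the central computation
  have KEY : ∀ (x : M) (γ : ℤ), vM x = (γ : WithTop ℤ) → γ < G1 →
      vM (MulOpposite.op (TT f) • x) = (((d : ℤ) ^ s * γ + V s : ℤ) : WithTop ℤ)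
      ∧ (((d : ℤ) ^ s * γ + V s : ℤ) : WithTop ℤ)
          < vM (MulOpposite.op q • x - MulOpposite.op (TT f) • x)
      ∧ vM (MulOpposite.op q • x) = (((d : ℤ) ^ s * γ + V s : ℤ) : WithTop ℤ) := by
    intro x γ hγx hγ
    have hvf : vM (MulOpposite.op (TT f) • x) = (((d : ℤ) ^ s * γ + V s : ℤ) : WithTop ℤ) := by
      rw [hvTT f x, hγx, hWf, WithTop.map_coe, ← WithTop.coe_add]
    have hrest : (((d : ℤ) ^ s * γ + V s : ℤ) : WithTop ℤ)
        < vM (MulOpposite.op q • x - MulOpposite.op (TT f) • x) := by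
      rw [hQdec x]
      have htarget : ∀ z w : WithTop ℤ,
          (((d : ℤ) ^ s * γ + V s + 1 : ℤ) : WithTop ℤ) ≤ z →
          (((d : ℤ) ^ s * γ + V s + 1 : ℤ) : WithTop ℤ) ≤ w →
          (((d : ℤ) ^ s * γ + V s : ℤ) : WithTop ℤ) < z + w → True := fun _ _ _ _ _ => trivial
      have h1 : (((d : ℤ) ^ s * γ + V s + 1 : ℤ) : WithTop ℤ)
          ≤ vM (∑ g ∈ Finset.univ.erase f, MulOpposite.op (TT g) • x) := by
        refine vsum_ge vM hM0' hMadd _ _ _ fun g hg => ?_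
        have hgf : g ≠ f := (Finset.mem_erase.mp hg).1
        rw [hvTT g x, hγx, WithTop.map_coe]
        have hWg : ((V s + 1 : ℤ) : WithTop ℤ) ≤ W g := by
          by_cases htop : W g = ⊤
          · rw [htop]; exact le_top
          obtain ⟨w, hw⟩ := WithTop.ne_top_iff_exists.mp htop
          have hge' : ((V s : ℤ) : WithTop ℤ) ≤ W g := hWge g
          have hne' : W g ≠ ((V s : ℤ) : WithTop ℤ) := by
            intro h
            exact htop (hWne g f hgf (h.trans hWf.symm))
          rw [← hw] at hge' hne' ⊢
          have h1 : V s ≤ w := by exact_mod_cast hge'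
          have h2 : w ≠ V s := fun h => hne' (by exact_mod_cast h)
          exact_mod_cast (by omega : V s + 1 ≤ w)
        calc (((d : ℤ) ^ s * γ + V s + 1 : ℤ) : WithTop ℤ)
            = ((d : ℤ) ^ s * γ : ℤ) + ((V s + 1 : ℤ) : WithTop ℤ) := by
              rw [← WithTop.coe_add]; congr 1; ring
          _ ≤ ((d : ℤ) ^ s * γ : ℤ) + W g := by
              exact add_le_add_right hWg _
      have h2 := hrest2 x γ hγx hγ
      calc (((d : ℤ) ^ s * γ + V s : ℤ) : WithTop ℤ)
          < (((d : ℤ) ^ s * γ + V s + 1 : ℤ) : WithTop ℤ) := by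
            exact_mod_cast (by omega : (d : ℤ) ^ s * γ + V s < (d : ℤ) ^ s * γ + V s + 1)
        _ ≤ min (vM (∑ g ∈ Finset.univ.erase f, MulOpposite.op (TT g) • x))
              (vM (∑ m ∈ (rep q).support.erase s, MulOpposite.op (t ^ m * ι (rep q m)) • x)) :=
            le_min h1 h2
        _ ≤ vM (_ + _) := hMadd _ _
    refine ⟨hvf, hrest, ?_⟩
    have : MulOpposite.op q • x = MulOpposite.op (TT f) • x
        + (MulOpposite.op q • x - MulOpposite.op (TT f) • x) := by abel
    rw [this, vmin_eq vM hMadd hMneg _ _ (by rw [hvf]; exact hvf ▸ (hvf ▸ hrest))]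
    exact hvf
  -- value of the inverse of the leading decomposition coefficient
  have hcinv : v ((cc f)⁻¹) = ((-vc : ℤ) : WithTop ℤ) := by
    have h1 : v (cc f * (cc f)⁻¹) = v (cc f) + v ((cc f)⁻¹) := hvmul _ _
    rw [mul_inv_cancel₀ hccf, hv1, hvc] at h1
    obtain ⟨w, hw⟩ := WithTop.ne_top_iff_exists.mp
      (fun ht => inv_ne_zero hccf ((hv0 _).mp ht))
    rw [← hw] at h1 ⊢
    have : (0 : ℤ) = vc + w := by exact_mod_cast h1
    exact_mod_cast congrArg (fun z : ℤ => (z : WithTop ℤ)) (by omega : w = -vc)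
  have hxinv : ∀ (y : M) (γy : ℤ), vM y = (γy : WithTop ℤ) →
      vM (MulOpposite.op (ι ((cc f)⁻¹)) • y) = ((γy - vc : ℤ) : WithTop ℤ) := by
    intro y γy hγy
    rw [show (ι ((cc f)⁻¹) : R) = t ^ 0 * ι ((cc f)⁻¹) by rw [pow_zero, one_mul],
      hvmono 0 _ y, hγy, hcinv, WithTop.map_coe, ← WithTop.coe_add]
    congr 1
    simp
    ring
  have hback : ∀ y : M, MulOpposite.op (TT f) • (MulOpposite.op (ι ((cc f)⁻¹)) • y)
      = MulOpposite.op (t ^ s * ι (∏ j : Fin s, β (f j) ^ d ^ (j : ℕ))) • y := by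
    intro y
    rw [← mul_smul, ← MulOpposite.op_mul]
    congr 2
    rw [hTTfact, ← mul_assoc, ← map_mul, inv_mul_cancel₀ hccf, map_one, one_mul]
  obtain ⟨Γb, hΓb⟩ : ∃ g : ℤ, g = (d : ℤ) ^ s * (G1 + vc) + E f := ⟨_, rfl⟩
  have hds0 : (0 : ℤ) < (d : ℤ) ^ s := by positivity
  -- value of elements of M·(tˢβ_g)
  have hvBg : ∀ (g : Fin s → Fin d) (y : M) (γy : ℤ), vM y = (γy : WithTop ℤ) →
      vM (MulOpposite.op (t ^ s * ι (∏ j : Fin s, β (g j) ^ d ^ (j : ℕ))) • y)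
        = (((d : ℤ) ^ s * γy + E g : ℤ) : WithTop ℤ) := by
    intro g y γy hγy
    rw [hvmono, hγy, hvb g, WithTop.map_coe, ← WithTop.coe_add]
  -- the backward approximation step
  have hbackstep : ∀ y : M,
      vM (MulOpposite.op (t ^ s * ι (∏ j : Fin s, β (f j) ^ d ^ (j : ℕ))) • y)
        < ((min Γa Γb : ℤ) : WithTop ℤ) →
      ∃ (x : M) (γx : ℤ), vM x = (γx : WithTop ℤ) ∧ γx < G1 ∧
        MulOpposite.op (TT f) • x
          = MulOpposite.op (t ^ s * ι (∏ j : Fin s, β (f j) ^ d ^ (j : ℕ))) • y ∧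
        vM (MulOpposite.op q • x)
          = vM (MulOpposite.op (t ^ s * ι (∏ j : Fin s, β (f j) ^ d ^ (j : ℕ))) • y) := by
    intro y hblt
    have hytop : vM y ≠ ⊤ := by
      intro ht
      rw [hvmono, ht] at hblt
      simp at hblt
    obtain ⟨γy, hγy⟩ := WithTop.ne_top_iff_exists.mp hytop
    have hvby : vM (MulOpposite.op (t ^ s * ι (∏ j : Fin s, β (f j) ^ d ^ (j : ℕ))) • y)
        = (((d : ℤ) ^ s * γy + E f : ℤ) : WithTop ℤ) := hvBg f y γy hγy.symm
    have hlt2 : (d : ℤ) ^ s * γy + E f < Γb := by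
      rw [hvby] at hblt
      have := (WithTop.coe_lt_coe).mp hblt
      omega
    have hγylt : γy - vc < G1 := by
      rw [hΓb] at hlt2
      nlinarith
    refine ⟨MulOpposite.op (ι ((cc f)⁻¹)) • y, γy - vc, hxinv y γy hγy.symm, hγylt,
      hback y, ?_⟩
    obtain ⟨h1, h2, h3⟩ := KEY (MulOpposite.op (ι ((cc f)⁻¹)) • y) (γy - vc)
      (hxinv y γy hγy.symm) hγylt
    rw [h3, hvby]
    congr 1
    have : (d : ℤ) ^ s * vc + E f = V s := hkey
    ring_nf
    omega
  -- the m-immediate property for the chosen f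
  have hMImmf : MImm vM (Mdot M q)
      (Mdot M (t ^ s * ι (∏ j : Fin s, β (f j) ^ d ^ (j : ℕ)))) := by
    refine ⟨min Γa Γb, ?_, ?_⟩
    · rintro a ⟨x, hx⟩ halt
      have hx' : MulOpposite.op q • x = a := hx
      subst hx'
      have hlta : vM (MulOpposite.op q • x) < (Γa : WithTop ℤ) :=
        lt_of_lt_of_le halt (WithTop.coe_le_coe.mpr (min_le_left _ _))
      obtain ⟨γ, hγx, hγ⟩ := hP2 x hlta
      obtain ⟨h1, h2, h3⟩ := KEY x γ hγx hγ
      exact ⟨MulOpposite.op (TT f) • x, hTTmem f x, by rw [h1, h3], by rw [h3]; exact h2⟩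
    · rintro b ⟨y, hy⟩ hblt
      have hy' : MulOpposite.op (t ^ s * ι (∏ j : Fin s, β (f j) ^ d ^ (j : ℕ))) • y = b := hy
      subst hy'
      obtain ⟨x, γx, hγx, hγxlt, hTTb, hvqb⟩ := hbackstep y hblt
      refine ⟨MulOpposite.op q • x, ⟨x, rfl⟩, hvqb, ?_⟩
      obtain ⟨h1, h2, h3⟩ := KEY x γx hγx hγxlt
      have : MulOpposite.op (t ^ s * ι (∏ j : Fin s, β (f j) ^ d ^ (j : ℕ))) • y
          - MulOpposite.op q • x
          = -(MulOpposite.op q • x - MulOpposite.op (TT f) • x) := by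
        rw [← hTTb]; abel
      rw [this, hMneg, ← hTTb, h1]
      exact h2
  -- uniqueness
  have huniq : ∀ g : Fin s → Fin d,
      MImm vM (Mdot M q) (Mdot M (t ^ s * ι (∏ j : Fin s, β (g j) ^ d ^ (j : ℕ)))) →
      g = f := by
    intro g hg
    obtain ⟨Γg, -, hgB⟩ := hg
    obtain ⟨γy, hγy⟩ : ∃ γy : ℤ, (d : ℤ) ^ s * γy + E g < min Γg Γa := by
      refine ⟨min 0 (min Γg Γa - E g) - 1, ?_⟩
      have h0 : min 0 (min Γg Γa - E g) - 1 ≤ 0 := by omega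
      have h1 : (d : ℤ) ^ s * (min 0 (min Γg Γa - E g) - 1)
          ≤ min 0 (min Γg Γa - E g) - 1 := by nlinarith
      omega
    obtain ⟨y, hy⟩ := hMsurj ((γy : ℤ) : WithTop ℤ)
    have hvby : vM (MulOpposite.op (t ^ s * ι (∏ j : Fin s, β (g j) ^ d ^ (j : ℕ))) • y)
        = (((d : ℤ) ^ s * γy + E g : ℤ) : WithTop ℤ) :=
      hvBg g y _ hy
    have hbltg : vM (MulOpposite.op (t ^ s * ι (∏ j : Fin s, β (g j) ^ d ^ (j : ℕ))) • y)
        < (Γg : WithTop ℤ) := by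
      rw [hvby]
      exact_mod_cast lt_of_lt_of_le hγy (min_le_left _ _)
    obtain ⟨a, ha, hva', hlt⟩ := hgB _ ⟨y, rfl⟩ hbltg
    obtain ⟨x, hx⟩ := ha
    have hx' : MulOpposite.op q • x = a := hx
    have hvax : vM (MulOpposite.op q • x) < (Γa : WithTop ℤ) := by
      rw [hx', hva', hvby]
      exact_mod_cast lt_of_lt_of_le hγy (min_le_right _ _)
    obtain ⟨γ, hγx, hγlt⟩ := hP2 x hvax
    obtain ⟨-, -, h3⟩ := KEY x γ hγx hγlt
    have h4 : (d : ℤ) ^ s * γ + V s = (d : ℤ) ^ s * γy + E g := by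
      rw [← hx', h3, hvby] at hva'
      exact_mod_cast hva'
    have h5 : (d : ℤ) ^ s * γy + E g
        = (d : ℤ) ^ s * (γ + vc) + E f := by
      rw [mul_add]
      have hk := hkey
      linarith
    exact (hclass g f _ _ h5).1
  refine ⟨⟨f, hMImmf, huniq⟩, ?_⟩
  intro g hg
  rw [huniq g hg]
  -- value of an element of M·(tˢ β_g) in terms of its residue class
  have hclassC : ∀ (g : Fin s → Fin d) (z : M),
      vM (MulOpposite.op (t ^ s * ι (∏ j : Fin s, β (g j) ^ d ^ (j : ℕ))) • z) ≠ ⊤ →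
      ∃ γ : ℤ, vM (MulOpposite.op (t ^ s * ι (∏ j : Fin s, β (g j) ^ d ^ (j : ℕ))) • z)
        = (((d : ℤ) ^ s * γ + E g : ℤ) : WithTop ℤ) := by
    intro g z h
    have hz : vM z ≠ ⊤ := by
      intro hz
      rw [(hM0 z).mp hz, smul_zero, hM0'] at h
      exact h rfl
    obtain ⟨γ, hγ⟩ := WithTop.ne_top_iff_exists.mp hz
    exact ⟨γ, hvBg g z γ hγ.symm⟩
  -- the value of a sum over the induced basis decomposition is the min of the values
  have hvalsum : ∀ w : (Fin s → Fin d) → M,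
      vM (∑ g : Fin s → Fin d,
          MulOpposite.op (t ^ s * ι (∏ j : Fin s, β (g j) ^ d ^ (j : ℕ))) • w g)
        = Finset.univ.inf (fun g => vM
            (MulOpposite.op (t ^ s * ι (∏ j : Fin s, β (g j) ^ d ^ (j : ℕ))) • w g)) := by
    intro w
    refine vsum_eq_inf vM hM0' hMadd hMneg _ _ ?_
    intro g1 _ g2 _ hne heq
    by_contra htop
    obtain ⟨γ1, hγ1⟩ := hclassC g1 (w g1) htop
    obtain ⟨γ2, hγ2⟩ := hclassC g2 (w g2) (by rw [← heq]; exact htop)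
    rw [hγ1, hγ2] at heq
    exact hne (hclass g1 g2 γ1 γ2 (by exact_mod_cast heq)).1
  set C : AddSubgroup M := ⨆ f' ∈ {f' : Fin s → Fin d | f' ≠ f},
      Mdot M (t ^ s * ι (∏ j : Fin s, β (f' j) ^ d ^ (j : ℕ))) with hCdef
  have hCmem : ∀ g : Fin s → Fin d, g ≠ f → ∀ z : M,
      z ∈ Mdot M (t ^ s * ι (∏ j : Fin s, β (g j) ^ d ^ (j : ℕ))) → z ∈ C := by
    intro g hgf z hz
    exact AddSubgroup.mem_iSup_of_mem g (AddSubgroup.mem_iSup_of_mem hgf hz)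
  -- every element of C is a combination avoiding the f-component
  have hCrep : ∀ b ∈ C, ∃ w : (Fin s → Fin d) → M, w f = 0 ∧
      b = ∑ g : Fin s → Fin d,
        MulOpposite.op (t ^ s * ι (∏ j : Fin s, β (g j) ^ d ^ (j : ℕ))) • w g := by
    have hC'' : C ≤ {
      carrier := {b | ∃ w : (Fin s → Fin d) → M, w f = 0 ∧
        b = ∑ g : Fin s → Fin d,
          MulOpposite.op (t ^ s * ι (∏ j : Fin s, β (g j) ^ d ^ (j : ℕ))) • w g}
      zero_mem' := ⟨0, rfl, by simp⟩
      add_mem' := by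
        rintro a b ⟨w1, h1, rfl⟩ ⟨w2, h2, rfl⟩
        refine ⟨w1 + w2, by simp [h1, h2], ?_⟩
        rw [← Finset.sum_add_distrib]
        exact Finset.sum_congr rfl fun g _ => (smul_add _ _ _).symm
      neg_mem' := by
        rintro a ⟨w1, h1, rfl⟩
        refine ⟨-w1, by simp [h1], ?_⟩
        rw [← Finset.sum_neg_distrib]
        exact Finset.sum_congr rfl fun g _ => (smul_neg _ _).symm } := by
      rw [hCdef]
      refine iSup_le fun g => iSup_le fun hg => ?_
      rintro b ⟨z, hz⟩
      have hz' : MulOpposite.op (t ^ s * ι (∏ j : Fin s, β (g j) ^ d ^ (j : ℕ))) • z = b := hz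
      refine ⟨(Pi.single g z : (Fin s → Fin d) → M), ?_, ?_⟩
      · exact Pi.single_eq_of_ne (M := fun _ : Fin s → Fin d => M) (Ne.symm hg) z
      rw [Fintype.sum_eq_single g (fun g' hne => by rw [Pi.single_eq_of_ne hne, smul_zero]),
        Pi.single_eq_same, hz']
    exact fun b hb => hC'' hb
  have hCval : ∀ b ∈ C, vM b ≠ ⊤ →
      ∃ g : Fin s → Fin d, g ≠ f ∧ ∃ γ : ℤ,
        vM b = (((d : ℤ) ^ s * γ + E g : ℤ) : WithTop ℤ) := by
    intro b hb hbne
    obtain ⟨w, hwf, rfl⟩ := hCrep b hb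
    rw [hvalsum w] at hbne ⊢
    obtain ⟨g, -, hg⟩ := Finset.exists_mem_eq_inf Finset.univ Finset.univ_nonempty
      (fun g : Fin s → Fin d => vM
        (MulOpposite.op (t ^ s * ι (∏ j : Fin s, β (g j) ^ d ^ (j : ℕ))) • w g))
    rw [hg] at hbne ⊢
    have hgf : g ≠ f := by
      intro h
      subst h
      rw [hwf, smul_zero, hM0'] at hbne
      exact hbne rfl
    obtain ⟨γ, hγ⟩ := hclassC g (w g) hbne
    exact ⟨g, hgf, γ, hγ⟩
  constructor
  · -- the decomposition property
    obtain ⟨Γ3, hΓ3⟩ : ∃ g : ℤ, g = min Γa Γb := ⟨_, rfl⟩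
    have hSTEP : ∀ (n : ℕ) (z : M), ((Γ3 - n : ℤ) : WithTop ℤ) ≤ vM z →
        ∃ a ∈ Mdot M q, ∃ c ∈ C, ((Γ3 : ℤ) : WithTop ℤ) ≤ vM (z - a - c) := by
      intro n
      induction n with
      | zero =>
        intro z hz
        refine ⟨0, zero_mem _, 0, zero_mem _, ?_⟩
        rw [show z - 0 - 0 = z by abel]
        simpa using hz
      | succ n ih =>
        intro z hz
        obtain ⟨w, hw⟩ := Mdec s z
        have hmz : vM z ≤ vM (MulOpposite.op
            (t ^ s * ι (∏ j : Fin s, β (f j) ^ d ^ (j : ℕ))) • w f) := by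
          rw [hw, hvalsum w]
          exact Finset.inf_le (Finset.mem_univ f)
        have hzm : z = MulOpposite.op (t ^ s * ι (∏ j : Fin s, β (f j) ^ d ^ (j : ℕ))) • w f
            + ∑ g ∈ Finset.univ.erase f,
                MulOpposite.op (t ^ s * ι (∏ j : Fin s, β (g j) ^ d ^ (j : ℕ))) • w g := by
          rw [hw, ← Finset.add_sum_erase _ _ (Finset.mem_univ f)]
        have hc₀ : (∑ g ∈ Finset.univ.erase f,
            MulOpposite.op (t ^ s * ι (∏ j : Fin s, β (g j) ^ d ^ (j : ℕ))) • w g) ∈ C :=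
          AddSubgroup.sum_mem _ fun g hg =>
            hCmem g (Finset.mem_erase.mp hg).1 _ ⟨w g, rfl⟩
        by_cases hm : ((Γ3 : ℤ) : WithTop ℤ) ≤ vM (MulOpposite.op
            (t ^ s * ι (∏ j : Fin s, β (f j) ^ d ^ (j : ℕ))) • w f)
        · refine ⟨0, zero_mem _, _, hc₀, ?_⟩
          rw [show z - 0 - (∑ g ∈ Finset.univ.erase f,
              MulOpposite.op (t ^ s * ι (∏ j : Fin s, β (g j) ^ d ^ (j : ℕ))) • w g)
            = MulOpposite.op (t ^ s * ι (∏ j : Fin s, β (f j) ^ d ^ (j : ℕ))) • w f by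
              rw [hzm]; abel]
          exact hm
        · push_neg at hm
          obtain ⟨x, γx, hγx, hγxlt, hTTb, hvqb⟩ := hbackstep (w f) (by
            rw [hΓ3] at hm; exact hm)
          have hvm : vM (MulOpposite.op (t ^ s * ι (∏ j : Fin s, β (f j) ^ d ^ (j : ℕ))) • w f)
              = (((d : ℤ) ^ s * γx + V s : ℤ) : WithTop ℤ) := by
            rw [← hvqb, (KEY x γx hγx hγxlt).2.2]
          -- the two correction terms
          have hc₁ : (∑ g ∈ Finset.univ.erase f, MulOpposite.op (TT g) • x) ∈ C :=
            AddSubgroup.sum_mem _ fun g hg =>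
              hCmem g (Finset.mem_erase.mp hg).1 _ (hTTmem g x)
          have hz' : z - MulOpposite.op q • x
              - ((∑ g ∈ Finset.univ.erase f,
                  MulOpposite.op (t ^ s * ι (∏ j : Fin s, β (g j) ^ d ^ (j : ℕ))) • w g)
                - ∑ g ∈ Finset.univ.erase f, MulOpposite.op (TT g) • x)
              = -(∑ m ∈ (rep q).support.erase s, MulOpposite.op (t ^ m * ι (rep q m)) • x) := by
            have h := hQdec x
            rw [hTTb] at h
            have h2 : (∑ m ∈ (rep q).support.erase s,
                MulOpposite.op (t ^ m * ι (rep q m)) • x)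
              = MulOpposite.op q • x
                - MulOpposite.op (t ^ s * ι (∏ j : Fin s, β (f j) ^ d ^ (j : ℕ))) • w f
                - ∑ g ∈ Finset.univ.erase f, MulOpposite.op (TT g) • x := by
              rw [h]; abel
            rw [hzm, h2]; abel
          have hvz' : ((Γ3 - n : ℤ) : WithTop ℤ) ≤ vM (z - MulOpposite.op q • x
              - ((∑ g ∈ Finset.univ.erase f,
                  MulOpposite.op (t ^ s * ι (∏ j : Fin s, β (g j) ^ d ^ (j : ℕ))) • w g)
                - ∑ g ∈ Finset.univ.erase f, MulOpposite.op (TT g) • x)) := by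
            rw [hz', hMneg]
            refine le_trans ?_ (hrest2 x γx hγx hγxlt)
            refine (WithTop.coe_le_coe).mpr ?_
            have hlow : ((Γ3 - (n + 1) : ℤ) : WithTop ℤ)
                ≤ (((d : ℤ) ^ s * γx + V s : ℤ) : WithTop ℤ) := by
              rw [← hvm]
              exact le_trans (by exact_mod_cast le_of_eq (by push_cast; ring)) (le_trans hz hmz)
            have := (WithTop.coe_le_coe).mp hlow
            omega
          obtain ⟨a₂, ha₂, c₂, hc₂, hfinal⟩ := ih _ hvz'
          refine ⟨MulOpposite.op q • x + a₂, AddSubgroup.add_mem _ ⟨x, rfl⟩ ha₂,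
            ((∑ g ∈ Finset.univ.erase f,
                MulOpposite.op (t ^ s * ι (∏ j : Fin s, β (g j) ^ d ^ (j : ℕ))) • w g)
              - ∑ g ∈ Finset.univ.erase f, MulOpposite.op (TT g) • x) + c₂,
            AddSubgroup.add_mem _ (AddSubgroup.sub_mem _ hc₀ hc₁) hc₂, ?_⟩
          rw [show z - (MulOpposite.op q • x + a₂)
              - (((∑ g ∈ Finset.univ.erase f,
                  MulOpposite.op (t ^ s * ι (∏ j : Fin s, β (g j) ^ d ^ (j : ℕ))) • w g)
                - ∑ g ∈ Finset.univ.erase f, MulOpposite.op (TT g) • x) + c₂)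
            = (z - MulOpposite.op q • x
              - ((∑ g ∈ Finset.univ.erase f,
                  MulOpposite.op (t ^ s * ι (∏ j : Fin s, β (g j) ^ d ^ (j : ℕ))) • w g)
                - ∑ g ∈ Finset.univ.erase f, MulOpposite.op (TT g) • x)) - a₂ - c₂ by abel]
          exact hfinal
    refine ⟨Γ3, fun x => ?_⟩
    by_cases hx : vM x = ⊤
    · exact ⟨0, zero_mem _, 0, zero_mem _, by
        rw [show x - 0 - 0 = x by abel, hx]; exact le_top⟩
    · obtain ⟨wv, hwv⟩ := WithTop.ne_top_iff_exists.mp hx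
      refine hSTEP (Γ3 - wv).toNat x ?_
      rw [← hwv]
      refine (WithTop.coe_le_coe).mpr ?_
      have := Int.toNat_eq_max (Γ3 - wv)
      omega
  · -- pseudo-orthogonality
    refine ⟨Γa, fun a ha b hb heq => ?_⟩
    by_contra hlt
    push_neg at hlt
    obtain ⟨x, hx⟩ := ha
    have hx' : MulOpposite.op q • x = a := hx
    have hvax : vM (MulOpposite.op q • x) < (Γa : WithTop ℤ) := by rw [hx']; exact hlt
    obtain ⟨γ, hγx, hγlt⟩ := hP2 x hvax
    obtain ⟨-, -, h3⟩ := KEY x γ hγx hγlt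
    have hva2 : vM a = (((d : ℤ) ^ s * γ + V s : ℤ) : WithTop ℤ) := by rw [← hx', h3]
    have hbne : vM b ≠ ⊤ := by
      rw [← heq, hva2]
      exact WithTop.coe_ne_top
    obtain ⟨g, hgf, γ2, hγ2⟩ := hCval b hb hbne
    rw [hva2, hγ2] at heq
    have h6 : (d : ℤ) ^ s * γ + V s = (d : ℤ) ^ s * γ2 + E g := by exact_mod_cast heq
    have h7 : (d : ℤ) ^ s * (γ + vc) + E f = (d : ℤ) ^ s * γ2 + E g := by
      rw [mul_add]
      have hk := hkey
      linarith
    exact hgf (hclass g f γ2 (γ + vc) h7.symm).1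
end

section
/- Let G be an abelian group with subgroups A and B such that A + B = G. Then A = {x ∈ G : ∀ y, (x − y ∈ A ∧ y ∈ B) → y ∈ A ∩ B}. -/
/-- if `A`, `B` are subgroups of an abelian group `G` with `A + B = G`, then
`A = {x ∈ G : ∀ y, (x − y ∈ A ∧ y ∈ B) → y ∈ A ⊓ B}`. -/
theorem stmt_19 {G : Type*} [AddCommGroup G] (A B : AddSubgroup G)
    (h : ∀ x : G, ∃ a ∈ A, ∃ b ∈ B, x = a + b) :
    (A : Set G) = {x : G | ∀ y : G, (x - y ∈ A ∧ y ∈ B) → y ∈ A ⊓ B} := by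
  ext x
  constructor
  · intro hx y ⟨hxy, hyB⟩
    refine ⟨?_, hyB⟩
    have : x - (x - y) ∈ A := A.sub_mem hx hxy
    simpa using this
  · intro hx
    obtain ⟨a, ha, b, hb, rfl⟩ := h x
    have : b ∈ A ⊓ B := hx b ⟨by simpa using ha, hb⟩
    exact A.add_mem ha this.1
end
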